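/- arXiv:1812.08106 — 4 statements merged into one kernel-verified Lean document; each statement's English description precedes it below -/
import Mathlib

section
/- There exists a real constant μ > 0 such that for every z₀ ∈ [0,1] there exists a constant C > 0 with the following property: for all i ∈ ℕ, ℙ{ Z_i ≤ 2^(−2^(0.49·i)) } ≥ (1 − z₀) − C·2^(−i/μ). -/
open MeasureTheory ProbabilityTheory

/-- `P` is the infinite product of fair Bernoulli(1/2) measures on `ℕ → Bool`:
the coordinate maps are i.i.d. fair coin flips under `P`. -/
def IsFairCoinMeasure (P : Measure (ℕ → Bool)) : Prop :=
  IsProbabilityMeasure P ∧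
  iIndepFun (fun i (ω : ℕ → Bool) => ω i) P ∧
  ∀ (i : ℕ) (b : Bool), P {ω | ω i = b} = 1/2

/-- The BEC polarization process with initial value `z₀`:
`Z_0 = z₀`, and `Z_{i+1} = Z_i²` if `ω i = true`, `Z_{i+1} = 2·Z_i − Z_i²` otherwise. -/
def Zproc (z₀ : ℝ) : ℕ → (ℕ → Bool) → ℝ
  | 0, _ => z₀
  | (i+1), ω => if ω i then (Zproc z₀ i ω)^2 else 2 * Zproc z₀ i ω - (Zproc z₀ i ω)^2

open Real

noncomputable section
set_option maxRecDepth 10000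
set_option maxHeartbeats 1000000

/-- Expectation over n fair coins, tracking value and count of `true`s. -/
def exC : ℕ → ℝ → ℕ → (ℝ → ℕ → ℝ) → ℝ
  | 0, z, c, f => f z c
  | n+1, z, c, f => (exC n (z^2) (c+1) f + exC n (2*z - z^2) c f) / 2

def exR : ℕ → ℝ → (ℝ → ℝ) → ℝ
  | 0, z, f => f z
  | n+1, z, f => (exR n (z^2) f + exR n (2*z - z^2) f) / 2

lemma exR_eq_exC (f : ℝ → ℝ) : ∀ (n : ℕ) (z : ℝ) (c : ℕ),
    exR n z f = exC n z c (fun y _ => f y)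
  | 0, z, c => rfl
  | n+1, z, c => by
    simp only [exR, exC, exR_eq_exC f n (z^2) (c+1), exR_eq_exC f n (2*z-z^2) c]

lemma exR_congr {f g : ℝ → ℝ} (h : ∀ y, f y = g y) : ∀ (n : ℕ) (z : ℝ),
    exR n z f = exR n z g
  | 0, z => h z
  | n+1, z => by simp only [exR, exR_congr h n]

lemma exR_const (c : ℝ) : ∀ (n : ℕ) (z : ℝ), exR n z (fun _ => c) = c
  | 0, z => rfl
  | n+1, z => by simp only [exR, exR_const c n]; ring

lemma exR_addf (f g : ℝ → ℝ) : ∀ (n : ℕ) (z : ℝ),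
    exR n z (fun y => f y + g y) = exR n z f + exR n z g
  | 0, z => rfl
  | n+1, z => by simp only [exR, exR_addf f g n]; ring

lemma exR_mulc (f : ℝ → ℝ) (c : ℝ) : ∀ (n : ℕ) (z : ℝ),
    exR n z (fun y => f y * c) = exR n z f * c
  | 0, z => rfl
  | n+1, z => by simp only [exR, exR_mulc f c n]; ring

lemma exR_id : ∀ (n : ℕ) (z : ℝ), exR n z (fun y => y) = z
  | 0, z => rfl
  | n+1, z => by simp only [exR, exR_id n]; ring

lemma exR_add (a b : ℕ) (f : ℝ → ℝ) : ∀ (z : ℝ),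
    exR (a+b) z f = exR a z (fun y => exR b y f) := by
  induction a with
  | zero => intro z; simp [exR, Nat.zero_add]
  | succ a ih =>
    intro z
    have : a + 1 + b = (a + b) + 1 := by omega
    rw [this]
    simp only [exR, ih]

lemma exR_mono_inv (I : ℕ → ℝ → Prop) {f g : ℝ → ℝ}
    (hstep : ∀ j z, I (j+1) z → I j (z^2) ∧ I j (2*z - z^2))
    (hfg : ∀ z, I 0 z → f z ≤ g z) :
    ∀ (n : ℕ) (z : ℝ), I n z → exR n z f ≤ exR n z g
  | 0, z, hz => hfg z hz
  | n+1, z, hz => by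
    obtain ⟨h1, h2⟩ := hstep n z hz
    have := exR_mono_inv I hstep hfg n (z^2) h1
    have := exR_mono_inv I hstep hfg n (2*z-z^2) h2
    simp only [exR]
    linarith

lemma exC_mono_inv (I : ℕ → ℝ → ℕ → Prop) {f g : ℝ → ℕ → ℝ}
    (hstep : ∀ j z c, I (j+1) z c → I j (z^2) (c+1) ∧ I j (2*z - z^2) c)
    (hfg : ∀ z c, I 0 z c → f z c ≤ g z c) :
    ∀ (n : ℕ) (z : ℝ) (c : ℕ), I n z c → exC n z c f ≤ exC n z c g
  | 0, z, c, hz => hfg z c hz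
  | n+1, z, c, hz => by
    obtain ⟨h1, h2⟩ := hstep n z c hz
    have := exC_mono_inv I hstep hfg n (z^2) (c+1) h1
    have := exC_mono_inv I hstep hfg n (2*z-z^2) c h2
    simp only [exC]
    linarith

lemma exC_geom (q K : ℝ) : ∀ (n : ℕ) (z : ℝ) (c : ℕ),
    exC n z c (fun _ c' => K * q^c') = K * q^c * ((1+q)/2)^n
  | 0, z, c => by simp [exC]
  | n+1, z, c => by
    simp only [exC, exC_geom q K n]
    ring

/-- the unit interval is preserved -/
lemma unit_step {z : ℝ} (h0 : 0 ≤ z) (h1 : z ≤ 1) :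
    (0 ≤ z^2 ∧ z^2 ≤ 1) ∧ (0 ≤ 2*z - z^2 ∧ 2*z - z^2 ≤ 1) := by
  constructor
  · constructor <;> nlinarith
  · constructor <;> nlinarith

lemma exR_le_one {T : ℝ} (n : ℕ) {z : ℝ} (h0 : 0 ≤ z) (h1 : z ≤ 1) :
    exR n z (fun y => if T < y then 1 else 0) ≤ 1 := by
  have := exR_mono_inv (fun _ z => 0 ≤ z ∧ z ≤ 1)
    (f := fun y => if T < y then 1 else 0) (g := fun _ => 1)
    (fun j z hz => by
      obtain ⟨a, b⟩ := unit_step hz.1 hz.2; exact ⟨a, b⟩)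
    (fun z _ => by split <;> norm_num) n z ⟨h0, h1⟩
  rw [exR_const] at this
  exact this

lemma exR_nonneg {f : ℝ → ℝ} (hf : ∀ y, 0 ≤ f y) : ∀ (n : ℕ) (z : ℝ), 0 ≤ exR n z f
  | 0, z => hf z
  | n+1, z => by
    have := exR_nonneg hf n (z^2)
    have := exR_nonneg hf n (2*z-z^2)
    simp only [exR]
    linarith


lemma step_sqrt {z : ℝ} (h0 : 0 ≤ z) (h1 : z ≤ 1) :
    sqrt (z^2 * (1 - z^2)) + sqrt ((2*z - z^2) * (1 - (2*z - z^2)))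
      ≤ sqrt 3 * sqrt (z * (1-z)) := by
  have hu0 : 0 ≤ z * (1-z) := by nlinarith
  have hA : z^2 * (1 - z^2) = (z * (1-z)) * (z * (1+z)) := by ring
  have hB : (2*z - z^2) * (1 - (2*z - z^2)) = (z * (1-z)) * ((1-z) * (2-z)) := by ring
  rw [hA, hB, Real.sqrt_mul hu0, Real.sqrt_mul hu0, ← mul_add, mul_comm (sqrt 3)]
  apply mul_le_mul_of_nonneg_left _ (Real.sqrt_nonneg _)
  -- √(z(1+z)) + √((1-z)(2-z)) ≤ √3
  have hA0 : (0:ℝ) ≤ z * (1+z) := by nlinarith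
  have hB0 : (0:ℝ) ≤ (1-z) * (2-z) := by nlinarith
  have hsum : sqrt (z*(1+z)) * sqrt ((1-z)*(2-z)) = sqrt ((z*(1+z)) * ((1-z)*(2-z))) :=
    (Real.sqrt_mul hA0 _).symm
  have hprod : sqrt ((z*(1+z)) * ((1-z)*(2-z))) ≤ (1 + 2*(z - z^2)) / 2 := by
    rw [show ((z*(1+z)) * ((1-z)*(2-z))) = ((1 + 2*(z-z^2))/2)^2 - ((1-2*z)/2)^2 by ring]
    calc sqrt (((1 + 2*(z-z^2))/2)^2 - ((1-2*z)/2)^2)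
        ≤ sqrt (((1 + 2*(z-z^2))/2)^2) := by
          apply Real.sqrt_le_sqrt; nlinarith [sq_nonneg ((1-2*z)/2)]
      _ = (1 + 2*(z-z^2))/2 := by
          rw [Real.sqrt_sq (by nlinarith)]
  have h3 : (0:ℝ) ≤ 3 := by norm_num
  rw [show sqrt 3 = sqrt 3 from rfl]
  have key : (sqrt (z*(1+z)) + sqrt ((1-z)*(2-z)))^2 ≤ 3 := by
    have e1 : (sqrt (z*(1+z)))^2 = z*(1+z) := Real.sq_sqrt hA0
    have e2 : (sqrt ((1-z)*(2-z)))^2 = (1-z)*(2-z) := Real.sq_sqrt hB0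
    have expand : (sqrt (z*(1+z)) + sqrt ((1-z)*(2-z)))^2
        = z*(1+z) + (1-z)*(2-z) + 2 * (sqrt (z*(1+z)) * sqrt ((1-z)*(2-z))) := by
      rw [add_sq, e1, e2]; ring
    rw [expand, hsum]
    nlinarith [hprod]
  have hnn : 0 ≤ sqrt (z*(1+z)) + sqrt ((1-z)*(2-z)) :=
    add_nonneg (Real.sqrt_nonneg _) (Real.sqrt_nonneg _)
  nlinarith [key, Real.sq_sqrt h3, Real.sqrt_nonneg 3, sq_nonneg (sqrt (z*(1+z)) + sqrt ((1-z)*(2-z)) - sqrt 3)]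

lemma exR_sqrt : ∀ (n : ℕ) (z : ℝ), 0 ≤ z → z ≤ 1 →
    exR n z (fun y => sqrt (y * (1-y))) ≤ (sqrt 3 / 2)^n * sqrt (z * (1-z))
  | 0, z, h0, h1 => by simp [exR]
  | n+1, z, h0, h1 => by
    obtain ⟨⟨a1, a2⟩, b1, b2⟩ := unit_step h0 h1
    have ih1 := exR_sqrt n (z^2) a1 a2
    have ih2 := exR_sqrt n (2*z - z^2) b1 b2
    have hstep := step_sqrt h0 h1
    have hnn : (0:ℝ) ≤ (sqrt 3 / 2)^n := by positivity
    simp only [exR]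
    calc (exR n (z^2) (fun y => sqrt (y*(1-y))) + exR n (2*z-z^2) (fun y => sqrt (y*(1-y)))) / 2
        ≤ ((sqrt 3 / 2)^n * sqrt (z^2 * (1-z^2)) + (sqrt 3 / 2)^n * sqrt ((2*z-z^2) * (1-(2*z-z^2)))) / 2 := by
          linarith
      _ = (sqrt 3 / 2)^n * (sqrt (z^2 * (1-z^2)) + sqrt ((2*z-z^2) * (1-(2*z-z^2)))) / 2 := by ring
      _ ≤ (sqrt 3 / 2)^n * (sqrt 3 * sqrt (z*(1-z))) / 2 := by
          have := mul_le_mul_of_nonneg_left hstep hnn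
          linarith
      _ = (sqrt 3 / 2)^(n+1) * sqrt (z*(1-z)) := by ring

/-- The key stage lemma: if `z ≤ 2^x` then after `L` steps, either the number of
squarings is `< a` (controlled by a Chernoff-type bound with parameter `q`), or the
value is at most `2^(2^a (x+L)) ≤ T`. -/
lemma stage (L a : ℕ) (x T q : ℝ) (hq0 : 0 < q) (hq1 : q ≤ 1)
    (hxL : x + L ≤ 0)
    (hT : (2:ℝ) ^ (((2:ℝ)^a) * (x + L)) ≤ T) :
    ∀ z : ℝ, 0 ≤ z → z ≤ 1 → z ≤ (2:ℝ) ^ x →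
    exR L z (fun y => if T < y then 1 else 0) ≤ q⁻¹^a * ((1+q)/2)^L := by
  intro z hz0 hz1 hzx
  rw [exR_eq_exC _ L z 0]
  set I : ℕ → ℝ → ℕ → Prop := fun j y c =>
    0 ≤ y ∧ y ≤ 1 ∧ y ≤ (2:ℝ) ^ (((2:ℝ)^c) * (x + ((L:ℝ) - (j:ℝ)))) with hI
  have h2 : (1:ℝ) ≤ 2 := one_le_two
  have hstep : ∀ j y c, I (j+1) y c → I j (y^2) (c+1) ∧ I j (2*y - y^2) c := by
    intro j y c ⟨hy0, hy1, hyb⟩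
    obtain ⟨⟨a1, a2⟩, b1, b2⟩ := unit_step hy0 hy1
    have hLj : (L:ℝ) - ((j:ℕ):ℝ) - 1 = (L:ℝ) - (((j+1:ℕ)):ℝ) := by push_cast; ring
    refine ⟨⟨a1, a2, ?_⟩, ⟨b1, b2, ?_⟩⟩
    · have : y^2 ≤ ((2:ℝ) ^ (((2:ℝ)^c) * (x + ((L:ℝ) - ((j+1:ℕ):ℝ)))))^2 := by
        apply pow_le_pow_left₀ hy0
        exact hyb
      calc y^2 ≤ ((2:ℝ) ^ (((2:ℝ)^c) * (x + ((L:ℝ) - ((j+1:ℕ):ℝ)))))^2 := this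
        _ = (2:ℝ) ^ (((2:ℝ)^(c+1)) * (x + ((L:ℝ) - ((j+1:ℕ):ℝ)))) := by
            rw [← Real.rpow_natCast ((2:ℝ) ^ (((2:ℝ)^c) * _)) 2, ← Real.rpow_mul (by norm_num)]
            norm_num; ring_nf
        _ ≤ (2:ℝ) ^ (((2:ℝ)^(c+1)) * (x + ((L:ℝ) - (j:ℝ)))) := by
            apply Real.rpow_le_rpow_of_exponent_le h2
            have : ((2:ℝ)^(c+1)) ≥ 0 := by positivity
            have hle : (x + ((L:ℝ) - ((j+1:ℕ):ℝ))) ≤ (x + ((L:ℝ) - (j:ℝ))) := by push_cast; linarith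
            exact mul_le_mul_of_nonneg_left hle this
    · calc 2*y - y^2 ≤ 2*y := by nlinarith
        _ ≤ 2 * (2:ℝ) ^ (((2:ℝ)^c) * (x + ((L:ℝ) - ((j+1:ℕ):ℝ)))) := by linarith
        _ = (2:ℝ) ^ (((2:ℝ)^c) * (x + ((L:ℝ) - ((j+1:ℕ):ℝ))) + 1) := by
            rw [Real.rpow_add_one (by norm_num)]; ring
        _ ≤ (2:ℝ) ^ (((2:ℝ)^c) * (x + ((L:ℝ) - (j:ℝ)))) := by
            apply Real.rpow_le_rpow_of_exponent_le h2
            have h1c : (1:ℝ) ≤ (2:ℝ)^c := one_le_pow₀ h2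
            push_cast
            nlinarith
  have hfg : ∀ y c, I 0 y c →
      (fun y (_ : ℕ) => if T < y then (1:ℝ) else 0) y c ≤ (fun (_ : ℝ) c => q⁻¹^a * q^c) y c := by
    intro y c ⟨hy0, hy1, hyb⟩
    simp only []
    have hqc : (0:ℝ) < q⁻¹^a * q^c := by positivity
    split
    · rename_i hTy
      -- then c < a
      by_cases hca : a ≤ c
      · exfalso
        have : ((2:ℝ)^c) * (x + ((L:ℝ) - ((0:ℕ):ℝ))) ≤ ((2:ℝ)^a) * (x + L) := by
          simp only [Nat.cast_zero, sub_zero]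
          apply mul_le_mul_of_nonpos_right _ hxL
          exact pow_le_pow_right₀ h2 hca
        have hyT : y ≤ T := le_trans hyb (le_trans (Real.rpow_le_rpow_of_exponent_le h2 (by simpa using this)) hT)
        linarith
      · push_neg at hca
        have : q^a ≤ q^c := pow_le_pow_of_le_one (le_of_lt hq0) hq1 (by omega)
        rw [show q⁻¹^a * q^c = q^c / q^a by rw [div_eq_mul_inv, inv_pow]; ring]
        rw [le_div_iff₀ (by positivity)]
        linarith
    · positivity
  have := exC_mono_inv I hstep hfg L z 0 (by
    refine ⟨hz0, hz1, ?_⟩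
    simpa using hzx)
  calc exC L z 0 (fun y _ => if T < y then (1:ℝ) else 0) ≤ exC L z 0 (fun _ c => q⁻¹^a * q^c) := this
    _ = q⁻¹^a * q^0 * ((1+q)/2)^L := exC_geom q (q⁻¹^a) L z 0
    _ = q⁻¹^a * ((1+q)/2)^L := by ring
/-- Stage 1: weak polarization. δ = (2^mc)⁻¹. -/
lemma stage1 (m mc : ℕ) (hmc : 1 ≤ mc) {z₀ : ℝ} (h0 : 0 ≤ z₀) (h1 : z₀ ≤ 1) :
    exR m z₀ (fun y => if ((2:ℝ)^mc)⁻¹ < y then 1 else 0)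
      ≤ z₀ + 2 * ((2:ℝ)^mc)⁻¹ + (sqrt 3 / 2)^m * sqrt (2 * (2:ℝ)^mc) / 2 := by
  set δ : ℝ := ((2:ℝ)^mc)⁻¹ with hδ
  have hδ0 : 0 < δ := by positivity
  have hδhalf : δ ≤ 1/2 := by
    rw [hδ]
    rw [inv_le_comm₀ (by positivity) (by norm_num)]
    norm_num
    calc (2:ℝ) = 2^1 := by norm_num
      _ ≤ 2^mc := by apply pow_le_pow_right₀ one_le_two hmc
  have h1δ : (1:ℝ)/2 ≤ 1 - δ := by linarith
  set s : ℝ := sqrt (δ * (1-δ)) with hs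
  have hs0 : 0 < s := Real.sqrt_pos.mpr (by nlinarith)
  -- pointwise bound
  have hpt : ∀ y, 0 ≤ y ∧ y ≤ 1 →
      (if δ < y then (1:ℝ) else 0) ≤ y * (1-δ)⁻¹ + (sqrt (y * (1-y))) * s⁻¹ := by
    intro y ⟨hy0, hy1⟩
    have t1 : 0 ≤ y * (1-δ)⁻¹ := by positivity
    have t2 : 0 ≤ (sqrt (y * (1-y))) * s⁻¹ := by positivity
    split
    · rename_i hδy
      by_cases hy : 1 - δ ≤ y
      · have : 1 ≤ y * (1-δ)⁻¹ := by
          rw [← div_eq_mul_inv, le_div_iff₀ (by linarith)]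
          linarith
        linarith
      · push_neg at hy
        have hyy : δ * (1 - δ) ≤ y * (1-y) := by nlinarith
        have : s ≤ sqrt (y * (1-y)) := Real.sqrt_le_sqrt hyy
        have : 1 ≤ (sqrt (y * (1-y))) * s⁻¹ := by
          rw [← div_eq_mul_inv, le_div_iff₀ hs0]
          linarith
        linarith
    · linarith
  have hmono := exR_mono_inv (fun _ z => 0 ≤ z ∧ z ≤ 1)
    (f := fun y => if δ < y then (1:ℝ) else 0)
    (g := fun y => y * (1-δ)⁻¹ + (sqrt (y * (1-y))) * s⁻¹)
    (fun j z hz => by obtain ⟨a, b⟩ := unit_step hz.1 hz.2; exact ⟨a, b⟩)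
    (fun z hz => hpt z hz) m z₀ ⟨h0, h1⟩
  rw [exR_addf, exR_mulc, exR_mulc, exR_id] at hmono
  have hsq := exR_sqrt m z₀ h0 h1
  have hsinv0 : 0 ≤ s⁻¹ := by positivity
  have hpow0 : (0:ℝ) ≤ (sqrt 3 / 2)^m := by positivity
  have hterm2 : exR m z₀ (fun y => sqrt (y * (1-y))) * s⁻¹
      ≤ (sqrt 3 / 2)^m * sqrt (z₀ * (1-z₀)) * s⁻¹ := by
    apply mul_le_mul_of_nonneg_right hsq hsinv0
  have hz14 : sqrt (z₀ * (1-z₀)) ≤ 1/2 := by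
    calc sqrt (z₀ * (1-z₀)) ≤ sqrt (1/4) := Real.sqrt_le_sqrt (by nlinarith [sq_nonneg (2*z₀-1)])
      _ = 1/2 := by
        rw [show (1:ℝ)/4 = (1/2)^2 by norm_num, Real.sqrt_sq (by norm_num)]
  have hsinv : s⁻¹ ≤ sqrt (2 * (2:ℝ)^mc) := by
    have hδ2 : δ/2 ≤ δ * (1-δ) := by nlinarith
    have h1 : sqrt (δ/2) ≤ s := Real.sqrt_le_sqrt hδ2
    have h2 : 0 < sqrt (δ/2) := Real.sqrt_pos.mpr (by positivity)
    calc s⁻¹ ≤ (sqrt (δ/2))⁻¹ := by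
          apply inv_anti₀ h2 h1
      _ = sqrt ((δ/2)⁻¹) := by rw [← Real.sqrt_inv]
      _ = sqrt (2 * (2:ℝ)^mc) := by
          congr 1
          rw [hδ]
          field_simp
  have hmark : z₀ * (1-δ)⁻¹ ≤ z₀ + 2*δ := by
    have h2 : (1-δ)⁻¹ ≤ 2 := by
      rw [inv_le_comm₀ (by linarith) (by norm_num)]
      linarith
    have h0' : (1-δ)⁻¹ ≥ 0 := by positivity
    have hid : (1-δ)⁻¹ * (1-δ) = 1 := by
      field_simp
    nlinarith
  have hterm2' : (sqrt 3 / 2)^m * sqrt (z₀ * (1-z₀)) * s⁻¹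
      ≤ (sqrt 3 / 2)^m * sqrt (2 * (2:ℝ)^mc) / 2 := by
    have hs2 : (0:ℝ) ≤ sqrt (2 * (2:ℝ)^mc) := Real.sqrt_nonneg _
    calc (sqrt 3 / 2)^m * sqrt (z₀ * (1-z₀)) * s⁻¹
        ≤ (sqrt 3 / 2)^m * (1/2) * sqrt (2 * (2:ℝ)^mc) := by
          apply mul_le_mul (by apply mul_le_mul_of_nonneg_left hz14 hpow0) hsinv hsinv0
          positivity
      _ = (sqrt 3 / 2)^m * sqrt (2 * (2:ℝ)^mc) / 2 := by ring
  linarith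


set_option maxRecDepth 10000

def bet : ℝ := 99999/100000

lemma bet_pos : (0:ℝ) < bet := by norm_num [bet]
lemma bet_lt_one : bet < 1 := by norm_num [bet]

lemma N1 : ((63:ℝ)/62)^392 * ((125:ℝ)/126)^791 ≤ bet^800 := by
  rw [bet, div_pow, div_pow, div_pow, div_mul_div_comm, div_le_div_iff₀ (by positivity) (by positivity)]
  norm_num
  norm_cast

lemma N2 : ((3:ℝ)/4) ≤ bet^800 := by
  rw [bet, div_pow, le_div_iff₀ (by positivity), div_mul_eq_mul_div, div_le_iff₀ (by positivity)]
  norm_num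
  norm_cast

lemma N3 : ((81:ℝ)/128) ≤ bet^800 := by
  rw [bet, div_pow, le_div_iff₀ (by positivity), div_mul_eq_mul_div, div_le_iff₀ (by positivity)]
  norm_num
  norm_cast

lemma N4 : ((1:ℝ)/2) ≤ bet^400 := by
  rw [bet, div_pow, le_div_iff₀ (by positivity), div_mul_eq_mul_div, div_le_iff₀ (by positivity)]
  norm_num
  norm_cast

lemma betpow_pos (n : ℕ) : (0:ℝ) < bet^n := pow_pos bet_pos n

lemma pow_shift {a : ℝ} (ha : 0 < a) {N n : ℕ} (h : N ≤ n) :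
    a^(n-N) = (a⁻¹)^N * a^n := by
  have : a^(n-N) * a^N = a^n := pow_sub_mul_pow a h
  rw [inv_pow, ← this, mul_comm, mul_assoc, mul_inv_cancel₀ (pow_pos ha N).ne', mul_one]

lemma comp_delta {n mc : ℕ} (h1 : n ≤ 400*mc + 399) (h2 : 399 ≤ n) :
    ((2:ℝ)^mc)⁻¹ ≤ 2 * bet^n := by
  have hb : (0:ℝ) ≤ 2 * bet^n := mul_nonneg (by norm_num) (betpow_pos n).le
  apply le_of_pow_le_pow_left₀ (n := 400) (by norm_num) hb
  have e1 : (((2:ℝ)^mc)⁻¹)^400 = ((1:ℝ)/2)^(400*mc) := by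
    rw [← inv_pow, ← pow_mul, one_div, mul_comm]
  rw [e1]
  have e2 : ((1:ℝ)/2)^(400*mc) ≤ ((1:ℝ)/2)^(n - 399) :=
    pow_le_pow_of_le_one (by norm_num) (by norm_num) (by omega)
  have e3 : ((1:ℝ)/2)^(n-399) = ((1/2:ℝ)⁻¹)^399 * (1/2)^n := pow_shift (by norm_num) (by omega)
  have e4 : ((1:ℝ)/2)^n ≤ (bet^400)^n :=
    pow_le_pow_left₀ (by norm_num) N4 n
  have e5 : ((1/2:ℝ)⁻¹)^399 ≤ 2^400 := by norm_num; exact pow_le_pow_right₀ (by norm_num) (by norm_num)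
  calc (((1:ℝ)/2))^(400*mc) ≤ ((1:ℝ)/2)^(n-399) := e2
    _ = ((1/2:ℝ)⁻¹)^399 * (1/2)^n := e3
    _ ≤ 2^400 * (bet^400)^n := by
        rw [← pow_mul]
        apply mul_le_mul e5 ?_ (by positivity) (by positivity)
        rw [← pow_mul] at e4; exact e4
    _ = (2 * bet^n)^400 := by rw [mul_pow, ← pow_mul, ← pow_mul, Nat.mul_comm n 400]

lemma comp_B1a {n m mc : ℕ} (h1 : n ≤ 100*m + 99) (h2 : 400*mc ≤ n) (h3 : 396 ≤ n) :
    (Real.sqrt 3/2)^m * Real.sqrt (2*(2:ℝ)^mc) / 2 ≤ 2 * bet^n := by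
  have hb : (0:ℝ) ≤ 2 * bet^n := mul_nonneg (by norm_num) (betpow_pos n).le
  have hL : (0:ℝ) ≤ (Real.sqrt 3/2)^m * Real.sqrt (2*(2:ℝ)^mc) / 2 := by positivity
  apply le_of_pow_le_pow_left₀ (n := 2) (by norm_num) hb
  have hsq3 : ((Real.sqrt 3/2)^m)^2 = ((3:ℝ)/4)^m := by
    rw [← pow_mul, Nat.mul_comm m 2, pow_mul]
    congr 1
    rw [div_pow, Real.sq_sqrt (by norm_num)]
    norm_num
  have hsq2 : (Real.sqrt (2*(2:ℝ)^mc))^2 = 2*(2:ℝ)^mc := Real.sq_sqrt (by positivity)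
  have eL : ((Real.sqrt 3/2)^m * Real.sqrt (2*(2:ℝ)^mc) / 2)^2
      = ((3:ℝ)/4)^m * (2:ℝ)^mc / 2 := by
    rw [div_pow, mul_pow, hsq3, hsq2]
    ring
  rw [eL]
  -- key : (3/4)^m * 2^mc ≤ 8 * bet^(2n)
  have key : ((3:ℝ)/4)^m * (2:ℝ)^mc ≤ 8 * bet^(2*n) := by
    have hb8 : (0:ℝ) ≤ 8 * bet^(2*n) := mul_nonneg (by norm_num) (betpow_pos (2*n)).le
    apply le_of_pow_le_pow_left₀ (n := 400) (by norm_num) hb8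
    have f1 : (((3:ℝ)/4)^m * (2:ℝ)^mc)^400 = ((3:ℝ)/4)^(400*m) * (2:ℝ)^(400*mc) := by
      rw [mul_pow, ← pow_mul, ← pow_mul, Nat.mul_comm m 400, Nat.mul_comm mc 400]
    rw [f1]
    have f2 : ((3:ℝ)/4)^(400*m) ≤ ((3:ℝ)/4)^(4*n - 396) :=
      pow_le_pow_of_le_one (by norm_num) (by norm_num) (by omega)
    have f3 : (2:ℝ)^(400*mc) ≤ (2:ℝ)^n := pow_le_pow_right₀ one_le_two (by omega)
    have f4 : ((3:ℝ)/4)^(4*n-396) = (((3:ℝ)/4)⁻¹)^396 * ((3:ℝ)/4)^(4*n) :=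
      pow_shift (by norm_num) (by omega)
    have f5 : (((3:ℝ)/4)⁻¹)^396 ≤ 8^400 := by
      calc (((3:ℝ)/4)⁻¹)^396 ≤ 8^396 := by
            apply pow_le_pow_left₀ (by norm_num) (by norm_num)
        _ ≤ 8^400 := by apply pow_le_pow_right₀ (by norm_num) (by omega)
    calc ((3:ℝ)/4)^(400*m) * (2:ℝ)^(400*mc)
        ≤ ((3:ℝ)/4)^(4*n-396) * (2:ℝ)^n := by
          apply mul_le_mul f2 f3 (by positivity) (by positivity)
      _ = (((3:ℝ)/4)⁻¹)^396 * (((3:ℝ)/4)^(4*n) * (2:ℝ)^n) := by rw [f4]; ring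
      _ = (((3:ℝ)/4)⁻¹)^396 * ((81:ℝ)/128)^n := by
          congr 1
          rw [pow_mul, ← mul_pow]
          norm_num
      _ ≤ 8^400 * (bet^800)^n := by
          apply mul_le_mul f5 (pow_le_pow_left₀ (by norm_num) N3 n) (by positivity) (by positivity)
      _ = (8 * bet^(2*n))^400 := by
          rw [mul_pow, ← pow_mul, ← pow_mul]
          congr 2
          omega
  calc ((3:ℝ)/4)^m * (2:ℝ)^mc / 2 ≤ 8 * bet^(2*n) / 2 := by linarith
    _ = 4 * bet^(2*n) := by ring
    _ = (2 * bet^n)^2 := by rw [mul_pow, ← pow_mul]; ring_nf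

lemma comp_b2 {n k₂ : ℕ} (h1 : n ≤ 800*k₂ + 799) (h2 : 799 ≤ n) :
    ((3:ℝ)/4)^k₂ ≤ (4/3) * bet^n := by
  have hb : (0:ℝ) ≤ (4/3) * bet^n := mul_nonneg (by norm_num) (betpow_pos n).le
  apply le_of_pow_le_pow_left₀ (n := 800) (by norm_num) hb
  have f1 : (((3:ℝ)/4)^k₂)^800 = ((3:ℝ)/4)^(800*k₂) := by
    rw [← pow_mul, Nat.mul_comm]
  rw [f1]
  have f2 : ((3:ℝ)/4)^(800*k₂) ≤ ((3:ℝ)/4)^(n-799) :=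
    pow_le_pow_of_le_one (by norm_num) (by norm_num) (by omega)
  have f3 : ((3:ℝ)/4)^(n-799) = (((3:ℝ)/4)⁻¹)^799 * ((3:ℝ)/4)^n :=
    pow_shift (by norm_num) (by omega)
  have f4 : ((3:ℝ)/4)^n ≤ (bet^800)^n := pow_le_pow_left₀ (by norm_num) N2 n
  have f5 : (((3:ℝ)/4)⁻¹)^799 ≤ ((4:ℝ)/3)^800 := by
    calc (((3:ℝ)/4)⁻¹)^799 = ((4:ℝ)/3)^799 := by norm_num
      _ ≤ ((4:ℝ)/3)^800 := pow_le_pow_right₀ (by norm_num) (by omega)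
  calc ((3:ℝ)/4)^(800*k₂) ≤ (((3:ℝ)/4)⁻¹)^799 * ((3:ℝ)/4)^n := by rw [← f3]; exact f2
    _ ≤ ((4:ℝ)/3)^800 * (bet^800)^n := by
        apply mul_le_mul f5 f4 (by positivity) (by positivity)
    _ = ((4/3) * bet^n)^800 := by
        rw [mul_pow, ← pow_mul, ← pow_mul, Nat.mul_comm n 800]

lemma comp_b3 {n a₃ k₃ : ℕ} (h1 : 800*a₃ ≤ 392*n + 792) (h2 : 791*n ≤ 800*k₃) :
    ((63:ℝ)/62)^a₃ * ((125:ℝ)/126)^k₃ ≤ (63/62) * bet^n := by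
  have hb : (0:ℝ) ≤ (63/62) * bet^n := mul_nonneg (by norm_num) (betpow_pos n).le
  apply le_of_pow_le_pow_left₀ (n := 800) (by norm_num) hb
  have f1 : (((63:ℝ)/62)^a₃ * ((125:ℝ)/126)^k₃)^800
      = ((63:ℝ)/62)^(800*a₃) * ((125:ℝ)/126)^(800*k₃) := by
    rw [mul_pow, ← pow_mul, ← pow_mul, Nat.mul_comm a₃ 800, Nat.mul_comm k₃ 800]
  rw [f1]
  have f2 : ((63:ℝ)/62)^(800*a₃) ≤ ((63:ℝ)/62)^(392*n + 792) :=
    pow_le_pow_right₀ (by norm_num) h1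
  have f3 : ((125:ℝ)/126)^(800*k₃) ≤ ((125:ℝ)/126)^(791*n) :=
    pow_le_pow_of_le_one (by norm_num) (by norm_num) h2
  have f4 : ((63:ℝ)/62)^(392*n+792) * ((125:ℝ)/126)^(791*n)
      = ((63:ℝ)/62)^792 * ((((63:ℝ)/62)^392 * ((125:ℝ)/126)^791)^n) := by
    rw [pow_add, mul_pow, ← pow_mul, ← pow_mul, Nat.mul_comm 392 n, Nat.mul_comm 791 n]
    ring
  have f5 : (((63:ℝ)/62)^392 * ((125:ℝ)/126)^791)^n ≤ (bet^800)^n :=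
    pow_le_pow_left₀ (by positivity) N1 n
  have f6 : ((63:ℝ)/62)^792 ≤ ((63:ℝ)/62)^800 := pow_le_pow_right₀ (by norm_num) (by omega)
  calc ((63:ℝ)/62)^(800*a₃) * ((125:ℝ)/126)^(800*k₃)
      ≤ ((63:ℝ)/62)^(392*n+792) * ((125:ℝ)/126)^(791*n) := by
        apply mul_le_mul f2 f3 (by positivity) (by positivity)
    _ = ((63:ℝ)/62)^792 * ((((63:ℝ)/62)^392 * ((125:ℝ)/126)^791)^n) := f4
    _ ≤ ((63:ℝ)/62)^800 * (bet^800)^n := by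
        apply mul_le_mul f6 f5 (by positivity) (by positivity)
    _ = ((63/62) * bet^n)^800 := by
        rw [mul_pow, ← pow_mul, ← pow_mul, Nat.mul_comm n 800]

theorem main_comb {z₀ : ℝ} (h0 : 0 ≤ z₀) (h1 : z₀ ≤ 1) {n : ℕ} (hn : 2000 ≤ n) :
    1 - z₀ - 3000 * bet^n
      ≤ exR n z₀ (fun y => if y ≤ (2:ℝ)^(-(2:ℝ)^((0.49:ℝ)*n)) then 1 else 0) := by
  -- parameters
  set m : ℕ := n/100 with hm_def
  set mc : ℕ := n/400 with hmc_def
  set k₂ : ℕ := n/800 with hk2_def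
  set a₃ : ℕ := (49*n+99)/100 with ha3_def
  set k₃ : ℕ := n - m - k₂ with hk3_def
  -- nat facts
  have hm1 : 100*m ≤ n := by rw [hm_def]; omega
  have hm2 : n ≤ 100*m + 99 := by
    have := Nat.div_add_mod n 100
    have := Nat.mod_lt n (show 0 < 100 by norm_num)
    omega
  have hmc1 : 400*mc ≤ n := by rw [hmc_def]; omega
  have hmc2 : n ≤ 400*mc + 399 := by
    have := Nat.div_add_mod n 400
    have := Nat.mod_lt n (show 0 < 400 by norm_num)
    omega
  have hk21 : 800*k₂ ≤ n := by rw [hk2_def]; omega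
  have hk22 : n ≤ 800*k₂ + 799 := by
    have := Nat.div_add_mod n 800
    have := Nat.mod_lt n (show 0 < 800 by norm_num)
    omega
  have ha31 : 100*a₃ ≤ 49*n + 99 := by rw [ha3_def]; omega
  have ha32 : 49*n ≤ 100*a₃ := by
    have := Nat.div_add_mod (49*n+99) 100
    have := Nat.mod_lt (49*n+99) (show 0 < 100 by norm_num)
    omega
  have hsplit : n = m + (k₂ + k₃) := by omega
  have hmcge1 : 1 ≤ mc := by omega
  have hC1 : 2048*k₂ + k₃ + 1 ≤ 2048*mc := by omega
  have h791 : 791*n ≤ 800*k₃ := by omega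
  have h800a3 : 800*a₃ ≤ 392*n + 792 := by omega
  -- real quantities
  set δ : ℝ := ((2:ℝ)^mc)⁻¹ with hδ_def
  set x₂ : ℝ := -(mc:ℝ) with hx2_def
  set x₃ : ℝ := ((2:ℝ)^(11:ℕ)) * (x₂ + (k₂:ℝ)) with hx3_def
  set thr : ℝ := (2:ℝ)^(-(2:ℝ)^((0.49:ℝ)*n)) with hthr_def
  set b₂ : ℝ := ((1:ℝ)/2)⁻¹^(11:ℕ) * ((1+(1:ℝ)/2)/2)^k₂ with hb2_def
  set b₃ : ℝ := ((62:ℝ)/63)⁻¹^a₃ * ((1+(62:ℝ)/63)/2)^k₃ with hb3_def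
  have hδ_eq : δ = (2:ℝ)^x₂ := by
    rw [hδ_def, hx2_def, Real.rpow_neg (by norm_num), Real.rpow_natCast]
  have hδ_pos : 0 < δ := by rw [hδ_def]; positivity
  have hx2k2 : x₂ + (k₂:ℝ) ≤ 0 := by
    rw [hx2_def]
    have : (k₂:ℝ) ≤ (mc:ℝ) := by exact_mod_cast (by omega : k₂ ≤ mc)
    linarith
  have hx3k3 : x₃ + (k₃:ℝ) ≤ -1 := by
    rw [hx3_def, hx2_def]
    have hc : ((2048:ℝ)*k₂ + k₃ + 1) ≤ 2048*(mc:ℝ) := by exact_mod_cast hC1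
    have h211 : ((2:ℝ)^(11:ℕ)) = 2048 := by norm_num
    rw [h211]
    linarith
  have hb3_nonneg : 0 ≤ b₃ := by rw [hb3_def]; positivity
  have hb2_nonneg : 0 ≤ b₂ := by rw [hb2_def]; positivity
  -- stage 3
  have hthrT : (2:ℝ) ^ (((2:ℝ)^a₃) * (x₃ + (k₃:ℝ))) ≤ thr := by
    rw [hthr_def]
    apply Real.rpow_le_rpow_of_exponent_le one_le_two
    have h2a3 : ((2:ℝ)^((0.49:ℝ)*n)) ≤ (2:ℝ)^(a₃:ℕ) := by
      rw [← Real.rpow_natCast 2 a₃]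
      apply Real.rpow_le_rpow_of_exponent_le one_le_two
      have : (49:ℝ)*n ≤ 100*a₃ := by exact_mod_cast ha32
      have h49 : (0.49:ℝ) = 49/100 := by norm_num
      rw [h49]
      linarith
    have hpos : (0:ℝ) < (2:ℝ)^(a₃:ℕ) := by positivity
    nlinarith [hx3k3, hpos, h2a3, Real.rpow_pos_of_pos (show (0:ℝ)<2 by norm_num) ((0.49:ℝ)*n)]
  have stage3 : ∀ w : ℝ, 0 ≤ w → w ≤ 1 → w ≤ (2:ℝ)^x₃ →
      exR k₃ w (fun y => if thr < y then 1 else 0) ≤ b₃ := by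
    intro w hw0 hw1 hwx
    rw [hb3_def]
    exact stage k₃ a₃ x₃ thr (62/63) (by norm_num) (by norm_num) (by linarith [hx3k3]) hthrT w hw0 hw1 hwx
  -- stage 2 (Chernoff on few squarings)
  have stage2 : ∀ y : ℝ, 0 ≤ y → y ≤ 1 → y ≤ (2:ℝ)^x₂ →
      exR k₂ y (fun w => if (2:ℝ)^x₃ < w then 1 else 0) ≤ b₂ := by
    intro y hy0 hy1 hyx
    rw [hb2_def]
    exact stage k₂ 11 x₂ ((2:ℝ)^x₃) (1/2) (by norm_num) (by norm_num) hx2k2 (le_of_eq (by rw [hx3_def])) y hy0 hy1 hyx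
  -- combine stages 2 and 3
  have stage23 : ∀ y : ℝ, 0 ≤ y → y ≤ 1 → y ≤ δ →
      exR (k₂ + k₃) y (fun y' => if thr < y' then 1 else 0) ≤ b₂ + b₃ := by
    intro y hy0 hy1 hyδ
    rw [exR_add]
    have hmono := exR_mono_inv (fun _ z => 0 ≤ z ∧ z ≤ 1)
      (f := fun w => exR k₃ w (fun y' => if thr < y' then 1 else 0))
      (g := fun w => (if (2:ℝ)^x₃ < w then 1 else 0) + b₃)
      (fun j z hz => by obtain ⟨a, b⟩ := unit_step hz.1 hz.2; exact ⟨a, b⟩)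
      (fun w hw => by
        by_cases hcase : (2:ℝ)^x₃ < w
        · rw [if_pos hcase]
          linarith [exR_le_one (T := thr) k₃ hw.1 hw.2]
        · rw [if_neg hcase]
          push_neg at hcase
          linarith [stage3 w hw.1 hw.2 hcase])
      k₂ y ⟨hy0, hy1⟩
    rw [exR_addf, exR_const] at hmono
    have := stage2 y hy0 hy1 (by rw [← hδ_eq]; exact hyδ)
    linarith
  -- full bad-event bound
  set B1a : ℝ := (sqrt 3 / 2)^m * sqrt (2 * (2:ℝ)^mc) / 2 with hB1a_def
  have hbad : exR n z₀ (fun y => if thr < y then 1 else 0)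
      ≤ z₀ + 2*δ + B1a + (b₂ + b₃) := by
    rw [hsplit, exR_add]
    have hmono := exR_mono_inv (fun _ z => 0 ≤ z ∧ z ≤ 1)
      (f := fun y => exR (k₂+k₃) y (fun y' => if thr < y' then 1 else 0))
      (g := fun y => (if δ < y then 1 else 0) + (b₂ + b₃))
      (fun j z hz => by obtain ⟨a, b⟩ := unit_step hz.1 hz.2; exact ⟨a, b⟩)
      (fun y hy => by
        by_cases hcase : δ < y
        · rw [if_pos hcase]
          linarith [exR_le_one (T := thr) (k₂+k₃) hy.1 hy.2]
        · rw [if_neg hcase]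
          push_neg at hcase
          linarith [stage23 y hy.1 hy.2 hcase])
      m z₀ ⟨h0, h1⟩
    rw [exR_addf, exR_const] at hmono
    have hst1 := stage1 m mc hmcge1 h0 h1
    rw [← hδ_def, ← hB1a_def] at hst1
    linarith
  -- complement
  have hcompl : exR n z₀ (fun y => if y ≤ thr then 1 else 0)
      = 1 - exR n z₀ (fun y => if thr < y then 1 else 0) := by
    have e : exR n z₀ (fun y => (if y ≤ thr then (1:ℝ) else 0) + (if thr < y then 1 else 0))
        = exR n z₀ (fun _ => (1:ℝ)) := by
      apply exR_congr
      intro y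
      by_cases hy : y ≤ thr
      · rw [if_pos hy, if_neg (not_lt.mpr hy)]; norm_num
      · rw [if_neg hy, if_pos (lt_of_not_ge hy)]; norm_num
    rw [exR_addf, exR_const] at e
    linarith
  -- numeric
  have hnum : 2*δ + B1a + (b₂ + b₃) ≤ 3000 * bet^n := by
    have c1 : δ ≤ 2*bet^n := comp_delta hmc2 (by omega)
    have c2 : B1a ≤ 2*bet^n := comp_B1a hm2 hmc1 (by omega)
    have c3 : b₂ ≤ 2048*((4/3)*bet^n) := by
      rw [hb2_def]
      have e : ((1:ℝ)/2)⁻¹^(11:ℕ) = 2048 := by norm_num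
      have e2 : ((1+(1:ℝ)/2)/2) = 3/4 := by norm_num
      rw [e, e2]
      have := comp_b2 hk22 (by omega)
      linarith
    have c4 : b₃ ≤ (63/62)*bet^n := by
      rw [hb3_def]
      have e : ((62:ℝ)/63)⁻¹ = 63/62 := by norm_num
      have e2 : ((1+(62:ℝ)/63)/2) = 125/126 := by norm_num
      rw [e, e2]
      exact comp_b3 h800a3 h791
    have hbp := (betpow_pos n).le
    linarith [c1, c2, c3, c4, hbp]
  rw [hcompl]
  linarith [hbad, hnum]


lemma exR_zero (z : ℝ) (f : ℝ → ℝ) : exR 0 z f = f z := rfl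
lemma exR_succ (n : ℕ) (z : ℝ) (f : ℝ → ℝ) :
    exR (n+1) z f = (exR n (z^2) f + exR n (2*z - z^2) f) / 2 := rfl

def bstep (z : ℝ) (b : Bool) : ℝ := if b then z^2 else 2*z - z^2

lemma Zproc_foldl (z₀ : ℝ) : ∀ (n : ℕ) (ω : ℕ → Bool),
    Zproc z₀ n ω = (List.ofFn (fun j : Fin n => ω j.val)).foldl bstep z₀ := by
  intro n
  induction n with
  | zero => intro ω; simp [Zproc]
  | succ n ih =>
    intro ω
    rw [List.ofFn_succ' (fun j : Fin (n+1) => ω j.val), List.concat_eq_append, List.foldl_append]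
    simp only [Fin.coe_castSucc, Fin.val_last]
    rw [← ih ω]
    cases hb : ω n <;> simp [Zproc, bstep, hb]

lemma exR_eq_sum (f : ℝ → ℝ) : ∀ (n : ℕ) (z : ℝ),
    exR n z f = (∑ v : Fin n → Bool, f ((List.ofFn v).foldl bstep z)) / 2^n := by
  intro n
  induction n with
  | zero => intro z; simp [exR_zero]
  | succ n ih =>
    intro z
    rw [exR_succ, ih, ih]
    have hsum : ∑ v : Fin (n+1) → Bool, f ((List.ofFn v).foldl bstep z)
        = ∑ p : Bool × (Fin n → Bool), f ((List.ofFn ((Fin.consEquiv (fun _ => Bool)) p)).foldl bstep z) :=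
      (Equiv.sum_comp (Fin.consEquiv (fun _ => Bool))
        (fun v => f ((List.ofFn v).foldl bstep z))).symm
    rw [hsum, Fintype.sum_prod_type]
    have hterm : ∀ (b : Bool) (w : Fin n → Bool),
        ((List.ofFn ((Fin.consEquiv (fun _ => Bool)) (b, w))).foldl bstep z)
          = (List.ofFn w).foldl bstep (bstep z b) := by
      intro b w
      have : (Fin.consEquiv (fun _ => Bool)) (b, w) = Fin.cons b w := rfl
      rw [this, List.ofFn_succ]
      simp only [Fin.cons_zero, Fin.cons_succ]
      rfl
    simp only [hterm]
    rw [Fintype.sum_bool]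
    have hb1 : bstep z true = z^2 := by simp [bstep]
    have hb2 : bstep z false = 2*z - z^2 := by simp [bstep]
    rw [hb1, hb2, pow_succ]
    ring

lemma cyl_measurable (n : ℕ) (v : Fin n → Bool) :
    MeasurableSet {ω : ℕ → Bool | (fun j : Fin n => ω j.val) = v} := by
  have he : {ω : ℕ → Bool | (fun j : Fin n => ω j.val) = v}
      = ⋂ j : Fin n, (fun ω : ℕ → Bool => ω j.val) ⁻¹' {v j} := by
    ext ω
    simp [funext_iff]
  rw [he]
  exact MeasurableSet.iInter (fun j =>
    (measurableSet_singleton (v j)).preimage (measurable_pi_apply _))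

lemma cyl_meas {P : Measure (ℕ → Bool)} (hP : IsFairCoinMeasure P) (n : ℕ) (v : Fin n → Bool) :
    P {ω : ℕ → Bool | (fun j : Fin n => ω j.val) = v} = (1/2 : ENNReal)^n := by
  obtain ⟨hprob, hind, hhalf⟩ := hP
  classical
  set sets : ℕ → Set Bool := fun i => if h : i < n then {v ⟨i, h⟩} else Set.univ with hsets
  have he : {ω : ℕ → Bool | (fun j : Fin n => ω j.val) = v}
      = ⋂ i ∈ Finset.range n, (fun ω : ℕ → Bool => ω i) ⁻¹' sets i := by
    ext ω
    simp only [Set.mem_setOf_eq, funext_iff, Set.mem_iInter, Finset.mem_range, Set.mem_preimage]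
    constructor
    · intro h i hi
      rw [hsets]
      simp only [dif_pos hi, Set.mem_singleton_iff]
      exact h ⟨i, hi⟩
    · intro h j
      have := h j.val j.isLt
      rw [hsets] at this
      simp only [dif_pos j.isLt, Set.mem_singleton_iff] at this
      simpa using this
  rw [he]
  rw [hind.measure_inter_preimage_eq_mul (Finset.range n) (fun i _ => by
    exact MeasurableSet.of_discrete)]
  have hfac : ∀ i ∈ Finset.range n, P ((fun ω : ℕ → Bool => ω i) ⁻¹' sets i) = 1/2 := by
    intro i hi
    rw [Finset.mem_range] at hi
    have : (fun ω : ℕ → Bool => ω i) ⁻¹' sets i = {ω : ℕ → Bool | ω i = v ⟨i, hi⟩} := by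
      ext ω
      rw [hsets]
      simp [dif_pos hi]
    rw [this, hhalf i (v ⟨i, hi⟩)]
  rw [Finset.prod_congr rfl hfac, Finset.prod_const, Finset.card_range]

lemma meas_eq {P : Measure (ℕ → Bool)} (hP : IsFairCoinMeasure P) (z₀ : ℝ) (n : ℕ)
    (Q : ℝ → Prop) [DecidablePred Q] :
    (P {ω | Q (Zproc z₀ n ω)}).toReal = exR n z₀ (fun y => if Q y then 1 else 0) := by
  classical
  set S : Finset (Fin n → Bool) :=
    Finset.univ.filter (fun v => Q ((List.ofFn v).foldl bstep z₀)) with hS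
  have hev : {ω : ℕ → Bool | Q (Zproc z₀ n ω)}
      = ⋃ v ∈ S, {ω : ℕ → Bool | (fun j : Fin n => ω j.val) = v} := by
    ext ω
    simp only [Set.mem_setOf_eq, Set.mem_iUnion]
    rw [Zproc_foldl z₀ n ω]
    constructor
    · intro h
      refine ⟨fun j => ω j.val, ?_, rfl⟩
      rw [hS, Finset.mem_filter]
      exact ⟨Finset.mem_univ _, h⟩
    · rintro ⟨v, hv, hveq⟩
      rw [hS, Finset.mem_filter] at hv
      rw [← hveq] at hv
      exact hv.2
  have hd : (↑S : Set (Fin n → Bool)).PairwiseDisjoint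
      (fun v => {ω : ℕ → Bool | (fun j : Fin n => ω j.val) = v}) := by
    intro v _ w _ hvw
    apply Set.disjoint_left.mpr
    intro ω h1 h2
    exact hvw (h1.symm.trans h2)
  rw [hev, measure_biUnion_finset hd (fun v _ => cyl_measurable n v)]
  have : ∀ v ∈ S, P {ω : ℕ → Bool | (fun j : Fin n => ω j.val) = v} = (1/2 : ENNReal)^n :=
    fun v _ => cyl_meas hP n v
  rw [Finset.sum_congr rfl this, Finset.sum_const, nsmul_eq_mul]
  rw [exR_eq_sum]
  have hsum : ∑ v : Fin n → Bool, (if Q ((List.ofFn v).foldl bstep z₀) then (1:ℝ) else 0)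
      = (S.card : ℝ) := by
    rw [hS, Finset.sum_boole]
  have htr : ((S.card : ENNReal) * (1/2)^n).toReal = (S.card : ℝ) * (1/2)^n := by
    rw [ENNReal.toReal_mul, ENNReal.toReal_pow]
    norm_num
  rw [htr, ← hsum]
  rw [div_pow, one_pow, div_eq_mul_inv, div_eq_mul_inv, one_mul]

/-- There exists μ > 0 such that for every z₀ ∈ [0,1] there is C > 0 with
ℙ{ Z_i ≤ 2^(−2^(0.49·i)) } ≥ (1 − z₀) − C·2^(−i/μ) for all i. -/
theorem stmt0 :
    ∃ μ : ℝ, 0 < μ ∧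
      ∀ z₀ ∈ Set.Icc (0:ℝ) 1, ∀ P : Measure (ℕ → Bool), IsFairCoinMeasure P →
        ∃ C : ℝ, 0 < C ∧ ∀ i : ℕ,
          (P {ω | Zproc z₀ i ω ≤ (2:ℝ) ^ (-(2:ℝ) ^ ((0.49:ℝ) * i))}).toReal
            ≥ (1 - z₀) - C * (2:ℝ) ^ (-(i:ℝ) / μ) := by
  classical
  set l : ℝ := Real.logb 2 bet with hl_def
  have hl_neg : l < 0 := Real.logb_neg (by norm_num) bet_pos bet_lt_one
  refine ⟨(-l)⁻¹, by rw [inv_pos]; linarith, ?_⟩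
  intro z₀ hz₀ P hP
  obtain ⟨h0, h1⟩ := hz₀
  refine ⟨3000 + (bet⁻¹)^2000, by have := bet_pos; positivity, ?_⟩
  intro i
  have hkey : (2:ℝ) ^ (-(i:ℝ) / (-l)⁻¹) = bet^i := by
    have he : -(i:ℝ) / (-l)⁻¹ = l * i := by
      field_simp
    rw [he, Real.rpow_mul (by norm_num), Real.rpow_logb (by norm_num) (by norm_num) bet_pos,
      Real.rpow_natCast]
  rw [hkey]
  have hCbet : 0 ≤ (bet⁻¹)^2000 * bet^i := by have := bet_pos; positivity
  by_cases hi : 2000 ≤ i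
  · have hmc := main_comb h0 h1 hi
    have hme := meas_eq hP z₀ i (fun y => y ≤ (2:ℝ)^(-(2:ℝ)^((0.49:ℝ)*i)))
    rw [ge_iff_le]
    calc 1 - z₀ - (3000 + (bet⁻¹)^2000) * bet^i
        ≤ 1 - z₀ - 3000 * bet^i := by nlinarith [hCbet]
      _ ≤ exR i z₀ (fun y => if y ≤ (2:ℝ)^(-(2:ℝ)^((0.49:ℝ)*i)) then 1 else 0) := hmc
      _ = (P {ω | Zproc z₀ i ω ≤ (2:ℝ)^(-(2:ℝ)^((0.49:ℝ)*i))}).toReal := hme.symm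
  · push_neg at hi
    have h2 : bet^2000 ≤ bet^i :=
      pow_le_pow_of_le_one bet_pos.le bet_lt_one.le (by omega)
    have h3 : (1:ℝ) ≤ (bet⁻¹)^2000 * bet^i := by
      rw [inv_pow, ← div_eq_inv_mul, le_div_iff₀ (pow_pos bet_pos 2000)]
      linarith
    have h4 : (1:ℝ) ≤ (3000 + (bet⁻¹)^2000) * bet^i := by nlinarith [betpow_pos i]
    have h5 : (0:ℝ) ≤ (P {ω | Zproc z₀ i ω ≤ (2:ℝ)^(-(2:ℝ)^((0.49:ℝ)*i))}).toReal :=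
      ENNReal.toReal_nonneg
    linarith

end
end

section
/- For every z₀ ∈ [0,1] there exists a constant C > 0 such that for every integer n ≥ 2, the expectation of the stopping time τ_n satisfies E[τ_n] ≤ C·log₂ n. -/
open MeasureTheory ProbabilityTheory

/-- The stopping time `τ_n := min( inf{ i : min(Z_i, 1−Z_i) ≤ 2^(−6n/5) }, n )`
(the union with `{n}` implements the truncation at `n`, also when the set is empty). -/
noncomputable def tau (z₀ : ℝ) (n : ℕ) (ω : ℕ → Bool) : ℕ :=
  sInf ({i | min (Zproc z₀ i ω) (1 - Zproc z₀ i ω) ≤ (2:ℝ) ^ (-(6 * (n:ℝ) / 5))} ∪ {n})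

/-- The stopped value `Z_{τ_n}`. -/
noncomputable def Ztau (z₀ : ℝ) (n : ℕ) (ω : ℕ → Bool) : ℝ :=
  Zproc z₀ (tau z₀ n ω) ω





noncomputable def Yp (z₀ : ℝ) (i : ℕ) (ω : ℕ → Bool) : ℝ :=
  min (Zproc z₀ i ω) (1 - Zproc z₀ i ω)

noncomputable def thr (n : ℕ) : ℝ := (2:ℝ) ^ (-(6 * (n:ℝ) / 5))

lemma tau_eq (z₀ : ℝ) (n : ℕ) (ω : ℕ → Bool) :
    tau z₀ n ω = sInf ({i | Yp z₀ i ω ≤ thr n} ∪ {n}) := rfl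

lemma thr_pos (n : ℕ) : 0 < thr n := Real.rpow_pos_of_pos two_pos _

lemma logb_thr (n : ℕ) : Real.logb 2 (thr n) = -(6*(n:ℝ)/5) :=
  Real.logb_rpow (by norm_num) (by norm_num)

lemma Zmem (z₀ : ℝ) (hz : z₀ ∈ Set.Icc (0:ℝ) 1) (i : ℕ) (ω : ℕ → Bool) :
    Zproc z₀ i ω ∈ Set.Icc (0:ℝ) 1 := by
  induction i with
  | zero => exact hz
  | succ i ih =>
    obtain ⟨h0, h1⟩ := ih
    simp only [Zproc]
    split <;> constructor <;> nlinarith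

lemma Zcongr (z₀ : ℝ) (i : ℕ) {ω ω' : ℕ → Bool} (h : ∀ j < i, ω j = ω' j) :
    Zproc z₀ i ω = Zproc z₀ i ω' := by
  induction i with
  | zero => rfl
  | succ i ih =>
    have hi := ih (fun j hj => h j (Nat.lt_succ_of_lt hj))
    simp only [Zproc, hi, h i (Nat.lt_succ_self i)]

lemma Ycongr (z₀ : ℝ) (i : ℕ) {ω ω' : ℕ → Bool} (h : ∀ j < i, ω j = ω' j) :
    Yp z₀ i ω = Yp z₀ i ω' := by
  unfold Yp; rw [Zcongr z₀ i h]

lemma Yp_le_half (z₀ : ℝ) (i : ℕ) (ω : ℕ → Bool) : Yp z₀ i ω ≤ 1/2 := by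
  unfold Yp
  rcases min_cases (Zproc z₀ i ω) (1 - Zproc z₀ i ω) with ⟨h,h'⟩|⟨h,h'⟩ <;> rw [h] <;> linarith

lemma Yp_sq_le (z₀ : ℝ) (hz : z₀ ∈ Set.Icc (0:ℝ) 1) (i : ℕ) (ω : ℕ → Bool) :
    (Yp z₀ i ω)^2 ≤ Yp z₀ (i+1) ω := by
  obtain ⟨h0, h1⟩ := Zmem z₀ hz i ω
  have hm1 : Yp z₀ i ω ≤ Zproc z₀ i ω := min_le_left _ _
  have hm2 : Yp z₀ i ω ≤ 1 - Zproc z₀ i ω := min_le_right _ _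
  have hm0 : 0 ≤ Yp z₀ i ω := le_min h0 (by linarith)
  have hprod : Yp z₀ i ω * Yp z₀ i ω ≤ Zproc z₀ i ω * (1 - Zproc z₀ i ω) :=
    mul_le_mul hm1 hm2 hm0 h0
  unfold Yp at hm1 hm2 hm0 hprod ⊢
  simp only [Zproc]
  split
  · apply le_min <;> nlinarith
  · apply le_min <;> nlinarith

lemma tau_le (z₀ : ℝ) (n : ℕ) (ω : ℕ → Bool) : tau z₀ n ω ≤ n :=
  Nat.sInf_le (Or.inr rfl)

lemma tau_mem (z₀ : ℝ) (n : ℕ) (ω : ℕ → Bool) :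
    tau z₀ n ω ∈ ({i | Yp z₀ i ω ≤ thr n} ∪ {n} : Set ℕ) :=
  Nat.sInf_mem ⟨n, Or.inr rfl⟩

lemma lt_tau_iff {z₀ : ℝ} {n k : ℕ} (hk : k < n) (ω : ℕ → Bool) :
    k < tau z₀ n ω ↔ ∀ i ≤ k, thr n < Yp z₀ i ω := by
  constructor
  · intro h i hi
    by_contra hc
    push_neg at hc
    have hle : tau z₀ n ω ≤ i := by
      rw [tau_eq]; exact Nat.sInf_le (Or.inl hc)
    omega
  · intro h
    by_contra hc
    push_neg at hc
    rcases tau_mem z₀ n ω with hm | hm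
    · exact absurd hm (not_le.2 (h _ hc))
    · rw [Set.mem_singleton_iff] at hm; omega

lemma tau_agree_gt {z₀ : ℝ} {n k : ℕ} (hk : k < n) {ω ω' : ℕ → Bool}
    (hag : ∀ j < k, ω j = ω' j) (h : k < tau z₀ n ω) : k < tau z₀ n ω' := by
  rw [lt_tau_iff hk] at h ⊢
  intro i hi
  rw [← Ycongr z₀ i (fun j hj => hag j (lt_of_lt_of_le hj hi))]
  exact h i hi

lemma tau_agree_le {z₀ : ℝ} {n k : ℕ} (hk : k < n) {ω ω' : ℕ → Bool}
    (hag : ∀ j < k, ω j = ω' j) (h : tau z₀ n ω ≤ k) : tau z₀ n ω' = tau z₀ n ω := by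
  have step : ∀ ω ω' : ℕ → Bool, (∀ j < k, ω j = ω' j) → tau z₀ n ω ≤ k →
      tau z₀ n ω' ≤ tau z₀ n ω := by
    intro ω ω' hag h
    rcases tau_mem z₀ n ω with hm | hm
    · rw [tau_eq]
      apply Nat.sInf_le
      left
      show Yp z₀ (tau z₀ n ω) ω' ≤ thr n
      rw [← Ycongr z₀ _ (fun j hj => hag j (lt_of_lt_of_le hj h))]
      exact hm
    · rw [Set.mem_singleton_iff] at hm; omega
  have h1 := step ω ω' hag h
  have h2 := step ω' ω (fun j hj => (hag j hj).symm) (le_trans h1 h)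
  omega

lemma tau_congr {z₀ : ℝ} {n : ℕ} {ω ω' : ℕ → Bool}
    (hag : ∀ j < n, ω j = ω' j) : tau z₀ n ω = tau z₀ n ω' := by
  have step : ∀ ω ω' : ℕ → Bool, (∀ j < n, ω j = ω' j) → tau z₀ n ω' ≤ tau z₀ n ω := by
    intro ω ω' hag
    rcases tau_mem z₀ n ω with hm | hm
    · rcases lt_or_eq_of_le (tau_le z₀ n ω) with hlt | heq
      · rw [tau_eq]
        apply Nat.sInf_le
        left
        show Yp z₀ (tau z₀ n ω) ω' ≤ thr n
        rw [← Ycongr z₀ _ (fun j hj => hag j (lt_trans hj hlt))]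
        exact hm
      · rw [heq]; exact tau_le z₀ n ω'
    · rw [Set.mem_singleton_iff] at hm; rw [hm]; exact tau_le z₀ n ω'
  exact le_antisymm (step ω' ω (fun j hj => (hag j hj).symm)) (step ω ω' hag)

noncomputable def phiF (u : ℝ) : ℝ := Real.logb 2 (1 - Real.logb 2 u)

lemma drift' {z : ℝ} (h1 : 0 < z) (h2 : z ≤ 1/2) :
    2 * phiF z + Real.logb 2 (10/9) ≤
      phiF (min (z^2) (1 - z^2)) + phiF (min (2*z - z^2) (1 - (2*z - z^2))) := by
  have hz1 : min (z^2) (1 - z^2) = z^2 := min_eq_left (by nlinarith)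
  set w := min (2*z - z^2) (1 - (2*z - z^2)) with hw
  have hw2 : w ≤ 2*z := le_trans (min_le_left _ _) (by nlinarith)
  have hwhalf : w ≤ 1/2 := by
    rcases min_cases (2*z - z^2) (1 - (2*z - z^2)) with ⟨h,h'⟩|⟨h,h'⟩ <;> rw [hw, h] <;> linarith
  have hw0 : 0 < w := lt_min (by nlinarith) (by nlinarith)
  set L := -Real.logb 2 z with hL
  have hlogz : Real.logb 2 z = -L := by rw [hL]; ring
  have h12 : Real.logb 2 (1/2 : ℝ) = -1 := by
    rw [show (1/2 : ℝ) = 2⁻¹ by norm_num, Real.logb_inv, Real.logb_self_eq_one one_lt_two]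
  have hL1 : 1 ≤ L := by
    have h := Real.logb_le_logb_of_le one_lt_two h1 h2
    rw [h12] at h; rw [hL]; linarith
  have hphiz : phiF z = Real.logb 2 (1 + L) := by
    unfold phiF; rw [hlogz]; congr 1; ring
  have hphiz2 : phiF (z^2) = Real.logb 2 (1 + 2*L) := by
    unfold phiF; rw [Real.logb_pow, hlogz]; congr 1; ring
  have hlogw1 : Real.logb 2 w ≤ -1 := by
    have h := Real.logb_le_logb_of_le one_lt_two hw0 hwhalf
    rw [h12] at h; exact h
  have hlogw2 : Real.logb 2 w ≤ 1 - L := by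
    have h2z : Real.logb 2 (2*z) = 1 - L := by
      rw [Real.logb_mul two_ne_zero (ne_of_gt h1), Real.logb_self_eq_one one_lt_two, hlogz]; ring
    have h := Real.logb_le_logb_of_le one_lt_two hw0 hw2
    rw [h2z] at h; exact h
  have hmax : max 2 L ≤ 1 - Real.logb 2 w := max_le (by linarith) (by linarith)
  have hmaxpos : (0:ℝ) < max 2 L := lt_of_lt_of_le two_pos (le_max_left _ _)
  have hphiw : Real.logb 2 (max 2 L) ≤ phiF w :=
    Real.logb_le_logb_of_le one_lt_two hmaxpos hmax
  have hcore : Real.logb 2 ((10/9) * (1+L)^2) ≤ Real.logb 2 ((1+2*L) * max 2 L) := by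
    apply Real.logb_le_logb_of_le one_lt_two (by positivity)
    rcases le_total L 2 with h | h
    · rw [max_eq_left h]
      nlinarith [mul_nonneg (sub_nonneg.2 h) (by linarith : (0:ℝ) ≤ 5*L+2)]
    · rw [max_eq_right h]
      nlinarith [mul_nonneg (sub_nonneg.2 h) (by linarith : (0:ℝ) ≤ 8*L+5)]
  have hexp1 : Real.logb 2 ((10/9) * (1+L)^2) = Real.logb 2 (10/9) + 2 * Real.logb 2 (1+L) := by
    rw [Real.logb_mul (by norm_num) (by positivity), Real.logb_pow]; ring
  have hexp2 : Real.logb 2 ((1+2*L) * max 2 L) = Real.logb 2 (1+2*L) + Real.logb 2 (max 2 L) := by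
    rw [Real.logb_mul (by positivity) (ne_of_gt hmaxpos)]
  rw [hz1, hphiz, hphiz2]
  rw [hexp1, hexp2] at hcore
  linarith

lemma drift {z : ℝ} (h0 : 0 ≤ z) (h1 : z ≤ 1) (hy : 0 < min z (1 - z)) :
    2 * phiF (min z (1-z)) + Real.logb 2 (10/9) ≤
      phiF (min (z^2) (1 - z^2)) + phiF (min (2*z - z^2) (1 - (2*z - z^2))) := by
  rcases le_total z (1-z) with h | h
  · rw [min_eq_left h] at hy ⊢
    exact drift' hy (by linarith)
  · rw [min_eq_right h] at hy ⊢
    have hd := drift' (z := 1 - z) hy (by linarith)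
    have e1 : min ((1-z)^2) (1 - (1-z)^2) = min (2*z - z^2) (1 - (2*z - z^2)) := by
      rw [min_comm]; congr 1 <;> ring
    have e2 : min (2*(1-z) - (1-z)^2) (1 - (2*(1-z) - (1-z)^2)) = min (z^2) (1 - z^2) := by
      rw [min_comm]; congr 1 <;> ring
    rw [e1, e2] at hd
    linarith
def extb (n : ℕ) (v : Fin n → Bool) : ℕ → Bool :=
  fun i => if h : i < n then v ⟨i, h⟩ else false

def resb (n : ℕ) (ω : ℕ → Bool) : Fin n → Bool := fun i => ω i

lemma extb_resb (n : ℕ) (ω : ℕ → Bool) : ∀ j < n, extb n (resb n ω) j = ω j := by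
  intro j hj; simp [extb, resb, hj]

noncomputable def Mst (z₀ : ℝ) (n k : ℕ) (v : Fin n → Bool) : ℝ :=
  phiF (Yp z₀ (min (tau z₀ n (extb n v)) k) (extb n v))

def flipE (n : ℕ) (k : Fin n) : Equiv.Perm (Fin n → Bool) :=
  Function.Involutive.toPerm (fun v => Function.update v k (!(v k))) (by
    intro v; funext j
    rcases eq_or_ne j k with rfl | hj
    · simp
    · simp [Function.update_apply, hj])

lemma flipE_apply (n : ℕ) (k : Fin n) (v : Fin n → Bool) :
    flipE n k v = Function.update v k (!(v k)) := rfl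

lemma step_sum (z₀ : ℝ) (hz : z₀ ∈ Set.Icc (0:ℝ) 1) (n k : ℕ) (hk : k < n) :
    ∑ v : Fin n → Bool,
        (Mst z₀ n k v + (Real.logb 2 (10/9) / 2) *
          (if k < tau z₀ n (extb n v) then (1:ℝ) else 0))
      ≤ ∑ v : Fin n → Bool, Mst z₀ n (k+1) v := by
  set c2 := Real.logb 2 (10/9) / 2 with hc2
  set σ := flipE n ⟨k, hk⟩ with hσ
  have main : ∀ v : Fin n → Bool,
      (Mst z₀ n k v + c2 * (if k < tau z₀ n (extb n v) then (1:ℝ) else 0)) +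
      (Mst z₀ n k (σ v) + c2 * (if k < tau z₀ n (extb n (σ v)) then (1:ℝ) else 0)) ≤
      Mst z₀ n (k+1) v + Mst z₀ n (k+1) (σ v) := by
    intro v
    have hagree : ∀ j < k, extb n v j = extb n (σ v) j := by
      intro j hj
      have hjn : j < n := hj.trans hk
      simp only [extb, dif_pos hjn]
      rw [hσ, flipE_apply]
      exact (Function.update_of_ne (Fin.ne_of_val_ne (Nat.ne_of_lt hj)) _ _).symm
    by_cases hτ : k < tau z₀ n (extb n v)
    · -- active step
      have hτ' : k < tau z₀ n (extb n (σ v)) := tau_agree_gt hk hagree hτ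
      have hm1 : min (tau z₀ n (extb n v)) k = k := min_eq_right (le_of_lt hτ)
      have hm1' : min (tau z₀ n (extb n (σ v))) k = k := min_eq_right (le_of_lt hτ')
      have hm2 : min (tau z₀ n (extb n v)) (k+1) = k+1 := min_eq_right hτ
      have hm2' : min (tau z₀ n (extb n (σ v))) (k+1) = k+1 := min_eq_right hτ'
      have hYeq : Yp z₀ k (extb n (σ v)) = Yp z₀ k (extb n v) :=
        (Ycongr z₀ k hagree).symm
      have hy : thr n < Yp z₀ k (extb n v) := (lt_tau_iff hk _).1 hτ k le_rfl
      have hypos : 0 < Yp z₀ k (extb n v) := lt_trans (thr_pos n) hy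
      obtain ⟨hz0, hz1⟩ := Zmem z₀ hz k (extb n v)
      have hZeq : Zproc z₀ k (extb n (σ v)) = Zproc z₀ k (extb n v) :=
        (Zcongr z₀ k hagree).symm
      have hv1 : extb n v k = v ⟨k, hk⟩ := by simp [extb, hk]
      have hv2 : extb n (σ v) k = !(v ⟨k, hk⟩) := by
        simp [extb, hk, hσ, flipE_apply]
      set z := Zproc z₀ k (extb n v) with hzdef
      have hdr := drift (z := z) hz0 hz1 (by
        show 0 < min z (1 - z)
        exact hypos)
      have e1 : Yp z₀ (k+1) (extb n v) =
          (if v ⟨k, hk⟩ then min (z^2) (1 - z^2)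
            else min (2*z - z^2) (1 - (2*z - z^2))) := by
        unfold Yp
        simp only [Zproc, hv1, ← hzdef]
        cases v ⟨k, hk⟩ <;> simp
      have e2 : Yp z₀ (k+1) (extb n (σ v)) =
          (if v ⟨k, hk⟩ then min (2*z - z^2) (1 - (2*z - z^2))
            else min (z^2) (1 - z^2)) := by
        unfold Yp
        simp only [Zproc, hv2, hZeq, ← hzdef]
        cases v ⟨k, hk⟩ <;> simp
      unfold Mst
      rw [hm1, hm1', hm2, hm2', if_pos hτ, if_pos hτ', hYeq, e1, e2]
      have hphiY : phiF (min z (1 - z)) = phiF (Yp z₀ k (extb n v)) := rfl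
      cases v ⟨k, hk⟩ <;> simp only [if_true, if_false, Bool.false_eq_true] <;>
        · rw [← hphiY]; rw [hc2]; linarith
    · -- frozen step
      push_neg at hτ
      have hτeq : tau z₀ n (extb n (σ v)) = tau z₀ n (extb n v) :=
        tau_agree_le hk hagree hτ
      have hm1 : min (tau z₀ n (extb n v)) k = tau z₀ n (extb n v) := min_eq_left hτ
      have hm2 : min (tau z₀ n (extb n v)) (k+1) = tau z₀ n (extb n v) :=
        min_eq_left (le_trans hτ (Nat.le_succ k))
      unfold Mst
      rw [hτeq, hm1, hm2, if_neg (not_lt.2 hτ)]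
      have hYeq : Yp z₀ (tau z₀ n (extb n v)) (extb n (σ v)) =
          Yp z₀ (tau z₀ n (extb n v)) (extb n v) :=
        (Ycongr z₀ _ (fun j hj => hagree j (lt_of_lt_of_le hj hτ))).symm
      rw [hYeq]
      simp
  have hsum1 : ∀ F : (Fin n → Bool) → ℝ,
      ∑ v : Fin n → Bool, (F v + F (σ v)) = 2 * ∑ v : Fin n → Bool, F v := by
    intro F
    rw [Finset.sum_add_distrib, Equiv.sum_comp σ F]; ring
  have h1 := Finset.sum_le_sum (fun v (_ : v ∈ Finset.univ) => main v)
  rw [hsum1 (fun v => Mst z₀ n k v + c2 * (if k < tau z₀ n (extb n v) then (1:ℝ) else 0)),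
      hsum1 (fun v => Mst z₀ n (k+1) v)] at h1
  linarith

lemma telescope (z₀ : ℝ) (hz : z₀ ∈ Set.Icc (0:ℝ) 1) (n : ℕ) :
    ∀ k ≤ n,
      (∑ v : Fin n → Bool, Mst z₀ n 0 v) + (Real.logb 2 (10/9) / 2) *
        (∑ v : Fin n → Bool, ∑ j ∈ Finset.range k,
          (if j < tau z₀ n (extb n v) then (1:ℝ) else 0))
      ≤ ∑ v : Fin n → Bool, Mst z₀ n k v := by
  intro k
  induction k with
  | zero => intro _; simp
  | succ k ih =>
    intro hk1
    have hk : k < n := hk1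
    have ihh := ih (le_of_lt hk)
    have st := step_sum z₀ hz n k hk
    rw [Finset.sum_add_distrib, ← Finset.mul_sum] at st
    have hsplit : ∀ v : Fin n → Bool,
        ∑ j ∈ Finset.range (k+1), (if j < tau z₀ n (extb n v) then (1:ℝ) else 0)
        = (∑ j ∈ Finset.range k, (if j < tau z₀ n (extb n v) then (1:ℝ) else 0))
          + (if k < tau z₀ n (extb n v) then (1:ℝ) else 0) :=
      fun v => Finset.sum_range_succ _ k
    rw [Finset.sum_congr rfl (fun v _ => hsplit v), Finset.sum_add_distrib]
    have hc2 : (0:ℝ) < Real.logb 2 (10/9) / 2 := by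
      have : (0:ℝ) < Real.logb 2 (10/9) := Real.logb_pos one_lt_two (by norm_num)
      linarith
    nlinarith [st, ihh]

lemma ind_sum (n t : ℕ) (ht : t ≤ n) :
    ∑ j ∈ Finset.range n, (if j < t then (1:ℝ) else 0) = t := by
  rw [← Finset.sum_subset (Finset.range_subset_range.2 ht)
      (fun x _ hxt => if_neg (by simp at hxt ⊢; omega))]
  rw [Finset.sum_congr rfl (fun x hx => if_pos (Finset.mem_range.1 hx))]
  simp

lemma M0_nonneg (z₀ : ℝ) {n : ℕ} (h0 : thr n < min z₀ (1 - z₀)) :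
    0 ≤ phiF (min z₀ (1 - z₀)) := by
  have hy0 : 0 < min z₀ (1 - z₀) := lt_trans (thr_pos n) h0
  have hyh : min z₀ (1 - z₀) ≤ 1/2 := by
    rcases min_cases z₀ (1 - z₀) with ⟨h,h'⟩|⟨h,h'⟩ <;> rw [h] <;> linarith
  have hlog : Real.logb 2 (min z₀ (1 - z₀)) ≤ 0 :=
    (Real.logb_nonpos_iff one_lt_two hy0).2 (by linarith)
  exact Real.logb_nonneg one_lt_two (by linarith)

lemma Mtau_bound (z₀ : ℝ) (hz : z₀ ∈ Set.Icc (0:ℝ) 1) {n : ℕ} (hn : 2 ≤ n)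
    (h0 : thr n < min z₀ (1 - z₀)) (ω : ℕ → Bool) :
    phiF (Yp z₀ (tau z₀ n ω) ω) ≤ Real.logb 2 (1 + 12*(n:ℝ)/5) := by
  set t := tau z₀ n ω with htdef
  have ht_pos : 0 < t := by
    by_contra hc
    push_neg at hc
    have hmem := tau_mem z₀ n ω
    rw [← htdef] at hmem
    rcases hmem with hm | hm
    · have hY : Yp z₀ t ω ≤ thr n := hm
      have ht0 : t = 0 := by omega
      rw [ht0] at hY
      have hy0 : Yp z₀ 0 ω = min z₀ (1 - z₀) := rfl
      rw [hy0] at hY; linarith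
    · rw [Set.mem_singleton_iff] at hm; omega
  have hprev : thr n < Yp z₀ (t-1) ω := by
    have hnm : (t-1 : ℕ) ∉ ({i | Yp z₀ i ω ≤ thr n} ∪ {n} : Set ℕ) := by
      apply Nat.notMem_of_lt_sInf
      rw [← tau_eq, ← htdef]; omega
    by_contra hc
    push_neg at hc
    exact hnm (Or.inl hc)
  have hsq := Yp_sq_le z₀ hz (t-1) ω
  rw [show t - 1 + 1 = t by omega] at hsq
  have hYt : thr n ^ 2 < Yp z₀ t ω :=
    lt_of_lt_of_le (pow_lt_pow_left₀ hprev (le_of_lt (thr_pos n)) (by norm_num)) hsq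
  have hYpos : 0 < Yp z₀ t ω := lt_trans (pow_pos (thr_pos n) 2) hYt
  have hYhalf : Yp z₀ t ω ≤ 1/2 := Yp_le_half z₀ t ω
  have hlog1 : Real.logb 2 (thr n ^ 2) ≤ Real.logb 2 (Yp z₀ t ω) :=
    Real.logb_le_logb_of_le one_lt_two (pow_pos (thr_pos n) 2) (le_of_lt hYt)
  have hlog2 : Real.logb 2 (thr n ^ 2) = -(12*(n:ℝ)/5) := by
    rw [Real.logb_pow, logb_thr]; ring
  have hlognp : Real.logb 2 (Yp z₀ t ω) ≤ 0 :=
    (Real.logb_nonpos_iff one_lt_two hYpos).2 (by linarith)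
  unfold phiF
  apply Real.logb_le_logb_of_le one_lt_two (by linarith)
  rw [hlog2] at hlog1
  linarith


lemma integral_res (P : Measure (ℕ → Bool)) (hP : IsFairCoinMeasure P) (n : ℕ)
    (F : (Fin n → Bool) → ℝ) :
    ∫ ω, F (resb n ω) ∂P = ((2:ℝ)^n)⁻¹ * ∑ v : Fin n → Bool, F v := by
  obtain ⟨hprob, hindep, hmarg⟩ := hP
  haveI := hprob
  have hres : Measurable (resb n) :=
    measurable_pi_lambda _ (fun i => measurable_pi_apply _)
  have hcylm : ∀ v : Fin n → Bool, MeasurableSet (resb n ⁻¹' {v}) :=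
    fun v => hres (measurableSet_singleton v)
  have hcyl : ∀ v : Fin n → Bool, P (resb n ⁻¹' {v}) = ((1:ENNReal)/2)^n := by
    intro v
    have hEq : resb n ⁻¹' {v} =
        ⋂ i ∈ Finset.range n, (fun ω : ℕ → Bool => ω i) ⁻¹' {extb n v i} := by
      ext ω
      simp only [Set.mem_preimage, Set.mem_singleton_iff, Set.mem_iInter, Finset.mem_range]
      constructor
      · intro h i hi
        rw [← h]; simp [resb, extb, hi]
      · intro h
        funext i
        have hh := h i.1 i.2
        simpa [extb, resb, i.2] using hh
    rw [hEq, hindep.meas_biInter (fun i _ => ⟨{extb n v i}, trivial, rfl⟩)]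
    have hval : ∀ i ∈ Finset.range n,
        P ((fun ω : ℕ → Bool => ω i) ⁻¹' {extb n v i}) = (1:ENNReal)/2 := by
      intro i _
      have : ((fun ω : ℕ → Bool => ω i) ⁻¹' {extb n v i}) = {ω : ℕ → Bool | ω i = extb n v i} := rfl
      rw [this, hmarg i (extb n v i)]
    rw [Finset.prod_congr rfl hval, Finset.prod_const, Finset.card_range]
  have hrepr : ∀ ω, F (resb n ω) =
      ∑ v : Fin n → Bool, Set.indicator (resb n ⁻¹' {v}) (fun _ => F v) ω := by
    intro ω
    rw [Finset.sum_eq_single (resb n ω)]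
    · rw [Set.indicator_of_mem (by exact rfl)]
    · intro v _ hv
      apply Set.indicator_of_notMem
      simp only [Set.mem_preimage, Set.mem_singleton_iff]
      exact fun h => hv h.symm
    · intro h; exact absurd (Finset.mem_univ _) h
  rw [integral_congr_ae (Filter.Eventually.of_forall hrepr)]
  rw [integral_finset_sum _ (fun v _ => (integrable_const (F v)).indicator (hcylm v))]
  have : ∀ v : Fin n → Bool,
      ∫ ω, Set.indicator (resb n ⁻¹' {v}) (fun _ => F v) ω ∂P
        = ((1:ℝ)/2)^n * F v := by
    intro v
    rw [integral_indicator_const (F v) (hcylm v), measureReal_def, hcyl v]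
    rw [smul_eq_mul]
    congr 1
    rw [ENNReal.toReal_pow]
    norm_num
  rw [Finset.sum_congr rfl (fun v _ => this v), ← Finset.mul_sum]
  congr 1
  rw [one_div, inv_pow]



/-- For every z₀ ∈ [0,1] there is C > 0 with E[τ_n] ≤ C·log₂ n for every n ≥ 2. -/
theorem stmt7 (z₀ : ℝ) (hz : z₀ ∈ Set.Icc (0:ℝ) 1)
    (P : Measure (ℕ → Bool)) (hP : IsFairCoinMeasure P) :
    ∃ C : ℝ, 0 < C ∧ ∀ n : ℕ, 2 ≤ n →
      (∫ ω, (tau z₀ n ω : ℝ) ∂P) ≤ C * Real.logb 2 n := by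
  have hc : (0:ℝ) < Real.logb 2 (10/9) := Real.logb_pos one_lt_two (by norm_num)
  refine ⟨6 / Real.logb 2 (10/9), by positivity, ?_⟩
  intro n hn
  haveI : IsProbabilityMeasure P := hP.1
  have hn2 : (2:ℝ) ≤ (n:ℝ) := by exact_mod_cast hn
  have hlogn : 1 ≤ Real.logb 2 (n:ℝ) := by
    rw [show (1:ℝ) = Real.logb 2 2 from (Real.logb_self_eq_one one_lt_two).symm]
    exact Real.logb_le_logb_of_le one_lt_two (by norm_num) hn2
  by_cases h0 : min z₀ (1 - z₀) ≤ thr n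
  · -- trivial case: stopped at time 0
    have htz : ∀ ω : ℕ → Bool, tau z₀ n ω = 0 := by
      intro ω
      rw [tau_eq]
      apply Nat.sInf_eq_zero.2
      left
      left
      show Yp z₀ 0 ω ≤ thr n
      exact h0
    have : (∫ ω, (tau z₀ n ω : ℝ) ∂P) = 0 := by
      rw [integral_congr_ae (Filter.Eventually.of_forall
        (fun ω => by rw [htz ω]; norm_num : ∀ ω, (tau z₀ n ω : ℝ) = 0))]
      simp
    rw [this]
    positivity
  · push_neg at h0
    -- main case
    set c2 := Real.logb 2 (10/9) / 2 with hc2def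
    have hc2 : (0:ℝ) < c2 := by rw [hc2def]; linarith
    set S := ∑ v : Fin n → Bool, (tau z₀ n (extb n v) : ℝ) with hSdef
    have hint : (∫ ω, (tau z₀ n ω : ℝ) ∂P) = ((2:ℝ)^n)⁻¹ * S := by
      have hfac : ∀ ω, ((tau z₀ n ω : ℕ) : ℝ)
          = ((tau z₀ n (extb n (resb n ω)) : ℕ) : ℝ) := by
        intro ω
        have h := tau_congr (z₀ := z₀) (n := n)
          (fun j hj => (extb_resb n ω j hj).symm)
        exact congrArg (fun m : ℕ => (m:ℝ)) h
      calc (∫ ω, (tau z₀ n ω : ℝ) ∂P)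
          = ∫ ω, (fun v : Fin n → Bool => ((tau z₀ n (extb n v) : ℕ) : ℝ)) (resb n ω) ∂P :=
            integral_congr_ae (Filter.Eventually.of_forall hfac)
        _ = ((2:ℝ)^n)⁻¹ * ∑ v : Fin n → Bool, ((tau z₀ n (extb n v) : ℕ) : ℝ) :=
            integral_res P hP n (fun v : Fin n → Bool => ((tau z₀ n (extb n v) : ℕ) : ℝ))
        _ = ((2:ℝ)^n)⁻¹ * S := by rw [hSdef]
    have tele := telescope z₀ hz n n le_rfl
    have hsum_ind : (∑ v : Fin n → Bool, ∑ j ∈ Finset.range n,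
        (if j < tau z₀ n (extb n v) then (1:ℝ) else 0)) = S := by
      rw [hSdef]
      exact Finset.sum_congr rfl (fun v _ => ind_sum n _ (tau_le z₀ n (extb n v)))
    rw [hsum_ind] at tele
    -- bounds on the potential sums
    have hM0 : (0:ℝ) ≤ ∑ v : Fin n → Bool, Mst z₀ n 0 v := by
      apply Finset.sum_nonneg
      intro v _
      unfold Mst
      rw [Nat.min_zero]
      exact M0_nonneg z₀ h0
    have hcard : (Finset.univ : Finset (Fin n → Bool)).card = 2^n := by
      simp [Finset.card_univ]
    have hMn : (∑ v : Fin n → Bool, Mst z₀ n n v)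
        ≤ (2:ℝ)^n * Real.logb 2 (1 + 12*(n:ℝ)/5) := by
      calc (∑ v : Fin n → Bool, Mst z₀ n n v)
          ≤ ∑ _v : Fin n → Bool, Real.logb 2 (1 + 12*(n:ℝ)/5) := by
            apply Finset.sum_le_sum
            intro v _
            unfold Mst
            rw [min_eq_left (tau_le z₀ n (extb n v))]
            exact Mtau_bound z₀ hz hn h0 (extb n v)
        _ = (2:ℝ)^n * Real.logb 2 (1 + 12*(n:ℝ)/5) := by
            rw [Finset.sum_const, hcard]
            simp [nsmul_eq_mul]
    have hB : Real.logb 2 (1 + 12*(n:ℝ)/5) ≤ 3 * Real.logb 2 (n:ℝ) := by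
      have h3 : (1:ℝ) + 12*(n:ℝ)/5 ≤ (n:ℝ)^3 := by
        have h4 : (4:ℝ) ≤ (n:ℝ)^2 := by nlinarith
        have h5 := mul_le_mul_of_nonneg_right h4 (by linarith : (0:ℝ) ≤ (n:ℝ))
        have h6 : (n:ℝ)^2*(n:ℝ) = (n:ℝ)^3 := by ring
        linarith
      calc Real.logb 2 (1 + 12*(n:ℝ)/5) ≤ Real.logb 2 ((n:ℝ)^3) :=
            Real.logb_le_logb_of_le one_lt_two (by positivity) h3
        _ = 3 * Real.logb 2 (n:ℝ) := by rw [Real.logb_pow]; norm_num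
    have h2n : (0:ℝ) < 2^n := by positivity
    -- combine: c2 * S ≤ 2^n * 3 * logb n
    rw [← hc2def] at tele
    have hkey : c2 * S ≤ (2:ℝ)^n * (3 * Real.logb 2 (n:ℝ)) := by
      have := mul_le_mul_of_nonneg_left hB (le_of_lt h2n)
      linarith
    have h6 : (6 / Real.logb 2 (10/9) * Real.logb 2 (n:ℝ)) * c2
        = 3 * Real.logb 2 (n:ℝ) := by
      rw [hc2def]
      field_simp
      ring
    rw [hint, inv_mul_le_iff₀ h2n, ← mul_le_mul_iff_of_pos_right hc2]
    calc S * c2 = c2 * S := by ring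
      _ ≤ (2:ℝ)^n * (3 * Real.logb 2 (n:ℝ)) := hkey
      _ = (2:ℝ)^n * (6 / Real.logb 2 (10/9) * Real.logb 2 (n:ℝ)) * c2 := by
          rw [mul_assoc, h6]
end

section
/- For every z₀ ∈ [0,1] there exists a constant C > 0 such that for every integer n ≥ 1, ℙ{ Y_i > 2^(−6n/5) for every i with 0 ≤ i ≤ n } ≤ C·2^(−n/4), where Y_i := min(Z_i, 1 − Z_i). -/
open MeasureTheory ProbabilityTheory

set_option linter.deprecated false

section BECauxSec
open Real

namespace BECaux


lemma rpow23 (x : ℝ) (hx : 0 ≤ x) : x ^ ((2:ℝ)/3) = (x ^ ((1:ℝ)/3))^2 := by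
  rw [← Real.rpow_natCast (x ^ ((1:ℝ)/3)) 2, ← Real.rpow_mul hx]
  norm_num

lemma cube13 (x : ℝ) (hx : 0 ≤ x) : (x ^ ((1:ℝ)/3))^3 = x := by
  rw [← Real.rpow_natCast (x ^ ((1:ℝ)/3)) 3, ← Real.rpow_mul hx]
  norm_num

lemma cube23 (x : ℝ) (hx : 0 ≤ x) : (x ^ ((2:ℝ)/3))^3 = x^2 := by
  rw [← Real.rpow_natCast (x ^ ((2:ℝ)/3)) 3, ← Real.rpow_mul hx, ← Real.rpow_natCast x 2]
  norm_num

lemma cube_le_cube {x y : ℝ} (hx : 0 ≤ x) (hy : 0 ≤ y) (h : x^3 ≤ y^3) : x ≤ y := by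
  by_contra hc
  push_neg at hc
  have := pow_lt_pow_left₀ hc hy (by norm_num : (3:ℕ) ≠ 0)
  nlinarith

lemma core_ab {a b p : ℝ} (ha : 0 ≤ a) (hb : 0 ≤ b) (hp0 : 0 ≤ p) (hp4 : p ≤ 1/4)
    (hab : a^3 + b^3 = 2 - 2*p) (hprod : a^3 * b^3 = p*(2+p)) :
    a^2 + b^2 ≤ 42/25 := by
  have ht0 : 0 ≤ a*b := mul_nonneg ha hb
  have hR0 : (0:ℝ) ≤ 11588/15625 + 12*p - 2*p^2 := by nlinarith
  have key : (126:ℝ)/25 * (a*b)^2 ≤ 11588/15625 + 12*p - 2*p^2 := by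
    apply cube_le_cube (by positivity) hR0
    have e1 : (((126:ℝ)/25) * (a*b)^2)^3 = (126/25)^3 * (a^3*b^3)^2 := by ring
    rw [e1, hprod]
    nlinarith [hp0, hp4, sq_nonneg p, sq_nonneg (p - 1/8), sq_nonneg (p-1/4),
      mul_nonneg hp0 hp0, mul_nonneg (mul_nonneg hp0 hp0) hp0,
      mul_nonneg (mul_nonneg (mul_nonneg hp0 hp0) hp0) hp0,
      mul_nonneg hp0 (sub_nonneg.mpr hp4)]
  by_contra hcon
  push_neg at hcon
  have hq : (a^3)^2 + (b^3)^2 = 4 - 12*p + 2*p^2 := by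
    have e : (a^3)^2+(b^3)^2 = (a^3+b^3)^2 - 2*(a^3*b^3) := by ring
    rw [e, hab, hprod]; ring
  have hS3 : (a^2+b^2)^3 = (a^3)^2 + (b^3)^2 + 3*(a*b)^2*(a^2+b^2) := by ring
  have h2t : 2*(a*b) ≤ a^2+b^2 := by nlinarith [sq_nonneg (a-b)]
  have hfac : 0 < (a^2+b^2)^2 + (a^2+b^2)*(42/25) + (42/25)^2 - 3*(a*b)^2 := by
    nlinarith [h2t, ht0, hcon]
  nlinarith [mul_pos (sub_pos.2 hcon) hfac, hS3, hq, key, ht0]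

lemma midcore {z : ℝ} (h0 : 0 ≤ z) (h1 : z ≤ 1) :
    (z^2*(1-z^2)) ^ ((2:ℝ)/3) + ((2*z-z^2)*(1-(2*z-z^2))) ^ ((2:ℝ)/3)
      ≤ 42/25 * ((z*(1-z)) ^ ((2:ℝ)/3)) := by
  have hp0 : 0 ≤ z*(1-z) := mul_nonneg h0 (by linarith)
  have hp4 : z*(1-z) ≤ 1/4 := by nlinarith [sq_nonneg (1-2*z)]
  have ha0 : 0 ≤ z + z^2 := by nlinarith
  have hb0 : 0 ≤ 2 - 3*z + z^2 := by nlinarith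
  have e1 : z^2*(1-z^2) = (z*(1-z)) * (z + z^2) := by ring
  have e2 : (2*z-z^2)*(1-(2*z-z^2)) = (z*(1-z)) * (2 - 3*z + z^2) := by ring
  rw [e1, e2, Real.mul_rpow hp0 ha0, Real.mul_rpow hp0 hb0]
  have hcore : (z+z^2)^((2:ℝ)/3) + (2-3*z+z^2)^((2:ℝ)/3) ≤ 42/25 := by
    set a := (z+z^2)^((1:ℝ)/3) with hadef
    set b := (2-3*z+z^2)^((1:ℝ)/3) with hbdef
    have ha : 0 ≤ a := Real.rpow_nonneg ha0 _
    have hb : 0 ≤ b := Real.rpow_nonneg hb0 _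
    have ha3 : a^3 = z+z^2 := cube13 _ ha0
    have hb3 : b^3 = 2-3*z+z^2 := cube13 _ hb0
    rw [rpow23 _ ha0, rpow23 _ hb0, ← hadef, ← hbdef]
    exact core_ab ha hb hp0 hp4 (by rw [ha3, hb3]; ring) (by rw [ha3, hb3]; ring)
  have hP : 0 ≤ (z*(1-z))^((2:ℝ)/3) := Real.rpow_nonneg hp0 _
  nlinarith [mul_le_mul_of_nonneg_left hcore hP]



lemma logb_inv_le {z : ℝ} (hz : 0 < z) (m : ℕ) (h : 1/2^m ≤ z) :
    Real.logb 2 z⁻¹ ≤ m := by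
  rw [Real.logb_le_iff_le_rpow (by norm_num) (by positivity)]
  rw [Real.rpow_natCast]
  rw [one_div] at h
  calc z⁻¹ ≤ ((2:ℝ)^m)⁻¹⁻¹ := by
        apply inv_anti₀ (by positivity) h
    _ = 2^m := inv_inv _
lemma lt_logb_inv {z : ℝ} (hz : 0 < z) (m : ℕ) (h : z < 1/2^m) :
    (m:ℝ) < Real.logb 2 z⁻¹ := by
  rw [Real.lt_logb_iff_rpow_lt (by norm_num) (by positivity), Real.rpow_natCast]
  rw [one_div] at h
  calc (2:ℝ)^m = ((2^m : ℝ)⁻¹)⁻¹ := (inv_inv _).symm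
    _ < z⁻¹ := by apply inv_strictAnti₀ hz h
lemma le_logb_inv {z : ℝ} (hz : 0 < z) (m : ℕ) (h : z ≤ 1/2^m) :
    (m:ℝ) ≤ Real.logb 2 z⁻¹ := by
  rw [Real.le_logb_iff_rpow_le (by norm_num) (by positivity), Real.rpow_natCast]
  rw [one_div] at h
  calc (2:ℝ)^m = ((2^m : ℝ)⁻¹)⁻¹ := (inv_inv _).symm
    _ ≤ z⁻¹ := by apply inv_anti₀ hz h
lemma logb_inv_sq {z : ℝ} : Real.logb 2 ((z^2)⁻¹) = 2 * Real.logb 2 z⁻¹ := by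
  rw [← inv_pow, Real.logb_pow]
  norm_num
lemma z_eq_rpow {z : ℝ} (hz : 0 < z) : z = (2:ℝ)^(-(Real.logb 2 z⁻¹)) := by
  rw [Real.logb_inv, neg_neg, Real.rpow_logb (by norm_num) (by norm_num) hz]




lemma rpow_neg_nat (m : ℕ) : (2:ℝ)^(-(m:ℝ)) = ((2:ℝ)^m)⁻¹ := by
  rw [Real.rpow_neg (by norm_num), Real.rpow_natCast]

lemma caseC_k (u : ℝ) (k m : ℕ) (hku : (k:ℝ) ≤ u) (huk : u ≤ (k:ℝ)+1)
    (h3m : 2*(k+2) ≤ 3*m) (hk0 : 0 < k)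
    (hnum : (10:ℝ)^13 * 2^m ≤ 37/400 * (2*(k:ℝ))^12) :
    (10:ℝ)^13/(2*u)^12 ≤ 37/400 * (2:ℝ)^(-(2*(u+1))/3) := by
  have hkpos : (0:ℝ) < 2*(k:ℝ) := by positivity
  have hupos : (0:ℝ) < 2*u := by
    have : (1:ℝ) ≤ (k:ℝ) := by exact_mod_cast hk0
    linarith
  have h1 : (10:ℝ)^13/(2*u)^12 ≤ (10:ℝ)^13/(2*(k:ℝ))^12 := by
    gcongr <;> linarith
  have h2 : (2:ℝ)^(-(m:ℝ)) ≤ (2:ℝ)^(-(2*(u+1))/3) := by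
    apply Real.rpow_le_rpow_of_exponent_le (by norm_num)
    have : (2:ℝ)*((k:ℝ)+2) ≤ 3*(m:ℝ) := by exact_mod_cast h3m
    linarith
  have h3 : (10:ℝ)^13/(2*(k:ℝ))^12 ≤ 37/400 * (2:ℝ)^(-(m:ℝ)) := by
    rw [rpow_neg_nat, mul_comm ((37:ℝ)/400) _, ← div_eq_inv_mul, div_le_div_iff₀ (by positivity) (by positivity)]
    linarith [hnum]
  calc (10:ℝ)^13/(2*u)^12 ≤ (10:ℝ)^13/(2*(k:ℝ))^12 := h1
    _ ≤ 37/400 * (2:ℝ)^(-(m:ℝ)) := h3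
    _ ≤ 37/400 * (2:ℝ)^(-(2*(u+1))/3) := by nlinarith [h2]

lemma caseC_num {u : ℝ} (h15 : 15 ≤ u) (h30 : u ≤ 30) :
    (10:ℝ)^13 / (2*u)^12 ≤ 37/400 * (2:ℝ) ^ (-(2*(u+1))/3) := by
  obtain ⟨k, hk15, hk29, hku, huk⟩ :
      ∃ k : ℕ, 15 ≤ k ∧ k ≤ 29 ∧ (k:ℝ) ≤ u ∧ u ≤ (k:ℝ)+1 := by
    refine ⟨min 29 ⌊u⌋.toNat, ?_, min_le_left _ _, ?_, ?_⟩
    · have h1 : (15:ℤ) ≤ ⌊u⌋ := Int.le_floor.mpr (by exact_mod_cast h15)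
      have h2 : 15 ≤ ⌊u⌋.toNat := by omega
      omega
    · rcases le_or_gt ⌊u⌋.toNat 29 with h | h
      · rw [min_eq_right h]
        have h0 : (0:ℤ) ≤ ⌊u⌋ := by
          have : (15:ℤ) ≤ ⌊u⌋ := Int.le_floor.mpr (by exact_mod_cast h15)
          omega
        have : ((⌊u⌋.toNat : ℤ) : ℝ) ≤ u := by
          rw [Int.toNat_of_nonneg h0]; exact Int.floor_le u
        exact_mod_cast this
      · rw [min_eq_left (by omega)]
        have h1 : (30:ℤ) ≤ ⌊u⌋ := by omega
        have : ((30:ℤ):ℝ) ≤ u := le_trans (by exact_mod_cast h1) (Int.floor_le u)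
        push_cast at this ⊢
        linarith
    · rcases le_or_gt ⌊u⌋.toNat 29 with h | h
      · rw [min_eq_right h]
        have h0 : (0:ℤ) ≤ ⌊u⌋ := by
          have : (15:ℤ) ≤ ⌊u⌋ := Int.le_floor.mpr (by exact_mod_cast h15)
          omega
        have : u < ((⌊u⌋.toNat : ℤ) : ℝ) + 1 := by
          rw [Int.toNat_of_nonneg h0]; exact Int.lt_floor_add_one u
        have := le_of_lt this
        exact_mod_cast this
      · rw [min_eq_left (by omega)]; norm_num; linarith
  interval_cases k
  · exact caseC_k u 15 12 hku huk (by norm_num) (by norm_num) (by norm_num)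
  · exact caseC_k u 16 12 hku huk (by norm_num) (by norm_num) (by norm_num)
  · exact caseC_k u 17 13 hku huk (by norm_num) (by norm_num) (by norm_num)
  · exact caseC_k u 18 14 hku huk (by norm_num) (by norm_num) (by norm_num)
  · exact caseC_k u 19 14 hku huk (by norm_num) (by norm_num) (by norm_num)
  · exact caseC_k u 20 15 hku huk (by norm_num) (by norm_num) (by norm_num)
  · exact caseC_k u 21 16 hku huk (by norm_num) (by norm_num) (by norm_num)
  · exact caseC_k u 22 16 hku huk (by norm_num) (by norm_num) (by norm_num)
  · exact caseC_k u 23 17 hku huk (by norm_num) (by norm_num) (by norm_num)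
  · exact caseC_k u 24 18 hku huk (by norm_num) (by norm_num) (by norm_num)
  · exact caseC_k u 25 18 hku huk (by norm_num) (by norm_num) (by norm_num)
  · exact caseC_k u 26 19 hku huk (by norm_num) (by norm_num) (by norm_num)
  · exact caseC_k u 27 20 hku huk (by norm_num) (by norm_num) (by norm_num)
  · exact caseC_k u 28 20 hku huk (by norm_num) (by norm_num) (by norm_num)
  · exact caseC_k u 29 21 hku huk (by norm_num) (by norm_num) (by norm_num)



noncomputable def phi (z : ℝ) : ℝ :=
  if (1:ℝ)/2^30 ≤ min z (1 - z) then (z * (1 - z)) ^ ((2:ℝ)/3)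
  else (10:ℝ)^13 / (Real.logb 2 (min z (1 - z))⁻¹)^12

lemma phi_mid {z : ℝ} (h : (1:ℝ)/2^30 ≤ min z (1 - z)) :
    phi z = (z * (1 - z)) ^ ((2:ℝ)/3) := if_pos h
lemma phi_low {z : ℝ} (h : ¬ ((1:ℝ)/2^30 ≤ min z (1 - z))) :
    phi z = (10:ℝ)^13 / (Real.logb 2 (min z (1 - z))⁻¹)^12 := if_neg h
lemma min_eq_z {z : ℝ} (h : z ≤ 1/2) : min z (1 - z) = z := min_eq_left (by linarith)

def ext (n : ℕ) (s : Fin n → Bool) : ℕ → Bool :=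
  fun i => if h : i < n then s ⟨i, h⟩ else false

-- small arithmetic helpers (minimal context to keep nlinarith fast)
lemma haux_sq_le {z : ℝ} (h0 : 0 ≤ z) (h2 : z ≤ 1/2) : z^2 ≤ 1 - z^2 := by nlinarith
lemma haux_sq_lt {z c : ℝ} (h0 : 0 ≤ z) (hc : z < c) (hc1 : c ≤ 1) : z^2 < c := by nlinarith
lemma haux_one_sub_sq {z : ℝ} (h0 : 0 ≤ z) (h2 : z ≤ 1/2) : (3:ℝ)/4 ≤ 1 - z^2 := by nlinarith
lemma haux_z_le_w {z : ℝ} (h0 : 0 ≤ z) (h1 : z ≤ 1) : z ≤ 2*z - z^2 := by nlinarith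
lemma haux_w_le {z : ℝ} (h0 : 0 ≤ z) : 2*z - z^2 ≤ 2*z := by nlinarith
lemma haux_one_sub_w {z : ℝ} (h2 : z ≤ 1/2) : (1:ℝ)/4 ≤ 1 - (2*z - z^2) := by nlinarith
lemma haux_p0 {z : ℝ} (h0 : 0 ≤ z) (h1 : z ≤ 1) : 0 ≤ z*(1-z) := by nlinarith
lemma haux_b0 {z : ℝ} (h0 : 0 ≤ z) (h1 : z ≤ 1) : (0:ℝ) ≤ 2 - 3*z + z^2 := by nlinarith
lemma haux_b2 {z : ℝ} (h0 : 0 ≤ z) (h1 : z ≤ 1) : 2 - 3*z + z^2 ≤ 2 := by nlinarith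
lemma haux_zhalf_le_p {z : ℝ} (h0 : 0 ≤ z) (h2 : z ≤ 1/2) : z/2 ≤ z*(1-z) := by nlinarith
lemma haux_w_pos {z : ℝ} (h0 : 0 < z) (h1 : z ≤ 1) : 0 < 2*z - z^2 := by nlinarith
lemma haux_wp_le {w : ℝ} (h0 : 0 ≤ w) (h : w ≤ 1/2^29) : w*(1-w) ≤ 1/2^29 := by nlinarith

set_option maxHeartbeats 1000000 in
lemma phi_step_half {z : ℝ} (h0 : 0 ≤ z) (h2 : z ≤ 1/2) :
    phi (z^2) + phi (2*z - z^2) ≤ 42/25 * phi z := by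
  rcases eq_or_lt_of_le h0 with hz0 | hz0
  · rw [← hz0]
    norm_num [phi, Real.logb_zero]
  rcases le_or_gt ((1:ℝ)/2^15) z with hB | hBC
  · -- Case B : both children mid
    have h30le15 : (1:ℝ)/2^30 ≤ 1/2^15 := by norm_num
    have hhalf : (1:ℝ)/2^30 ≤ 1/2 := by norm_num
    have hm1 : (1:ℝ)/2^30 ≤ min z (1-z) :=
      le_min (le_trans h30le15 hB) (by linarith)
    have hm2 : (1:ℝ)/2^30 ≤ min (z^2) (1-z^2) := by
      apply le_min
      · calc (1:ℝ)/2^30 = (1/2^15)^2 := by norm_num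
          _ ≤ z^2 := pow_le_pow_left₀ (by norm_num) hB 2
      · linarith [haux_one_sub_sq h0 h2]
    have hm3 : (1:ℝ)/2^30 ≤ min (2*z-z^2) (1-(2*z-z^2)) := by
      apply le_min
      · linarith [haux_z_le_w h0 (by linarith : z ≤ 1), le_trans h30le15 hB]
      · linarith [haux_one_sub_w h2]
    rw [phi_mid hm1, phi_mid hm2, phi_mid hm3]
    exact midcore h0 (by linarith)
  rcases le_or_gt ((1:ℝ)/2^30) z with hC | hD
  · -- Case C : z in [2^-30, 2^-15), z² low, other child mid
    have hm1' : (1:ℝ)/2^30 ≤ z := hC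
    set u := Real.logb 2 z⁻¹ with hudef
    have h15 : (15:ℝ) ≤ u := by exact_mod_cast le_logb_inv hz0 15 (le_of_lt hBC)
    have h30 : u ≤ 30 := by exact_mod_cast logb_inv_le hz0 30 hC
    have hz15 : z ≤ 1/2 := by
      have : (1:ℝ)/2^15 ≤ 1/2 := by norm_num
      linarith
    have hm1 : (1:ℝ)/2^30 ≤ min z (1-z) := by rw [min_eq_z hz15]; exact hm1'
    have hsqlow : ¬ ((1:ℝ)/2^30 ≤ min (z^2) (1-z^2)) := by
      rw [min_eq_left (haux_sq_le h0 hz15)]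
      push_neg
      calc z^2 < (1/2^15)^2 := by
            apply pow_lt_pow_left₀ hBC h0 (by norm_num)
        _ = 1/2^30 := by norm_num
    have hm3 : (1:ℝ)/2^30 ≤ min (2*z-z^2) (1-(2*z-z^2)) := by
      apply le_min
      · linarith [haux_z_le_w h0 (by linarith : z ≤ 1)]
      · have : (1:ℝ)/2^30 ≤ 1/4 := by norm_num
        linarith [haux_one_sub_w hz15]
    rw [phi_mid hm1, phi_low hsqlow, phi_mid hm3]
    rw [min_eq_left (haux_sq_le h0 hz15), logb_inv_sq, ← hudef]
    -- term 2 bound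
    have hp0 : (0:ℝ) ≤ z*(1-z) := haux_p0 h0 (by linarith)
    have hP : (0:ℝ) ≤ (z*(1-z))^((2:ℝ)/3) := Real.rpow_nonneg hp0 _
    have hterm2 : ((2*z-z^2)*(1-(2*z-z^2)))^((2:ℝ)/3) ≤ 127/80 * (z*(1-z))^((2:ℝ)/3) := by
      have e2 : (2*z-z^2)*(1-(2*z-z^2)) = (z*(1-z)) * (2 - 3*z + z^2) := by ring
      have hb0 : (0:ℝ) ≤ 2 - 3*z + z^2 := haux_b0 h0 (by linarith)
      rw [e2, Real.mul_rpow hp0 hb0]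
      have hA : (2 - 3*z + z^2)^((2:ℝ)/3) ≤ 127/80 := by
        apply cube_le_cube (Real.rpow_nonneg hb0 _) (by norm_num)
        rw [cube23 _ hb0]
        have := haux_b2 h0 (by linarith : z ≤ 1)
        nlinarith [hb0, this]
      have := Real.rpow_nonneg hb0 ((2:ℝ)/3)
      nlinarith [hA, hP, this]
    have hterm1 : (10:ℝ)^13 / (2*u)^12 ≤ 37/400 * (z*(1-z))^((2:ℝ)/3) := by
      have step0 : (10:ℝ)^13 / (2*u)^12 ≤ 37/400 * (2:ℝ) ^ (-(2*(u+1))/3) :=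
        caseC_num h15 h30
      have hz2 : z/2 = (2:ℝ)^(-(u+1)) := by
        rw [show -(u+1) = -u - 1 by ring, Real.rpow_sub (by norm_num), Real.rpow_one,
          ← z_eq_rpow hz0]
      have e3 : (2:ℝ) ^ (-(2*(u+1))/3) = (z/2)^((2:ℝ)/3) := by
        rw [hz2, ← Real.rpow_mul (by norm_num : (0:ℝ) ≤ 2)]
        congr 1
        ring
      have e4 : (z/2)^((2:ℝ)/3) ≤ (z*(1-z))^((2:ℝ)/3) := by
        apply Real.rpow_le_rpow (by linarith) (haux_zhalf_le_p h0 hz15) (by norm_num)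
      rw [e3] at step0
      linarith [step0, e4]
    linarith [hterm1, hterm2, hP]
  · -- Case D : z < 2^-30 low
    set u := Real.logb 2 z⁻¹ with hudef
    have hu30 : (30:ℝ) < u := by exact_mod_cast lt_logb_inv hz0 30 hD
    have hlowz : ¬ ((1:ℝ)/2^30 ≤ min z (1-z)) := by
      rw [min_eq_z (by linarith)]; push_neg; exact hD
    have hzhalf : z ≤ 1/2 := by
      have : (1:ℝ)/2^30 ≤ 1/2 := by norm_num
      linarith
    have hlowsq : ¬ ((1:ℝ)/2^30 ≤ min (z^2) (1-z^2)) := by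
      rw [min_eq_left (haux_sq_le h0 hzhalf)]; push_neg
      exact haux_sq_lt h0 hD (by norm_num)
    rw [phi_low hlowz, phi_low hlowsq, min_eq_z hzhalf,
      min_eq_left (haux_sq_le h0 hzhalf), logb_inv_sq, ← hudef]
    have hupos : (0:ℝ) < u := by linarith
    have hXpos : (0:ℝ) < (10:ℝ)^13 / u^12 := by positivity
    have hsq : (10:ℝ)^13 / (2*u)^12 = (1/4096) * ((10:ℝ)^13 / u^12) := by
      rw [show (2*u)^12 = 4096 * u^12 by ring]
      field_simp
    set w := 2*z - z^2 with hwdef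
    have hw0 : 0 < w := haux_w_pos hz0 (by linarith)
    have hwz : z ≤ w := haux_z_le_w h0 (by linarith)
    have hw2z : w ≤ 2*z := haux_w_le h0
    have hwhalf : w ≤ 1/2 := by
      have : (1:ℝ)/2^30 ≤ 1/8 := by norm_num
      linarith
    rcases le_or_gt ((1:ℝ)/2^30) w with hD1 | hD2
    · -- child w is mid
      have hm3 : (1:ℝ)/2^30 ≤ min w (1-w) := by
        rw [min_eq_z hwhalf]; exact hD1
      rw [phi_mid hm3]
      have hu31 : u ≤ 31 := by
        have h29 : (1:ℝ)/2^30 ≤ 2*z := by linarith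
        have : (1:ℝ)/2^31 ≤ z := by linarith
        exact_mod_cast logb_inv_le hz0 31 this
      have hX31 : (10:ℝ)^13 / 31^12 ≤ (10:ℝ)^13 / u^12 := by
        gcongr <;> first | linarith | norm_num
      have hwp0 : (0:ℝ) ≤ w*(1-w) := mul_nonneg hw0.le (by linarith)
      have hterm2 : (w*(1-w))^((2:ℝ)/3) ≤ (42/25 - 1/4096) * ((10:ℝ)^13 / 31^12) := by
        apply cube_le_cube (Real.rpow_nonneg hwp0 _) (by positivity)
        rw [cube23 _ hwp0]
        have hw29 : w ≤ 1/2^29 := by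
          have : (2:ℝ)*z ≤ 2/2^30 := by linarith
          have e : (2:ℝ)/2^30 = 1/2^29 := by norm_num
          linarith
        have hwle : w*(1-w) ≤ 1/2^29 := haux_wp_le hw0.le hw29
        have h1 : (w*(1-w))^2 ≤ (1/2^29)^2 := pow_le_pow_left₀ hwp0 hwle 2
        calc (w*(1-w))^2 ≤ (1/2^29)^2 := h1
          _ ≤ ((42/25 - 1/4096) * ((10:ℝ)^13 / 31^12))^3 := by norm_num
      rw [hsq]
      linarith [hterm2, hX31, hXpos]
    · -- child w is low
      have hlom3 : ¬ ((1:ℝ)/2^30 ≤ min w (1-w)) := by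
        rw [min_eq_z hwhalf]; push_neg; exact hD2
      rw [phi_low hlom3, min_eq_z hwhalf]
      set v := Real.logb 2 w⁻¹ with hvdef
      have hv : u - 1 ≤ v := by
        have h2z : Real.logb 2 (2*z)⁻¹ = u - 1 := by
          rw [mul_inv, Real.logb_mul (by norm_num) (by positivity), Real.logb_inv,
            Real.logb_self_eq_one (by norm_num), hudef]
          ring
        rw [hvdef, ← h2z]
        apply Real.logb_le_logb_of_le (by norm_num) (by positivity)
        apply inv_anti₀ hw0 hw2z
      have hv0 : (0:ℝ) < u - 1 := by linarith
      have hterm2 : (10:ℝ)^13 / v^12 ≤ (10:ℝ)^13 / (u-1)^12 := by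
        gcongr <;> first | exact hv0 | exact hv | norm_num
      have hkey : (10:ℝ)^13 / (u-1)^12 ≤ (42/25 - 1/4096) * ((10:ℝ)^13 / u^12) := by
        rw [div_le_iff₀ (by positivity), mul_comm ((42:ℝ)/25 - 1/4096) _, mul_assoc,
          div_mul_eq_mul_div, le_div_iff₀ (by positivity)]
        have h1 : u ≤ (30/29) * (u-1) := by linarith
        have h2 : u^12 ≤ ((30/29) * (u-1))^12 :=
          pow_le_pow_left₀ (by linarith) h1 12
        have h3 : ((30/29) * (u-1))^12 = (30/29)^12 * (u-1)^12 := by ring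
        have h4 : ((30:ℝ)/29)^12 ≤ 42/25 - 1/4096 := by norm_num
        have h5 : (0:ℝ) ≤ (u-1)^12 := by positivity
        calc (10:ℝ)^13 * u^12 ≤ (10:ℝ)^13 * ((30/29)^12 * (u-1)^12) := by
              rw [← h3]; exact mul_le_mul_of_nonneg_left h2 (by positivity)
          _ ≤ (10:ℝ)^13 * ((42/25 - 1/4096) * (u-1)^12) := by
              apply mul_le_mul_of_nonneg_left _ (by positivity)
              exact mul_le_mul_of_nonneg_right h4 h5
          _ = (u-1)^12 * ((42/25 - 1/4096) * 10^13) := by ring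
          _ ≤ 10^13 * ((42/25 - 1/4096) * (u-1)^12) := le_of_eq (by ring)
      rw [hsq]
      linarith [hterm2, hkey, hXpos]


lemma phi_comm (z : ℝ) : phi (1 - z) = phi z := by
  unfold phi
  rw [sub_sub_cancel, min_comm (1-z) z, mul_comm (1-z) z]

lemma phi_step {z : ℝ} (h0 : 0 ≤ z) (h1 : z ≤ 1) :
    phi (z^2) + phi (2*z - z^2) ≤ 42/25 * phi z := by
  rcases le_or_gt z (1/2) with h | h
  · exact phi_step_half h0 h
  · have e1 : z^2 = 1 - (2*(1-z) - (1-z)^2) := by ring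
    have e2 : 2*z - z^2 = 1 - (1-z)^2 := by ring
    rw [e2, e1, phi_comm, phi_comm, ← phi_comm z]
    have := phi_step_half (z := 1-z) (by linarith) (by linarith)
    linarith [this]




variable {z₀ : ℝ}

lemma Zproc_mem (hz : z₀ ∈ Set.Icc (0:ℝ) 1) (ω : ℕ → Bool) :
    ∀ i, Zproc z₀ i ω ∈ Set.Icc (0:ℝ) 1 := by
  intro i
  induction i with
  | zero => exact hz
  | succ n ih =>
    obtain ⟨ih0, ih1⟩ := ih
    show (if ω n then (Zproc z₀ n ω)^2 else 2 * Zproc z₀ n ω - (Zproc z₀ n ω)^2) ∈ _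
    split
    · constructor <;> nlinarith
    · constructor <;> nlinarith

lemma Zproc_congr {ω ω' : ℕ → Bool} : ∀ {k}, (∀ j, j < k → ω j = ω' j) →
    Zproc z₀ k ω = Zproc z₀ k ω' := by
  intro k
  induction k with
  | zero => intro _; rfl
  | succ n ih =>
    intro h
    have hn : ω n = ω' n := h n (Nat.lt_succ_self n)
    have he : Zproc z₀ n ω = Zproc z₀ n ω' := ih (fun j hj => h j (Nat.lt_succ_of_lt hj))
    show (if ω n then (Zproc z₀ n ω)^2 else _) = (if ω' n then (Zproc z₀ n ω')^2 else _)
    rw [hn, he]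


lemma sum_phi_le (hz : z₀ ∈ Set.Icc (0:ℝ) 1) :
    ∀ n : ℕ, (∑ s : Fin n → Bool, BECaux.phi (Zproc z₀ n (ext n s)))
      ≤ (42/25)^n * BECaux.phi z₀ := by
  intro n
  induction n with
  | zero =>
    simp [Zproc]
  | succ n ih =>
    have key : (∑ s : Fin (n+1) → Bool, phi (Zproc z₀ (n+1) (ext (n+1) s)))
        = ∑ p : Bool × (Fin n → Bool),
            phi (Zproc z₀ (n+1) (ext (n+1) (Fin.snoc p.2 p.1))) := by
      apply Fintype.sum_equiv (Fin.snocEquiv (fun _ => Bool)).symm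
      intro s
      exact congrArg (fun t => phi (Zproc z₀ (n+1) (ext (n+1) t)))
        ((Fin.snocEquiv (fun _ => Bool)).apply_symm_apply s).symm
    rw [key, Fintype.sum_prod_type_right]
    have hpt : ∀ (t : Fin n → Bool) (b : Bool),
        Zproc z₀ (n+1) (ext (n+1) (Fin.snoc t b))
          = (if b then (Zproc z₀ n (ext n t))^2
              else 2 * Zproc z₀ n (ext n t) - (Zproc z₀ n (ext n t))^2) := by
      intro t b
      have hagree : ∀ j, j < n → ext (n+1) (Fin.snoc t b) j = ext n t j := by
        intro j hj
        simp only [ext, dif_pos hj, dif_pos (Nat.lt_succ_of_lt hj)]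
        have : (⟨j, Nat.lt_succ_of_lt hj⟩ : Fin (n+1)) = Fin.castSucc ⟨j, hj⟩ := rfl
        rw [this, Fin.snoc_castSucc]
      have hn : ext (n+1) (Fin.snoc t b) n = b := by
        simp only [ext, dif_pos (Nat.lt_succ_self n)]
        have : (⟨n, Nat.lt_succ_self n⟩ : Fin (n+1)) = Fin.last n := rfl
        rw [this, Fin.snoc_last]
      show (if ext (n+1) (Fin.snoc t b) n then _ else _) = _
      rw [hn, Zproc_congr hagree]
    calc (∑ t : Fin n → Bool, ∑ b : Bool, phi (Zproc z₀ (n+1) (ext (n+1) (Fin.snoc t b))))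
        = ∑ t : Fin n → Bool,
            (phi ((Zproc z₀ n (ext n t))^2)
             + phi (2 * Zproc z₀ n (ext n t) - (Zproc z₀ n (ext n t))^2)) := by
          apply Finset.sum_congr rfl
          intro t _
          rw [Fintype.sum_bool, hpt t true, hpt t false]
          simp
      _ ≤ ∑ t : Fin n → Bool, (42/25) * phi (Zproc z₀ n (ext n t)) := by
          apply Finset.sum_le_sum
          intro t _
          obtain ⟨ha, hb⟩ := Zproc_mem hz (ext n t) n
          exact phi_step ha hb
      _ = (42/25) * ∑ t : Fin n → Bool, phi (Zproc z₀ n (ext n t)) := by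
          rw [Finset.mul_sum]
      _ ≤ (42/25) * ((42/25)^n * phi z₀) := by
          apply mul_le_mul_of_nonneg_left ih (by norm_num)
      _ = (42/25)^(n+1) * phi z₀ := by ring


lemma phi_nonneg (z : ℝ) : 0 ≤ phi z := by
  unfold phi
  split
  · rename_i h
    have h2 : (0:ℝ) < min z (1-z) := lt_of_lt_of_le (by norm_num) h
    have := lt_min_iff.mp h2
    have : 0 ≤ z * (1-z) := by nlinarith [this.1, this.2]
    exact Real.rpow_nonneg this _
  · positivity

lemma phi_le_one {z : ℝ} (h0 : 0 ≤ z) (h1 : z ≤ 1) : phi z ≤ 1 := by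
  have hm0 : 0 ≤ min z (1-z) := le_min h0 (by linarith)
  unfold phi
  split
  · rename_i h
    apply Real.rpow_le_one (by nlinarith [min_le_left z (1-z), min_le_right z (1-z)])
      (by nlinarith) (by norm_num)
  · rename_i h
    push_neg at h
    rcases eq_or_lt_of_le hm0 with he | hpos
    · rw [← he]
      norm_num [Real.logb_zero]
    · have hu : (30:ℝ) < Real.logb 2 (min z (1-z))⁻¹ := lt_logb_inv hpos 30 h
      have h30 : ((10:ℝ)^13) / (Real.logb 2 (min z (1-z))⁻¹)^12 ≤ 10^13 / 30^12 := by
        gcongr <;> first | linarith | norm_num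
      have : (10:ℝ)^13/30^12 ≤ 1 := by norm_num
      linarith

lemma min_mul_eq {z : ℝ} : z * (1 - z) = min z (1-z) * (1 - min z (1-z)) := by
  rcases min_cases z (1-z) with ⟨h1, _⟩ | ⟨h1, _⟩ <;> rw [h1] <;> ring

lemma phi_ge {n : ℕ} (hn : 1 ≤ n) {z : ℝ} (h0 : 0 ≤ z) (h1 : z ≤ 1)
    (h : (2:ℝ)^(-(6*(n:ℝ)/5)) < min z (1-z)) :
    (10:ℝ)^13 / (42+2*(n:ℝ))^12 ≤ phi z := by
  have hm0 : (0:ℝ) < min z (1-z) :=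
    lt_trans (Real.rpow_pos_of_pos (by norm_num) _) h
  have hmhalf : min z (1-z) ≤ 1/2 := by
    have := min_le_left z (1-z); have := min_le_right z (1-z); linarith
  have hnR : (1:ℝ) ≤ (n:ℝ) := by exact_mod_cast hn
  have h44 : (44:ℝ) ≤ 42+2*(n:ℝ) := by linarith
  unfold phi
  split
  · rename_i hb
    -- mid branch
    have hp : (1:ℝ)/2^31 ≤ z * (1-z) := by
      rw [min_mul_eq]
      calc (1:ℝ)/2^31 = (1/2^30) * (1/2) := by norm_num
        _ ≤ min z (1-z) * (1 - min z (1-z)) := by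
            apply mul_le_mul hb (by linarith) (by norm_num) (by linarith)
    have hstep : (1:ℝ)/2^21 ≤ (z*(1-z))^((2:ℝ)/3) := by
      have hq0 : (0:ℝ) ≤ z*(1-z) := by positivity
      apply cube_le_cube (by norm_num) (Real.rpow_nonneg hq0 _)
      rw [cube23 _ hq0]
      calc ((1:ℝ)/2^21)^3 = 1/2^63 := by norm_num
        _ ≤ (1/2^31)^2 := by norm_num
        _ ≤ (z*(1-z))^2 := by
            apply pow_le_pow_left₀ (by norm_num) hp
    have hC : (10:ℝ)^13/(42+2*(n:ℝ))^12 ≤ 1/2^21 := by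
      rw [div_le_div_iff₀ (by positivity) (by norm_num)]
      calc (10:ℝ)^13 * 2^21 ≤ 44^12 * 1 := by norm_num
        _ ≤ (42+2*(n:ℝ))^12 * 1 := by
            rw [mul_one, mul_one]
            exact pow_le_pow_left₀ (by norm_num) h44 12
        _ = 1 * (42+2*(n:ℝ))^12 := by ring
    linarith
  · rename_i hb
    -- low branch
    set m := min z (1-z) with hmdef
    set u := Real.logb 2 m⁻¹ with hudef
    have hu30 : (30:ℝ) < u := by
      push_neg at hb
      exact lt_logb_inv hm0 30 hb
    have huup : u < 6*(n:ℝ)/5 := by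
      have hinv : m⁻¹ < ((2:ℝ)^(-(6*(n:ℝ)/5)))⁻¹ := by
        apply inv_strictAnti₀ (Real.rpow_pos_of_pos (by norm_num) _) h
      have : ((2:ℝ)^(-(6*(n:ℝ)/5)))⁻¹ = (2:ℝ)^(6*(n:ℝ)/5) := by
        rw [Real.rpow_neg (by norm_num), inv_inv]
      rw [this] at hinv
      calc u < Real.logb 2 ((2:ℝ)^(6*(n:ℝ)/5)) := by
            apply Real.logb_lt_logb (by norm_num) (by positivity) hinv
        _ = 6*(n:ℝ)/5 := Real.logb_rpow (by norm_num) (by norm_num)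
    have hule : u ≤ 42+2*(n:ℝ) := by linarith
    gcongr <;> first | linarith | norm_num

lemma pow4_le {x y : ℝ} (hx : 0 ≤ x) (hy : 0 ≤ y) (h : x^4 ≤ y^4) : x ≤ y := by
  by_contra hc; push_neg at hc
  have := pow_lt_pow_left₀ hc hy (by norm_num : (4:ℕ) ≠ 0); nlinarith

lemma final_num (n : ℕ) (hn : 1 ≤ n) :
    (21/25:ℝ)^n * (42+2*(n:ℝ))^12 / 10^13
      ≤ ((44:ℝ)^12 * 13000^12 / 10^13) * (2:ℝ)^(-(n:ℝ)/4) := by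
  have hnR : (1:ℝ) ≤ (n:ℝ) := by exact_mod_cast hn
  have h1 : (42+2*(n:ℝ)) ≤ 44*(n:ℝ) := by linarith
  have h2 : (n:ℝ) ≤ 13000 * (13001/13000)^n := by
    have hb : (1:ℝ) + (n:ℕ) * (1/13000) ≤ (1 + 1/13000)^n := by
      apply one_add_mul_le_pow (by norm_num)
    have e : ((1:ℝ) + 1/13000) = 13001/13000 := by norm_num
    rw [e] at hb
    have : (n:ℝ) * (1/13000) ≤ (13001/13000:ℝ)^n := by linarith
    linarith [this]
  have h3 : (42+2*(n:ℝ))^12 ≤ 44^12 * 13000^12 * ((1051/1050:ℝ))^n := by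
    calc (42+2*(n:ℝ))^12 ≤ (44*(n:ℝ))^12 :=
          pow_le_pow_left₀ (by linarith) h1 12
      _ ≤ (44*(13000 * (13001/13000)^n))^12 := by
          apply pow_le_pow_left₀ (by positivity)
          have : (0:ℝ) ≤ 44 := by norm_num
          nlinarith [h2]
      _ = 44^12 * 13000^12 * (((13001/13000:ℝ)^12))^n := by
          rw [← pow_mul, mul_comm 12 n, pow_mul]
          ring
      _ ≤ 44^12 * 13000^12 * ((1051/1050:ℝ))^n := by
          apply mul_le_mul_of_nonneg_left _ (by positivity)
          apply pow_le_pow_left₀ (by positivity)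
          norm_num
  have h6 : ((8408:ℝ)/10000)^n ≤ ((2:ℝ)^(-(1/4:ℝ)))^n := by
    apply pow_le_pow_left₀ (by norm_num)
    apply pow4_le (by norm_num) (Real.rpow_nonneg (by norm_num) _)
    · have : (((2:ℝ)^(-(1/4:ℝ)))^4) = 2⁻¹ := by
        rw [← Real.rpow_natCast ((2:ℝ)^(-(1/4:ℝ))) 4, ← Real.rpow_mul (by norm_num)]
        norm_num
      rw [this]
      norm_num
  have h7 : ((2:ℝ)^(-(1/4:ℝ)))^n = (2:ℝ)^(-(n:ℝ)/4) := by
    rw [← Real.rpow_natCast ((2:ℝ)^(-(1/4:ℝ))) n, ← Real.rpow_mul (by norm_num)]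
    congr 1
    ring
  have h5 : ((21:ℝ)/25)^n * ((1051/1050:ℝ))^n = ((8408:ℝ)/10000)^n := by
    rw [← mul_pow]
    norm_num
  have hpos : (0:ℝ) < (21/25:ℝ)^n := by positivity
  calc (21/25:ℝ)^n * (42+2*(n:ℝ))^12 / 10^13
      ≤ (21/25:ℝ)^n * (44^12 * 13000^12 * ((1051/1050:ℝ))^n) / 10^13 := by
        gcongr
    _ = (44^12 * 13000^12 / 10^13) * ((21/25:ℝ)^n * ((1051/1050:ℝ))^n) := by ring
    _ = (44^12 * 13000^12 / 10^13) * ((8408:ℝ)/10000)^n := by rw [h5]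
    _ ≤ (44^12 * 13000^12 / 10^13) * ((2:ℝ)^(-(1/4:ℝ)))^n := by
        apply mul_le_mul_of_nonneg_left h6 (by positivity)
    _ = (44^12 * 13000^12 / 10^13) * (2:ℝ)^(-(n:ℝ)/4) := by rw [h7]


end BECaux
end BECauxSec

open BECaux in
/-- For every z₀ ∈ [0,1] there is C > 0 such that for every n ≥ 1,
ℙ{ Y_i > 2^(−6n/5) for all 0 ≤ i ≤ n } ≤ C·2^(−n/4), with Y_i = min(Z_i, 1 − Z_i). -/
theorem stmt9 (z₀ : ℝ) (hz : z₀ ∈ Set.Icc (0:ℝ) 1)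
    (P : Measure (ℕ → Bool)) (hP : IsFairCoinMeasure P) :
    ∃ C : ℝ, 0 < C ∧ ∀ n : ℕ, 1 ≤ n →
      (P {ω | ∀ i : ℕ, i ≤ n →
          (2:ℝ) ^ (-(6 * (n:ℝ) / 5)) < min (Zproc z₀ i ω) (1 - Zproc z₀ i ω)}).toReal
        ≤ C * (2:ℝ) ^ (-(n:ℝ) / 4) := by
  classical
  obtain ⟨hprob, hind, hhalf⟩ := hP
  refine ⟨(44:ℝ)^12 * 13000^12 / 10^13, by positivity, ?_⟩
  intro n hn
  set E := {ω : ℕ → Bool | ∀ i : ℕ, i ≤ n →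
      (2:ℝ) ^ (-(6 * (n:ℝ) / 5)) < min (Zproc z₀ i ω) (1 - Zproc z₀ i ω)} with hEdef
  set T : Finset (Fin n → Bool) := Finset.univ.filter (fun s => ∀ i : ℕ, i ≤ n →
      (2:ℝ) ^ (-(6 * (n:ℝ) / 5)) < min (Zproc z₀ i (ext n s)) (1 - Zproc z₀ i (ext n s)))
    with hTdef
  -- cylinder sets
  set Cyl : (Fin n → Bool) → Set (ℕ → Bool) :=
    fun s => ⋂ i ∈ Finset.range n, (fun ω : ℕ → Bool => ω i) ⁻¹' {ext n s i} with hCyl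
  have hcylmeas : ∀ s, P (Cyl s) = (1/2 : ENNReal)^n := by
    intro s
    have hone : ∀ i ∈ Finset.range n,
        P ((fun ω : ℕ → Bool => ω i) ⁻¹' {ext n s i}) = (1/2 : ENNReal) := by
      intro i _
      have he : ((fun ω : ℕ → Bool => ω i) ⁻¹' {ext n s i})
          = {ω : ℕ → Bool | ω i = ext n s i} := rfl
      rw [he, hhalf i (ext n s i)]
    calc P (Cyl s)
        = ∏ i ∈ Finset.range n, P ((fun ω : ℕ → Bool => ω i) ⁻¹' {ext n s i}) := by
          rw [hCyl]
          exact hind.measure_inter_preimage_eq_mul (Finset.range n)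
            (sets := fun i => ({ext n s i} : Set Bool)) (fun i _ => trivial)
      _ = ∏ _i ∈ Finset.range n, (1/2 : ENNReal) := Finset.prod_congr rfl hone
      _ = (1/2 : ENNReal)^n := by rw [Finset.prod_const, Finset.card_range]
  have hsub : E ⊆ ⋃ s ∈ T, Cyl s := by
    intro ω hω
    have hmem : (fun i : Fin n => ω i) ∈ T := by
      rw [hTdef, Finset.mem_filter]
      refine ⟨Finset.mem_univ _, fun i hi => ?_⟩
      have hagree : ∀ j, j < i → ext n (fun k : Fin n => ω k) j = ω j := by
        intro j hj
        have hjn : j < n := lt_of_lt_of_le hj hi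
        simp [ext, dif_pos hjn]
      rw [Zproc_congr hagree]
      exact hω i hi
    apply Set.mem_biUnion hmem
    rw [hCyl]
    simp only [Set.mem_iInter, Set.mem_preimage, Set.mem_singleton_iff]
    intro i hi
    rw [Finset.mem_range] at hi
    simp [ext, dif_pos hi]
  have hPle : P E ≤ (T.card : ENNReal) * (1/2)^n := by
    calc P E ≤ P (⋃ s ∈ T, Cyl s) := measure_mono hsub
      _ ≤ ∑ s ∈ T, P (Cyl s) := measure_biUnion_finset_le T Cyl
      _ = (T.card : ENNReal) * (1/2)^n := by
          rw [Finset.sum_congr rfl (fun s _ => hcylmeas s), Finset.sum_const,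
            nsmul_eq_mul]
  -- real side
  have htopne : ((T.card : ENNReal) * (1/2)^n) ≠ ⊤ := by
    apply ENNReal.mul_ne_top (by simp)
    exact ENNReal.pow_ne_top (by norm_num)
  have hreal : (P E).toReal ≤ (T.card : ℝ) * (1/2)^n := by
    have h := ENNReal.toReal_mono htopne hPle
    have he : ((T.card : ENNReal) * (1/2)^n).toReal = (T.card : ℝ) * (1/2)^n := by
      rw [ENNReal.toReal_mul, ENNReal.toReal_pow]
      norm_num
    rwa [he] at h
  -- card bound via potential
  have hz0 := hz.1
  have hz1 := hz.2
  have hcard : (T.card : ℝ) * ((10:ℝ)^13 / (42+2*(n:ℝ))^12) ≤ (42/25)^n := by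
    calc (T.card : ℝ) * ((10:ℝ)^13 / (42+2*(n:ℝ))^12)
        = T.card • ((10:ℝ)^13 / (42+2*(n:ℝ))^12) := by rw [nsmul_eq_mul]
      _ ≤ ∑ s ∈ T, phi (Zproc z₀ n (ext n s)) := by
          apply Finset.card_nsmul_le_sum
          intro s hs
          rw [hTdef, Finset.mem_filter] at hs
          obtain ⟨hmem1, hmem2⟩ := Zproc_mem hz (ext n s) n
          exact phi_ge hn hmem1 hmem2 (hs.2 n le_rfl)
      _ ≤ ∑ s : Fin n → Bool, phi (Zproc z₀ n (ext n s)) := by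
          apply Finset.sum_le_sum_of_subset_of_nonneg (Finset.subset_univ T)
          intro s _ _
          exact phi_nonneg _
      _ ≤ (42/25)^n * phi z₀ := sum_phi_le hz n
      _ ≤ (42/25)^n * 1 := by
          apply mul_le_mul_of_nonneg_left (phi_le_one hz0 hz1) (by positivity)
      _ = (42/25)^n := by ring
  have hcard' : (T.card : ℝ) ≤ (42/25)^n * ((42+2*(n:ℝ))^12 / 10^13) := by
    have hpos : (0:ℝ) < (10:ℝ)^13 / (42+2*(n:ℝ))^12 := by
      have : (0:ℝ) < 42+2*(n:ℝ) := by positivity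
      positivity
    rw [← le_div_iff₀ hpos] at hcard
    calc (T.card : ℝ) ≤ (42/25)^n / ((10:ℝ)^13 / (42+2*(n:ℝ))^12) := hcard
      _ = (42/25)^n * ((42+2*(n:ℝ))^12 / 10^13) := by
          field_simp
  calc (P E).toReal ≤ (T.card : ℝ) * (1/2)^n := hreal
    _ ≤ ((42/25)^n * ((42+2*(n:ℝ))^12 / 10^13)) * (1/2)^n := by
        apply mul_le_mul_of_nonneg_right hcard' (by positivity)
    _ = ((42/25:ℝ)*(1/2))^n * (42+2*(n:ℝ))^12 / 10^13 := by
        rw [mul_pow]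
        ring
    _ = (21/25:ℝ)^n * (42+2*(n:ℝ))^12 / 10^13 := by norm_num
    _ ≤ ((44:ℝ)^12 * 13000^12 / 10^13) * (2:ℝ)^(-(n:ℝ)/4) := final_num n hn
end

section
/- For every z₀ ∈ [0,1] there exists n₀ ∈ ℕ such that for all integers n ≥ n₀, ℙ{ Z_{τ_n} ≤ 2^(−6n/5) } ≥ (1 − z₀) − 2^(−n/5). -/
open MeasureTheory ProbabilityTheory
set_option maxHeartbeats 1000000

namespace BEC10

noncomputable def eps (n : ℕ) : ℝ := (2:ℝ) ^ (-(6 * (n:ℝ) / 5))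

def stepf (b : Bool) (z : ℝ) : ℝ := if b then z^2 else 2*z - z^2

lemma Zproc_succ (z₀ : ℝ) (i : ℕ) (ω : ℕ → Bool) :
    Zproc z₀ (i+1) ω = stepf (ω i) (Zproc z₀ i ω) := rfl

lemma Zproc_mem {z₀ : ℝ} (hz : z₀ ∈ Set.Icc (0:ℝ) 1) (i : ℕ) (ω : ℕ → Bool) :
    Zproc z₀ i ω ∈ Set.Icc (0:ℝ) 1 := by
  induction i with
  | zero => exact hz
  | succ i ih =>
    obtain ⟨h0, h1⟩ := ih
    rw [Zproc_succ, stepf]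
    rcases ω i with _ | _ <;> simp only [if_true, if_false, Bool.false_eq_true] <;>
      constructor <;> nlinarith

lemma Zproc_dep {z₀ : ℝ} {i : ℕ} {ω ω' : ℕ → Bool} (h : ∀ k < i, ω k = ω' k) :
    Zproc z₀ i ω = Zproc z₀ i ω' := by
  induction i with
  | zero => rfl
  | succ i ih =>
    rw [Zproc_succ, Zproc_succ, h i (Nat.lt_succ_self i),
      ih (fun k hk => h k (hk.trans (Nat.lt_succ_self i)))]

noncomputable def Yv (z₀ : ℝ) (i : ℕ) (ω : ℕ → Bool) : ℝ :=
  min (Zproc z₀ i ω) (1 - Zproc z₀ i ω)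

lemma Yv_dep {z₀ : ℝ} {i : ℕ} {ω ω' : ℕ → Bool} (h : ∀ k < i, ω k = ω' k) :
    Yv z₀ i ω = Yv z₀ i ω' := by unfold Yv; rw [Zproc_dep h]

lemma tau_eq_sInf (z₀ : ℝ) (n : ℕ) (ω : ℕ → Bool) :
    tau z₀ n ω = sInf ({i | Yv z₀ i ω ≤ eps n} ∪ {n}) := rfl

lemma tau_le (z₀ : ℝ) (n : ℕ) (ω : ℕ → Bool) : tau z₀ n ω ≤ n :=
  Nat.sInf_le (Set.mem_union_right _ rfl)

lemma tau_hit {z₀ : ℝ} {n : ℕ} {ω : ℕ → Bool}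
    (h : ∃ j ≤ n, Yv z₀ j ω ≤ eps n) : Yv z₀ (tau z₀ n ω) ω ≤ eps n := by
  obtain ⟨j, hjn, hj⟩ := h
  have hmem : tau z₀ n ω ∈ ({i | Yv z₀ i ω ≤ eps n} ∪ {n} : Set ℕ) :=
    Nat.sInf_mem ⟨n, Set.mem_union_right _ rfl⟩
  have hle : tau z₀ n ω ≤ j := Nat.sInf_le (Set.mem_union_left _ hj)
  rcases hmem with hmem | hmem
  · exact hmem
  · have hmem' : tau z₀ n ω = n := hmem
    have : j = n := le_antisymm hjn (hmem' ▸ hle)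
    rw [hmem']; rw [this] at hj; exact hj

lemma tau_le_of_hit {z₀ : ℝ} {n j : ℕ} {ω : ℕ → Bool}
    (hj : Yv z₀ j ω ≤ eps n) : tau z₀ n ω ≤ j :=
  Nat.sInf_le (Set.mem_union_left _ hj)

lemma le_tau_of_nohit {z₀ : ℝ} {n i : ℕ} {ω : ℕ → Bool}
    (h : ∀ j < i, ¬ (Yv z₀ j ω ≤ eps n)) (hin : i ≤ n) : i ≤ tau z₀ n ω := by
  have hmem : tau z₀ n ω ∈ ({j | Yv z₀ j ω ≤ eps n} ∪ {n} : Set ℕ) :=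
    Nat.sInf_mem ⟨n, Set.mem_union_right _ rfl⟩
  rcases hmem with hmem | hmem
  · by_contra hlt
    exact h _ (Nat.lt_of_not_le hlt) hmem
  · have hmem' : tau z₀ n ω = n := hmem
    rw [hmem']; exact hin

noncomputable def Wv (z₀ : ℝ) (n i : ℕ) (ω : ℕ → Bool) : ℝ :=
  Zproc z₀ (min (tau z₀ n ω) i) ω

lemma Wv_zero (z₀ : ℝ) (n : ℕ) (ω : ℕ → Bool) : Wv z₀ n 0 ω = z₀ := by
  unfold Wv; rw [Nat.min_zero]; rfl

lemma Wv_eq_Ztau (z₀ : ℝ) (n : ℕ) (ω : ℕ → Bool) : Wv z₀ n n ω = Ztau z₀ n ω := by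
  unfold Wv Ztau; rw [min_eq_left (tau_le z₀ n ω)]

lemma Wv_of_nohit {z₀ : ℝ} {n i : ℕ} {ω : ℕ → Bool}
    (h : ¬ ∃ j ≤ i, Yv z₀ j ω ≤ eps n) (hin : i ≤ n) :
    Wv z₀ n i ω = Zproc z₀ i ω := by
  push_neg at h
  unfold Wv
  rw [min_eq_right (le_tau_of_nohit (fun j hj => by simpa using h j (le_of_lt hj)) hin)]

lemma Wv_succ {z₀ : ℝ} {n i : ℕ} (ω : ℕ → Bool) (hin : i + 1 ≤ n) :
    Wv z₀ n (i+1) ω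
      = if ∃ j ≤ i, Yv z₀ j ω ≤ eps n then Wv z₀ n i ω
        else stepf (ω i) (Zproc z₀ i ω) := by
  classical
  by_cases h : ∃ j ≤ i, Yv z₀ j ω ≤ eps n
  · rw [if_pos h]
    obtain ⟨j, hji, hj⟩ := h
    have ht : tau z₀ n ω ≤ i := (tau_le_of_hit hj).trans hji
    unfold Wv
    rw [min_eq_left ht, min_eq_left (ht.trans (Nat.le_succ i))]
  · rw [if_neg h]
    push_neg at h
    have h1 : i + 1 ≤ tau z₀ n ω := by
      apply le_tau_of_nohit _ hin
      intro j hj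
      exact not_le.mpr (h j (Nat.lt_succ_iff.mp hj))

    unfold Wv
    rw [min_eq_right h1, Zproc_succ]


lemma tau_dep {z₀ : ℝ} {n : ℕ} {ω ω' : ℕ → Bool} (h : ∀ k < n, ω k = ω' k) :
    tau z₀ n ω = tau z₀ n ω' := by
  -- symmetric argument
  have key : ∀ (ω ω' : ℕ → Bool), (∀ k < n, ω k = ω' k) →
      tau z₀ n ω' ≤ tau z₀ n ω := by
    intro ω ω' hag
    have hmem : tau z₀ n ω ∈ ({j | Yv z₀ j ω ≤ eps n} ∪ {n} : Set ℕ) :=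
      Nat.sInf_mem ⟨n, Set.mem_union_right _ rfl⟩
    rcases hmem with hmem | hmem
    · have hlt : tau z₀ n ω ≤ n := tau_le z₀ n ω
      have : Yv z₀ (tau z₀ n ω) ω' ≤ eps n := by
        rw [← Yv_dep (fun k hk => hag k (lt_of_lt_of_le hk hlt))]
        exact hmem
      exact tau_le_of_hit this
    · have hmem' : tau z₀ n ω = n := hmem
      rw [hmem']; exact tau_le z₀ n ω'
  exact le_antisymm (key ω' ω (fun k hk => (h k hk).symm)) (key ω ω' h)

lemma Ztau_dep {z₀ : ℝ} {n : ℕ} {ω ω' : ℕ → Bool} (h : ∀ k < n, ω k = ω' k) :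
    Ztau z₀ n ω = Ztau z₀ n ω' := by
  unfold Ztau
  rw [← tau_dep h]
  exact Zproc_dep (fun k hk => h k (lt_of_lt_of_le hk (tau_le z₀ n ω)))

lemma hit_dep {z₀ : ℝ} {n i : ℕ} {ω ω' : ℕ → Bool} (h : ∀ k < i, ω k = ω' k) :
    (∃ j ≤ i, Yv z₀ j ω ≤ eps n) ↔ (∃ j ≤ i, Yv z₀ j ω' ≤ eps n) := by
  constructor <;> rintro ⟨j, hji, hj⟩ <;> refine ⟨j, hji, ?_⟩
  · rwa [← Yv_dep (fun k hk => h k (lt_of_lt_of_le hk hji))]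
  · rwa [Yv_dep (fun k hk => h k (lt_of_lt_of_le hk hji))]

lemma Wv_dep {z₀ : ℝ} {n i : ℕ} {ω ω' : ℕ → Bool} (h : ∀ k < i, ω k = ω' k)
    (hin : i ≤ n) : Wv z₀ n i ω = Wv z₀ n i ω' := by
  classical
  by_cases hh : ∃ j ≤ i, Yv z₀ j ω ≤ eps n
  · -- both taus ≤ i and equal
    have key : ∀ (ω ω' : ℕ → Bool), (∀ k < i, ω k = ω' k) →
        (∃ j ≤ i, Yv z₀ j ω ≤ eps n) → tau z₀ n ω' ≤ tau z₀ n ω := by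
      intro ω ω' hag ⟨j, hji, hj⟩
      have htle : tau z₀ n ω ≤ i := (tau_le_of_hit hj).trans hji
      have hYt : Yv z₀ (tau z₀ n ω) ω ≤ eps n :=
        tau_hit ⟨j, hji.trans hin, hj⟩
      have : Yv z₀ (tau z₀ n ω) ω' ≤ eps n := by
        rw [← Yv_dep (fun k hk => hag k (lt_of_lt_of_le hk htle))]
        exact hYt
      exact tau_le_of_hit this
    have hh' : ∃ j ≤ i, Yv z₀ j ω' ≤ eps n := (hit_dep h).mp hh
    have e : tau z₀ n ω = tau z₀ n ω' :=
      le_antisymm (key ω' ω (fun k hk => (h k hk).symm) hh') (key ω ω' h hh)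
    have htle : tau z₀ n ω ≤ i := by
      obtain ⟨j, hji, hj⟩ := hh; exact (tau_le_of_hit hj).trans hji
    unfold Wv
    rw [← e, Zproc_dep (fun k hk => h k (lt_of_lt_of_le hk (le_trans (Nat.min_le_right _ _) le_rfl)))]
  · have hh' : ¬ ∃ j ≤ i, Yv z₀ j ω' ≤ eps n := fun c => hh ((hit_dep h).mpr c)
    rw [Wv_of_nohit hh hin, Wv_of_nohit hh' hin, Zproc_dep h]

/-! ### The potential function -/

noncomputable def tval (z : ℝ) : ℝ := - Real.logb 2 (min z (1 - z))

noncomputable def Gf (n : ℕ) (z : ℝ) : ℝ :=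
  (20000 * (1 + 3*(n:ℝ))) * Real.sqrt (z * (1 - z)) + (1 + (3*(n:ℝ)) / tval z)

lemma min_le_half (z : ℝ) : min z (1 - z) ≤ 1/2 := by
  rcases le_total z (1-z) with h | h
  · rw [min_eq_left h]; linarith
  · rw [min_eq_right h]; linarith

lemma tval_pos {z : ℝ} (h0 : 0 < z) (h1 : z < 1) : 0 < tval z := by
  have hy0 : 0 < min z (1-z) := lt_min h0 (by linarith)
  have hy1 : min z (1-z) < 1 := lt_of_le_of_lt (min_le_half z) (by norm_num)
  have := Real.logb_neg (b := 2) (by norm_num) hy0 hy1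
  unfold tval; linarith

lemma tval_ge_one {z : ℝ} (h0 : 0 < z) (h1 : z < 1) : 1 ≤ tval z := by
  have hy0 : 0 < min z (1-z) := lt_min h0 (by linarith)
  have h2 : Real.logb 2 (min z (1-z)) ≤ Real.logb 2 (1/2) :=
    (Real.logb_le_logb (by norm_num) hy0 (by norm_num)).mpr (min_le_half z)
  have h3 : Real.logb 2 (1/2 : ℝ) = -1 := by
    rw [show (1/2 : ℝ) = (2:ℝ) ^ (-1 : ℝ) by
      rw [Real.rpow_neg_one]; norm_num]
    exact Real.logb_rpow (by norm_num) (by norm_num)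
  unfold tval; rw [h3] at h2; linarith

lemma Gf_nonneg {n : ℕ} {z : ℝ} (h0 : 0 < z) (h1 : z < 1) : 0 ≤ Gf n z := by
  have h2 : (0:ℝ) ≤ Real.sqrt (z * (1-z)) := Real.sqrt_nonneg _
  have h3 : (0:ℝ) ≤ (3*(n:ℝ)) / tval z :=
    div_nonneg (by positivity) (le_of_lt (tval_pos h0 h1))
  have : (0:ℝ) ≤ 20000 * (1 + 3*(n:ℝ)) := by positivity
  unfold Gf; nlinarith [mul_nonneg this h2]

lemma Gf_ge_one {n : ℕ} {z : ℝ} (h0 : 0 < z) (h1 : z < 1) : 1 ≤ Gf n z := by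
  have h2 : (0:ℝ) ≤ Real.sqrt (z * (1-z)) := Real.sqrt_nonneg _
  have h3 : (0:ℝ) ≤ (3*(n:ℝ)) / tval z :=
    div_nonneg (by positivity) (le_of_lt (tval_pos h0 h1))
  have : (0:ℝ) ≤ 20000 * (1 + 3*(n:ℝ)) := by positivity
  unfold Gf; nlinarith [mul_nonneg this h2]

lemma gdiv_le {n : ℕ} {z : ℝ} (h0 : 0 < z) (h1 : z < 1) :
    (3*(n:ℝ)) / tval z ≤ 3*(n:ℝ) := by
  calc (3*(n:ℝ)) / tval z ≤ (3*(n:ℝ)) / 1 :=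
        div_le_div_of_nonneg_left (by positivity) (by norm_num) (tval_ge_one h0 h1)
    _ = 3*(n:ℝ) := by ring

lemma Gf_le_C {n : ℕ} {z : ℝ} (hz : z ∈ Set.Icc (0:ℝ) 1) :
    Gf n z ≤ 10001 * (1 + 3*(n:ℝ)) := by
  obtain ⟨hz0, hz1⟩ := hz
  have hs : Real.sqrt (z * (1-z)) ≤ 1/2 := by
    have : z * (1-z) ≤ (1/2)^2 := by nlinarith [sq_nonneg (2*z-1)]
    calc Real.sqrt (z*(1-z)) ≤ Real.sqrt ((1/2)^2) := Real.sqrt_le_sqrt this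
      _ = 1/2 := Real.sqrt_sq (by norm_num)
  have hg : (3*(n:ℝ)) / tval z ≤ 3*(n:ℝ) := by
    rcases eq_or_lt_of_le hz0 with h | h0
    · unfold tval; rw [← h]; norm_num
    rcases eq_or_lt_of_le hz1 with h | h1
    · unfold tval; rw [h]; norm_num
    exact gdiv_le h0 h1
  have hB : (0:ℝ) ≤ 20000 * (1 + 3*(n:ℝ)) := by positivity
  have := mul_le_mul_of_nonneg_left hs hB
  unfold Gf; nlinarith

/-! ### The √3 inequality -/

lemma sqrt3_le : Real.sqrt 3 ≤ 17321/10000 := by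
  have : (3:ℝ) ≤ (17321/10000)^2 := by norm_num
  calc Real.sqrt 3 ≤ Real.sqrt ((17321/10000)^2) := Real.sqrt_le_sqrt this
    _ = 17321/10000 := Real.sqrt_sq (by norm_num)

lemma hkey {z : ℝ} (h0 : 0 ≤ z) (h1 : z ≤ 1) :
    Real.sqrt (z^2 * (1 - z^2)) + Real.sqrt ((2*z - z^2) * (1 - (2*z - z^2)))
      ≤ Real.sqrt 3 * Real.sqrt (z * (1 - z)) := by
  have ha0 : (0:ℝ) ≤ 1 - z^2 := by nlinarith
  have hb0 : (0:ℝ) ≤ 2*z - z^2 := by nlinarith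
  have hu0 : (0:ℝ) ≤ z * (1 - z) := by nlinarith
  set a := Real.sqrt (1 - z^2) with hadef
  set b := Real.sqrt (2*z - z^2) with hbdef
  set c := Real.sqrt (z * (1-z)) with hcdef
  have ha2 : a^2 = 1 - z^2 := Real.sq_sqrt ha0
  have hb2 : b^2 = 2*z - z^2 := Real.sq_sqrt hb0
  have hc2 : c^2 = z * (1-z) := Real.sq_sqrt hu0
  have haa : 0 ≤ a := Real.sqrt_nonneg _
  have hbb : 0 ≤ b := Real.sqrt_nonneg _
  have hcc : 0 ≤ c := Real.sqrt_nonneg _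
  -- rewrite LHS
  have e1 : Real.sqrt (z^2 * (1 - z^2)) = z * a := by
    rw [Real.sqrt_mul (by positivity), Real.sqrt_sq h0]
  have e2 : Real.sqrt ((2*z - z^2) * (1 - (2*z - z^2))) = (1-z) * b := by
    have : (2*z - z^2) * (1 - (2*z - z^2)) = (1-z)^2 * (2*z - z^2) := by ring
    rw [this, Real.sqrt_mul (by positivity), Real.sqrt_sq (by linarith)]
  rw [e1, e2]
  -- key: 2ab ≤ 1 + 2u where u = z(1-z)
  have hab : a * b = Real.sqrt ((1 - z^2) * (2*z - z^2)) := by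
    rw [Real.sqrt_mul ha0]
  have habu : a * b ≤ (1 + 2*(z*(1-z)))/2 := by
    rw [hab]
    have h4 : (1 - z^2) * (2*z - z^2) ≤ ((1 + 2*(z*(1-z)))/2)^2 := by nlinarith [sq_nonneg (2*z - 1), sq_nonneg (z*(1-z))]
    calc Real.sqrt ((1 - z^2) * (2*z - z^2))
        ≤ Real.sqrt (((1 + 2*(z*(1-z)))/2)^2) := Real.sqrt_le_sqrt h4
      _ = (1 + 2*(z*(1-z)))/2 := Real.sqrt_sq (by nlinarith)
  -- square comparison
  have hL0 : 0 ≤ z * a + (1-z) * b := by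
    have := mul_nonneg h0 haa
    have := mul_nonneg (by linarith : (0:ℝ) ≤ 1 - z) hbb
    linarith
  have hsq : (z * a + (1-z) * b)^2 ≤ 3 * (z * (1-z)) := by
    have expand : (z * a + (1-z) * b)^2
        = z^2 * a^2 + (1-z)^2 * b^2 + 2 * (z*(1-z)) * (a*b) := by ring
    rw [expand, ha2, hb2]
    have hmul : 2 * (z*(1-z)) * (a*b) ≤ 2 * (z*(1-z)) * ((1 + 2*(z*(1-z)))/2) :=
      mul_le_mul_of_nonneg_left habu (by nlinarith)
    nlinarith
  have hR : z * a + (1-z) * b ≤ Real.sqrt (3 * (z * (1-z))) := by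
    rw [← Real.sqrt_sq hL0]
    exact Real.sqrt_le_sqrt hsq
  calc z * a + (1-z) * b ≤ Real.sqrt (3 * (z * (1-z))) := hR
    _ = Real.sqrt 3 * c := by rw [Real.sqrt_mul (by norm_num)]

lemma eps_pos (n : ℕ) : 0 < eps n := Real.rpow_pos_of_pos (by norm_num) _

lemma log2_pos : 0 < Real.log 2 := Real.log_pos (by norm_num)

lemma tval_le_T {n : ℕ} {z : ℝ} (hy : eps n < min z (1 - z)) :
    tval z ≤ 6*(n:ℝ)/5 := by
  have h1 : Real.logb 2 (eps n) ≤ Real.logb 2 (min z (1-z)) :=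
    (Real.logb_le_logb (by norm_num) (eps_pos n) (lt_trans (eps_pos n) hy)).mpr
      (le_of_lt hy)
  have h2 : Real.logb 2 (eps n) = -(6*(n:ℝ)/5) :=
    Real.logb_rpow (by norm_num) (by norm_num)
  unfold tval; rw [h2] at h1; linarith

lemma tval_ge_11 {z : ℝ} (h0 : 0 < z) (h1 : z < 1) (hy : min z (1-z) ≤ 1/2048) :
    11 ≤ tval z := by
  have hy0 : 0 < min z (1-z) := lt_min h0 (by linarith)
  have h2 : Real.logb 2 (min z (1-z)) ≤ Real.logb 2 (1/2048) :=
    (Real.logb_le_logb (by norm_num) hy0 (by norm_num)).mpr hy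
  have h3 : Real.logb 2 (1/2048 : ℝ) = -11 := by
    rw [show (1/2048 : ℝ) = (2:ℝ) ^ (-11 : ℝ) by
      rw [show (-11:ℝ) = ((-11 : ℤ) : ℝ) by norm_num, Real.rpow_intCast]; norm_num]
    exact Real.logb_rpow (by norm_num) (by norm_num)
  unfold tval; rw [h3] at h2; linarith

lemma prod_eq {z : ℝ} : z * (1 - z) = (min z (1-z)) * (1 - min z (1-z)) := by
  rcases le_total z (1-z) with h | h
  · rw [min_eq_left h]
  · rw [min_eq_right h]; ring

lemma core (n : ℕ) {z : ℝ} (hy : eps n < min z (1 - z)) :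
    Gf n (z^2) + Gf n (2*z - z^2) ≤ (87/50) * Gf n z := by
  have hyz : eps n < z := lt_of_lt_of_le hy (min_le_left _ _)
  have hyz' : eps n < 1 - z := lt_of_lt_of_le hy (min_le_right _ _)
  have h0 : 0 < z := lt_trans (eps_pos n) hyz
  have h1 : z < 1 := by have := lt_trans (eps_pos n) hyz'; linarith
  have hc10 : 0 < z^2 := by positivity
  have hc11 : z^2 < 1 := by nlinarith
  have hc20 : 0 < 2*z - z^2 := by nlinarith
  have hc21 : 2*z - z^2 < 1 := by nlinarith
  set A := 3*(n:ℝ) with hA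
  set B := 20000*(1 + A) with hB
  have hA0 : 0 ≤ A := by positivity
  have hB0 : (0:ℝ) ≤ B := by positivity
  set s1 := Real.sqrt (z^2 * (1 - z^2)) with hs1
  set s2 := Real.sqrt ((2*z - z^2) * (1 - (2*z - z^2))) with hs2
  set h := Real.sqrt (z * (1 - z)) with hh
  have hh0 : 0 ≤ h := Real.sqrt_nonneg _
  have hs12 : s1 + s2 ≤ (17321/10000) * h := by
    have h3 := hkey (le_of_lt h0) (le_of_lt h1)
    have := mul_le_mul_of_nonneg_right sqrt3_le hh0
    calc s1 + s2 ≤ Real.sqrt 3 * h := h3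
      _ ≤ (17321/10000) * h := this
  have hBs : B * s1 + B * s2 ≤ (17321/10000) * (B * h) := by
    have := mul_le_mul_of_nonneg_left hs12 hB0
    nlinarith
  have hg1n : 0 ≤ A / tval (z^2) := div_nonneg hA0 (le_of_lt (tval_pos hc10 hc11))
  have hg2n : 0 ≤ A / tval (2*z - z^2) := div_nonneg hA0 (le_of_lt (tval_pos hc20 hc21))
  have hgzn : 0 ≤ A / tval z := div_nonneg hA0 (le_of_lt (tval_pos h0 h1))
  have hGf1 : Gf n (z^2) = B * s1 + (1 + A / tval (z^2)) := rfl
  have hGf2 : Gf n (2*z - z^2) = B * s2 + (1 + A / tval (2*z - z^2)) := rfl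
  have hGfz : Gf n z = B * h + (1 + A / tval z) := rfl
  rcases le_or_gt (min z (1-z)) (1/2048) with hdeep | hmid
  · -- DEEP case
    set t := tval z with ht
    have ht11 : 11 ≤ t := tval_ge_11 h0 h1 hdeep
    have htT : t ≤ 6*(n:ℝ)/5 := tval_le_T hy
    have hAt : (5/2) * t ≤ A := by rw [hA]; linarith
    have ht0 : 0 < t := by linarith
    -- child tvals : one is 2t, other ≥ t - 1
    have hlog : ∃ td to' : ℝ, td = 2*t ∧ t - 1 ≤ to' ∧ 0 < to' ∧
        ((tval (z^2) = td ∧ tval (2*z - z^2) = to') ∨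
         (tval (z^2) = to' ∧ tval (2*z - z^2) = td)) := by
      rcases le_total z (1-z) with hzz | hzz
      · -- z small
        have hzsmall : z ≤ 1/2048 := by rw [min_eq_left hzz] at hdeep; exact hdeep
        have e1 : min (z^2) (1 - z^2) = z^2 := min_eq_left (by nlinarith [sq_nonneg z])
        have e2 : min (2*z - z^2) (1 - (2*z - z^2)) = 2*z - z^2 :=
          min_eq_left (by nlinarith [sq_nonneg (1-z), sq_nonneg z])
        have htz : t = - (Real.log z / Real.log 2) := by
          rw [ht]; unfold tval Real.logb; rw [min_eq_left hzz]
        have htd : tval (z^2) = 2*t := by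
          unfold tval Real.logb; rw [e1, Real.log_pow, htz]; push_cast; ring
        have hto : tval (2*z - z^2) = t - Real.log (2 - z) / Real.log 2 := by
          unfold tval Real.logb
          rw [e2, show 2*z - z^2 = z * (2 - z) by ring,
            Real.log_mul (ne_of_gt h0) (by linarith), htz]
          ring
        refine ⟨2*t, tval (2*z - z^2), rfl, ?_, ?_, Or.inl ⟨htd, rfl⟩⟩
        · rw [hto]
          have : Real.log (2 - z) ≤ Real.log 2 :=
            Real.log_le_log (by linarith) (by linarith)
          have h2 := log2_pos
          have : Real.log (2 - z) / Real.log 2 ≤ 1 := by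
            rw [div_le_one h2]; exact this
          linarith
        · exact tval_pos hc20 hc21
      · -- z near 1
        have hzbig : 1 - z ≤ 1/2048 := by rw [min_eq_right hzz] at hdeep; exact hdeep
        have hzge : (2047/2048 : ℝ) ≤ z := by linarith
        have e1 : min (z^2) (1 - z^2) = 1 - z^2 := min_eq_right (by nlinarith [sq_nonneg (1-z)])
        have e2 : min (2*z - z^2) (1 - (2*z - z^2)) = 1 - (2*z - z^2) :=
          min_eq_right (by nlinarith [sq_nonneg (1-z)])
        have htz : t = - (Real.log (1-z) / Real.log 2) := by
          rw [ht]; unfold tval Real.logb; rw [min_eq_right hzz]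
        have htd : tval (2*z - z^2) = 2*t := by
          unfold tval Real.logb
          rw [e2, show 1 - (2*z - z^2) = (1-z)^2 by ring, Real.log_pow, htz]
          push_cast; ring
        have hto : tval (z^2) = t - Real.log (1 + z) / Real.log 2 := by
          unfold tval Real.logb
          rw [e1, show 1 - z^2 = (1-z) * (1 + z) by ring,
            Real.log_mul (by linarith) (by linarith), htz]
          ring
        refine ⟨2*t, tval (z^2), rfl, ?_, ?_, Or.inr ⟨rfl, htd⟩⟩
        · rw [hto]
          have : Real.log (1 + z) ≤ Real.log 2 :=
            Real.log_le_log (by linarith) (by linarith)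
          have h2 := log2_pos
          have : Real.log (1 + z) / Real.log 2 ≤ 1 := by
            rw [div_le_one h2]; exact this
          linarith
        · exact tval_pos hc10 hc11
    obtain ⟨td, to', htd, hto1, hto0, hcases⟩ := hlog
    -- g-part numeric bound
    have hgsum : (1 + A/td) + (1 + A/to') ≤ (87/50) * (1 + A/t) := by
      have ha : (5/2 : ℝ) ≤ A/t := by
        rw [le_div_iff₀ ht0]; linarith
      have hd2 : A/td = (A/t)/2 := by
        rw [htd, div_div]; ring_nf
      have hod : A/to' ≤ A/(t-1) :=
        div_le_div_of_nonneg_left hA0 (by linarith) hto1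
      have htt : A/(t-1) ≤ (11/10) * (A/t) := by
        rw [div_le_iff₀ (by linarith : (0:ℝ) < t - 1)]
        have e : (11/10) * (A/t) * (t-1) = A * ((11/10) * (t-1) / t) := by
          field_simp
        rw [e]
        have : (1:ℝ) ≤ (11/10) * (t-1) / t := by
          rw [le_div_iff₀ ht0]; linarith
        nlinarith
      set a := A/t
      linarith
    -- combine
    rw [hGf1, hGf2, hGfz]
    have hbig : B * s1 + B * s2 ≤ (87/50) * (B * h) := by
      have : (17321/10000 : ℝ) * (B*h) ≤ (87/50) * (B*h) := by
        nlinarith [mul_nonneg hB0 hh0]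
      linarith
    rcases hcases with ⟨e1, e2⟩ | ⟨e1, e2⟩
    · rw [e1, e2]; linarith
    · rw [e1, e2]; linarith
  · -- MIDDLE case
    have hprod : (1/4096 : ℝ) ≤ z * (1-z) := by
      rw [prod_eq]
      have := min_le_half z
      nlinarith
    have hh64 : (1/64 : ℝ) ≤ h := by
      rw [hh]
      rw [show (1/64 : ℝ) = Real.sqrt ((1/64)^2) by rw [Real.sqrt_sq]; norm_num]
      apply Real.sqrt_le_sqrt; norm_num; linarith
    have hg1 : A / tval (z^2) ≤ A := gdiv_le hc10 hc11
    have hg2 : A / tval (2*z - z^2) ≤ A := gdiv_le hc20 hc21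
    have hBh : 312.5 * (1 + A) ≤ B * h := by
      have := mul_le_mul_of_nonneg_left hh64 hB0
      rw [hB]; nlinarith
    rw [hGf1, hGf2, hGfz]
    linarith

/-! ### Sums over the binary tree -/

def ext {m : ℕ} (s : Fin m → Bool) : ℕ → Bool :=
  fun k => if h : k < m then s ⟨k, h⟩ else false

lemma ext_snoc_lt {m : ℕ} (s : Fin m → Bool) (b : Bool) {k : ℕ} (hk : k < m) :
    ext (Fin.snoc s b) k = ext s k := by
  unfold ext
  rw [dif_pos hk, dif_pos (hk.trans (Nat.lt_succ_self m))]
  have : (⟨k, hk.trans (Nat.lt_succ_self m)⟩ : Fin (m+1)) = Fin.castSucc ⟨k, hk⟩ := rfl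
  rw [this, Fin.snoc_castSucc]

lemma ext_snoc_last {m : ℕ} (s : Fin m → Bool) (b : Bool) :
    ext (Fin.snoc s b) m = b := by
  unfold ext
  rw [dif_pos (Nat.lt_succ_self m)]
  have : (⟨m, Nat.lt_succ_self m⟩ : Fin (m+1)) = Fin.last m := rfl
  rw [this, Fin.snoc_last]

lemma sum_snoc {m : ℕ} (F : (Fin (m+1) → Bool) → ℝ) :
    ∑ s : Fin (m+1) → Bool, F s
      = ∑ s : Fin m → Bool, (F (Fin.snoc s true) + F (Fin.snoc s false)) := by
  rw [← Equiv.sum_comp (Fin.snocEquiv (fun _ => Bool)) F, Fintype.sum_prod_type]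
  rw [Fintype.sum_bool]
  rw [← Finset.sum_add_distrib]
  rfl

/-- The martingale sum identity for the stopped process. -/
lemma Wsum {z₀ : ℝ} (n : ℕ) : ∀ i ≤ n,
    ∑ s : Fin i → Bool, Wv z₀ n i (ext s) = 2^i * z₀ := by
  intro i
  induction i with
  | zero =>
    intro _
    rw [Fintype.sum_unique]
    rw [Wv_zero]; ring
  | succ i ih =>
    intro hin
    have hin' : i ≤ n := (Nat.le_succ i).trans hin
    rw [sum_snoc]
    have key : ∀ s : Fin i → Bool,
        Wv z₀ n (i+1) (ext (Fin.snoc s true)) + Wv z₀ n (i+1) (ext (Fin.snoc s false))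
          = 2 * Wv z₀ n i (ext s) := by
      intro s
      have hagt : ∀ k < i, ext (Fin.snoc s true) k = ext s k :=
        fun k hk => ext_snoc_lt s true hk
      have hagf : ∀ k < i, ext (Fin.snoc s false) k = ext s k :=
        fun k hk => ext_snoc_lt s false hk
      classical
      rw [Wv_succ _ hin, Wv_succ _ hin]
      by_cases hh : ∃ j ≤ i, Yv z₀ j (ext s) ≤ eps n
      · rw [if_pos ((hit_dep hagt).mpr hh), if_pos ((hit_dep hagf).mpr hh),
          Wv_dep hagt hin', Wv_dep hagf hin']
        ring
      · rw [if_neg (fun c => hh ((hit_dep hagt).mp c)),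
          if_neg (fun c => hh ((hit_dep hagf).mp c))]
        rw [Zproc_dep hagt, Zproc_dep hagf]
        rw [ext_snoc_last, ext_snoc_last]
        rw [Wv_of_nohit hh hin']
        unfold stepf
        simp only [if_true, Bool.false_eq_true, if_false]
        ring
    rw [Finset.sum_congr rfl (fun s _ => key s), ← Finset.mul_sum, ih hin']
    ring

open Classical in
/-- Indicator-weighted potential at level `i`. -/
noncomputable def Tterm (z₀ : ℝ) (n i : ℕ) (ω : ℕ → Bool) : ℝ :=
  if ∃ j ≤ i, Yv z₀ j ω ≤ eps n then 0 else Gf n (Zproc z₀ i ω)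

lemma Tterm_nonneg {z₀ : ℝ} (hz : z₀ ∈ Set.Icc (0:ℝ) 1) (n i : ℕ) (ω : ℕ → Bool) :
    0 ≤ Tterm z₀ n i ω := by
  unfold Tterm
  split
  · exact le_refl 0
  · rename_i hh
    push_neg at hh
    have h2 := hh i le_rfl
    unfold Yv at h2
    have h0 : 0 < Zproc z₀ i ω :=
      lt_trans (eps_pos n) (lt_of_lt_of_le h2 (min_le_left _ _))
    have h1 : Zproc z₀ i ω < 1 := by
      have := lt_trans (eps_pos n) (lt_of_lt_of_le h2 (min_le_right _ _))
      linarith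
    exact Gf_nonneg h0 h1

lemma Tsum {z₀ : ℝ} (hz : z₀ ∈ Set.Icc (0:ℝ) 1) (n : ℕ) : ∀ i ≤ n,
    ∑ s : Fin i → Bool, Tterm z₀ n i (ext s) ≤ (87/50)^i * (10001 * (1 + 3*(n:ℝ))) := by
  intro i
  induction i with
  | zero =>
    intro _
    rw [Fintype.sum_unique]
    unfold Tterm
    rw [pow_zero, one_mul]
    split
    · positivity
    · exact Gf_le_C hz
  | succ i ih =>
    intro hin
    have hin' : i ≤ n := (Nat.le_succ i).trans hin
    rw [sum_snoc]
    have key : ∀ s : Fin i → Bool,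
        Tterm z₀ n (i+1) (ext (Fin.snoc s true)) + Tterm z₀ n (i+1) (ext (Fin.snoc s false))
          ≤ (87/50) * Tterm z₀ n i (ext s) := by
      intro s
      have hagt : ∀ k < i, ext (Fin.snoc s true) k = ext s k :=
        fun k hk => ext_snoc_lt s true hk
      have hagf : ∀ k < i, ext (Fin.snoc s false) k = ext s k :=
        fun k hk => ext_snoc_lt s false hk
      have hagt' : ∀ k < i+1, k ≠ i → ext (Fin.snoc s true) k = ext s k := by
        intro k hk hne
        exact ext_snoc_lt s true (by omega)
      unfold Tterm
      by_cases hh : ∃ j ≤ i, Yv z₀ j (ext s) ≤ eps n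
      · rw [if_pos hh]
        have ht : ∃ j ≤ i+1, Yv z₀ j (ext (Fin.snoc s true)) ≤ eps n := by
          obtain ⟨j, hj, hyj⟩ := (hit_dep hagt).mpr hh
          exact ⟨j, hj.trans (Nat.le_succ i), hyj⟩
        have hf : ∃ j ≤ i+1, Yv z₀ j (ext (Fin.snoc s false)) ≤ eps n := by
          obtain ⟨j, hj, hyj⟩ := (hit_dep hagf).mpr hh
          exact ⟨j, hj.trans (Nat.le_succ i), hyj⟩
        rw [if_pos ht, if_pos hf]; norm_num
      · rw [if_neg hh]
        set z := Zproc z₀ i (ext s) with hzdef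
        have hzmem := Zproc_mem hz i (ext s)
        have hunstop : eps n < min z (1 - z) := by
          have := hh
          push_neg at this
          have h2 := this i le_rfl
          unfold Yv at h2
          exact h2
        have hZt : Zproc z₀ (i+1) (ext (Fin.snoc s true)) = z^2 := by
          rw [Zproc_succ, ext_snoc_last, Zproc_dep hagt]
          unfold stepf; simp [hzdef]
        have hZf : Zproc z₀ (i+1) (ext (Fin.snoc s false)) = 2*z - z^2 := by
          rw [Zproc_succ, ext_snoc_last, Zproc_dep hagf]
          unfold stepf; simp [hzdef]
        have hc10 : 0 < z^2 := by
          have h0 : 0 < z := lt_of_lt_of_le (lt_trans (eps_pos n) (lt_of_lt_of_le hunstop (min_le_left _ _))) le_rfl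
          positivity
        have h0 : 0 < z := lt_trans (eps_pos n) (lt_of_lt_of_le hunstop (min_le_left _ _))
        have h1 : z < 1 := by
          have := lt_trans (eps_pos n) (lt_of_lt_of_le hunstop (min_le_right _ _))
          linarith
        have hG1 : (if ∃ j ≤ i+1, Yv z₀ j (ext (Fin.snoc s true)) ≤ eps n then 0
            else Gf n (Zproc z₀ (i+1) (ext (Fin.snoc s true)))) ≤ Gf n (z^2) := by
          split
          · exact Gf_nonneg (by positivity) (by nlinarith)
          · rw [hZt]
        have hG2 : (if ∃ j ≤ i+1, Yv z₀ j (ext (Fin.snoc s false)) ≤ eps n then 0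
            else Gf n (Zproc z₀ (i+1) (ext (Fin.snoc s false)))) ≤ Gf n (2*z - z^2) := by
          split
          · exact Gf_nonneg (by nlinarith) (by nlinarith)
          · rw [hZf]
        have := core n hunstop
        linarith
    calc ∑ s : Fin i → Bool,
          (Tterm z₀ n (i+1) (ext (Fin.snoc s true)) + Tterm z₀ n (i+1) (ext (Fin.snoc s false)))
        ≤ ∑ s : Fin i → Bool, (87/50) * Tterm z₀ n i (ext s) :=
          Finset.sum_le_sum (fun s _ => key s)
      _ = (87/50) * ∑ s : Fin i → Bool, Tterm z₀ n i (ext s) := by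
          rw [Finset.mul_sum]
      _ ≤ (87/50) * ((87/50)^i * (10001 * (1 + 3*(n:ℝ)))) := by
          have := ih hin'
          nlinarith
      _ = (87/50)^(i+1) * (10001 * (1 + 3*(n:ℝ))) := by ring

/-! ### Cylinder sets and their probabilities -/

def cyl (n : ℕ) (s : Fin n → Bool) : Set (ℕ → Bool) :=
  ⋂ i ∈ Finset.range n, (fun ω : ℕ → Bool => ω i) ⁻¹' {ext s i}

lemma mem_cyl {n : ℕ} {s : Fin n → Bool} {ω : ℕ → Bool} :
    ω ∈ cyl n s ↔ ∀ i < n, ω i = ext s i := by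
  simp [cyl, Set.mem_iInter, Finset.mem_range]

lemma cyl_measurable (n : ℕ) (s : Fin n → Bool) : MeasurableSet (cyl n s) :=
  MeasurableSet.biInter (Set.to_countable _)
    (fun i _ => (measurable_pi_apply i) (measurableSet_singleton _))

lemma cyl_prob {P : Measure (ℕ → Bool)} (hP : IsFairCoinMeasure P)
    (n : ℕ) (s : Fin n → Bool) : P (cyl n s) = (1/2 : ENNReal)^n := by
  obtain ⟨hprob, hind, hhalf⟩ := hP
  have key := (iIndepFun_iff_measure_inter_preimage_eq_mul.mp hind) (Finset.range n)
    (sets := fun i => {ext s i}) (fun i _ => measurableSet_singleton _)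
  rw [cyl, key]
  have heach : ∀ i ∈ Finset.range n,
      P ((fun ω : ℕ → Bool => ω i) ⁻¹' {ext s i}) = 1/2 := by
    intro i _
    have h2 := hhalf i (ext s i)
    have : ((fun ω : ℕ → Bool => ω i) ⁻¹' {ext s i}) = {ω : ℕ → Bool | ω i = ext s i} := by
      ext ω; simp [Set.mem_preimage]
    rw [this]; exact h2
  rw [Finset.prod_congr rfl heach, Finset.prod_const, Finset.card_range]

lemma ext_inj {n : ℕ} {s s' : Fin n → Bool} (h : ∀ i < n, ext s i = ext s' i) :
    s = s' := by
  funext k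
  have := h k.val k.isLt
  unfold ext at this
  rwa [dif_pos k.isLt, dif_pos k.isLt] at this

open Classical in
lemma prob_event (z₀ : ℝ) {P : Measure (ℕ → Bool)} (hP : IsFairCoinMeasure P) (n : ℕ) :
    P {ω | Ztau z₀ n ω ≤ eps n}
      = ((Finset.filter (fun s : Fin n → Bool => Ztau z₀ n (ext s) ≤ eps n)
          Finset.univ).card : ENNReal) * (1/2 : ENNReal)^n := by
  have hev : {ω | Ztau z₀ n ω ≤ eps n}
      = ⋃ s ∈ Finset.filter (fun s : Fin n → Bool => Ztau z₀ n (ext s) ≤ eps n)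
          Finset.univ, cyl n s := by
    ext ω
    simp only [Set.mem_setOf_eq, Set.mem_iUnion, Finset.mem_filter, Finset.mem_univ,
      true_and, exists_prop]
    constructor
    · intro hω
      refine ⟨fun i => ω i.val, ?_, ?_⟩
      · rwa [← Ztau_dep (ω := ω) (fun k hk => by unfold ext; rw [dif_pos hk])]
      · rw [mem_cyl]; intro i hi; unfold ext; rw [dif_pos hi]
    · rintro ⟨s, hs, hmem⟩
      rw [mem_cyl] at hmem
      rwa [Ztau_dep (ω' := ext s) (fun k hk => hmem k hk)]
  rw [hev, measure_biUnion_finset ?_ (fun s _ => cyl_measurable n s)]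
  · rw [Finset.sum_congr rfl (fun s _ => cyl_prob hP n s), Finset.sum_const,
      nsmul_eq_mul]
  · intro s _ s' _ hne
    refine Set.disjoint_left.mpr ?_
    intro ω hωs hωs'
    rw [mem_cyl] at hωs hωs'
    exact hne (ext_inj (fun i hi => by rw [← hωs i hi, ← hωs' i hi]))

/-! ### Final numeric estimates -/

lemma two_pow_fifth : (2:ℝ) ^ ((1:ℝ)/5) ≤ 1149/1000 := by
  have hx5 : ((2:ℝ) ^ ((1:ℝ)/5)) ^ (5:ℕ) = 2 := by
    rw [← Real.rpow_natCast ((2:ℝ) ^ ((1:ℝ)/5)) 5, ← Real.rpow_mul (by norm_num)]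
    norm_num
  by_contra hcon
  push_neg at hcon
  have h0 : (0:ℝ) ≤ 1149/1000 := by norm_num
  have := pow_lt_pow_left₀ hcon h0 (n := 5) (by norm_num)
  rw [hx5] at this
  norm_num at this

lemma two_rpow_pos (x : ℝ) : (0:ℝ) < (2:ℝ) ^ x := Real.rpow_pos_of_pos (by norm_num) _

lemma pow_neg_fifth (n : ℕ) : ((2:ℝ) ^ (-(1:ℝ)/5))^n = (2:ℝ) ^ (-(n:ℝ)/5) := by
  rw [← Real.rpow_natCast ((2:ℝ) ^ (-(1:ℝ)/5)) n, ← Real.rpow_mul (by norm_num)]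
  ring_nf

lemma neg_fifth_ge : (1000/1149 : ℝ) ≤ (2:ℝ) ^ (-(1:ℝ)/5) := by
  have h1 : (2:ℝ) ^ (-(1:ℝ)/5) = ((2:ℝ) ^ ((1:ℝ)/5))⁻¹ := by
    rw [← Real.rpow_neg (by norm_num)]; ring_nf
  rw [h1]
  have hpos : (0:ℝ) < (2:ℝ) ^ ((1:ℝ)/5) := two_rpow_pos _
  rw [show (1000/1149 : ℝ) = (1149/1000 : ℝ)⁻¹ by norm_num]
  exact inv_anti₀ (by positivity) two_pow_fifth

lemma eps_split (n : ℕ) : eps n = (2:ℝ) ^ (-(n:ℝ)/5) * (1/2)^n := by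
  have h2 : ((1:ℝ)/2)^n = (2:ℝ) ^ (-(n:ℝ)) := by
    rw [Real.rpow_neg (by norm_num), Real.rpow_natCast, one_div, inv_pow]
  rw [eps, h2, ← Real.rpow_add (by norm_num)]
  congr 1
  ring

lemma final_numeric : ∃ n₀ : ℕ, ∀ n : ℕ, n₀ ≤ n →
    2 * eps n + (87/100:ℝ)^n * (10001 * (1 + 3*(n:ℝ))) ≤ (2:ℝ) ^ (-(n:ℝ)/5) := by
  set r : ℝ := 99963/100000 with hr
  have t1 : Filter.Tendsto (fun n : ℕ => (1/2:ℝ)^n) Filter.atTop (nhds 0) :=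
    tendsto_pow_atTop_nhds_zero_of_lt_one (by norm_num) (by norm_num)
  have t3 : Filter.Tendsto (fun n : ℕ => r^n) Filter.atTop (nhds 0) :=
    tendsto_pow_atTop_nhds_zero_of_lt_one (by norm_num) (by norm_num)
  have t2 : Filter.Tendsto (fun n : ℕ => (n:ℝ) * r^n) Filter.atTop (nhds 0) := by
    have hs : Summable (fun n : ℕ => (n:ℝ)^(1:ℕ) * r^n) := by
      apply Summable.of_norm
      exact summable_norm_pow_mul_geometric_of_norm_lt_one 1
        (by rw [Real.norm_eq_abs, abs_of_nonneg] <;> norm_num)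
    have := hs.tendsto_atTop_zero
    simpa using this
  have T : Filter.Tendsto
      (fun n : ℕ => 2*(1/2:ℝ)^n + (10001 * (1 + 3*(n:ℝ))) * r^n)
      Filter.atTop (nhds 0) := by
    have T0 := ((t1.const_mul 2).add ((t3.const_mul 10001).add (t2.const_mul 30003)))
    simp only [mul_zero, add_zero] at T0
    apply T0.congr
    intro n; ring
  have hev := T.eventually_le_const (by norm_num : (0:ℝ) < 1)
  obtain ⟨n₀, hn₀⟩ := Filter.eventually_atTop.mp hev
  refine ⟨n₀, fun n hn => ?_⟩
  have hq := hn₀ n hn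
  have hC : (0:ℝ) ≤ 10001 * (1 + 3*(n:ℝ)) := by positivity
  have h5pos : (0:ℝ) < (2:ℝ) ^ (-(n:ℝ)/5) := two_rpow_pos _
  have hsecond : (87/100:ℝ)^n ≤ (2:ℝ) ^ (-(n:ℝ)/5) * r^n := by
    have e : (87/100:ℝ) = (1000/1149) * r := by rw [hr]; norm_num
    rw [e, mul_pow, ← pow_neg_fifth n]
    apply mul_le_mul_of_nonneg_right _ (by positivity)
    exact pow_le_pow_left₀ (by norm_num) neg_fifth_ge n
  have hfirst : 2 * eps n = (2:ℝ) ^ (-(n:ℝ)/5) * (2 * (1/2)^n) := by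
    rw [eps_split]; ring
  calc 2 * eps n + (87/100:ℝ)^n * (10001 * (1 + 3*(n:ℝ)))
      ≤ (2:ℝ) ^ (-(n:ℝ)/5) * (2 * (1/2)^n)
        + ((2:ℝ) ^ (-(n:ℝ)/5) * r^n) * (10001 * (1 + 3*(n:ℝ))) := by
        rw [hfirst]
        have := mul_le_mul_of_nonneg_right hsecond hC
        linarith
    _ = (2:ℝ) ^ (-(n:ℝ)/5) * (2*(1/2:ℝ)^n + (10001 * (1 + 3*(n:ℝ))) * r^n) := by ring
    _ ≤ (2:ℝ) ^ (-(n:ℝ)/5) * 1 := by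
        apply mul_le_mul_of_nonneg_left hq (le_of_lt h5pos)
    _ = (2:ℝ) ^ (-(n:ℝ)/5) := by ring

end BEC10

/-- For every z₀ ∈ [0,1] there is n₀ such that for all n ≥ n₀,
ℙ{ Z_{τ_n} ≤ 2^(−6n/5) } ≥ (1 − z₀) − 2^(−n/5). -/
theorem stmt10 (z₀ : ℝ) (hz : z₀ ∈ Set.Icc (0:ℝ) 1)
    (P : Measure (ℕ → Bool)) (hP : IsFairCoinMeasure P) :
    ∃ n₀ : ℕ, ∀ n : ℕ, n₀ ≤ n →
      (P {ω | Ztau z₀ n ω ≤ (2:ℝ) ^ (-(6 * (n:ℝ) / 5))}).toReal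
        ≥ (1 - z₀) - (2:ℝ) ^ (-(n:ℝ) / 5) := by
  classical
  open BEC10 in
  obtain ⟨n₀', hn₀'⟩ := BEC10.final_numeric
  refine ⟨max n₀' 1, fun n hn => ?_⟩
  have hn1 : 1 ≤ n := le_trans (le_max_right _ _) hn
  have hnum := hn₀' n (le_trans (le_max_left _ _) hn)
  obtain ⟨hz0, hz1⟩ := hz
  have hε0 : 0 < BEC10.eps n := BEC10.eps_pos n
  have hεhalf : BEC10.eps n ≤ 1/2 := by
    have h1 : -(6*(n:ℝ)/5) ≤ -1 := by
      have : (1:ℝ) ≤ (n:ℝ) := by exact_mod_cast hn1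
      linarith
    have h2 : (2:ℝ) ^ (-(6*(n:ℝ)/5)) ≤ (2:ℝ) ^ (-1 : ℝ) :=
      Real.rpow_le_rpow_of_exponent_le (by norm_num) h1
    rw [Real.rpow_neg_one] at h2
    unfold BEC10.eps
    linarith [h2]
  -- the three families
  set N := (Finset.filter (fun s : Fin n → Bool =>
      Ztau z₀ n (BEC10.ext s) ≤ BEC10.eps n) Finset.univ).card with hN
  set K2 := (Finset.filter (fun s : Fin n → Bool =>
      1 - BEC10.eps n ≤ Ztau z₀ n (BEC10.ext s)) Finset.univ).card with hK2
  set K3 := (Finset.filter (fun s : Fin n → Bool =>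
      ¬ ∃ j ≤ n, BEC10.Yv z₀ j (BEC10.ext s) ≤ BEC10.eps n) Finset.univ).card with hK3
  -- probability of the event
  have hPE := BEC10.prob_event z₀ hP n
  have htr : (P {ω | Ztau z₀ n ω ≤ BEC10.eps n}).toReal = (N:ℝ) * (1/2:ℝ)^n := by
    rw [hPE]
    rw [ENNReal.toReal_mul, ENNReal.toReal_pow, ENNReal.toReal_natCast]
    norm_num
    rw [hN]
  -- claim A: counting
  have claimA : 2^n ≤ N + K2 + K3 := by
    have hsub : (Finset.univ : Finset (Fin n → Bool)) ⊆
        (Finset.filter (fun s : Fin n → Bool =>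
          Ztau z₀ n (BEC10.ext s) ≤ BEC10.eps n) Finset.univ)
        ∪ (Finset.filter (fun s : Fin n → Bool =>
          1 - BEC10.eps n ≤ Ztau z₀ n (BEC10.ext s)) Finset.univ)
        ∪ (Finset.filter (fun s : Fin n → Bool =>
          ¬ ∃ j ≤ n, BEC10.Yv z₀ j (BEC10.ext s) ≤ BEC10.eps n) Finset.univ) := by
      intro s _
      by_cases hh : ∃ j ≤ n, BEC10.Yv z₀ j (BEC10.ext s) ≤ BEC10.eps n
      · have hY := BEC10.tau_hit hh
        unfold BEC10.Yv at hY
        rcases min_le_iff.mp hY with h | h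
        · exact Finset.mem_union_left _ (Finset.mem_union_left _
            (Finset.mem_filter.mpr ⟨Finset.mem_univ s, h⟩))
        · exact Finset.mem_union_left _ (Finset.mem_union_right _
            (Finset.mem_filter.mpr ⟨Finset.mem_univ s, by
              show 1 - BEC10.eps n ≤ Ztau z₀ n (BEC10.ext s)
              unfold Ztau; linarith⟩))
      · exact Finset.mem_union_right _ (Finset.mem_filter.mpr ⟨Finset.mem_univ s, hh⟩)
    have h1 := Finset.card_le_card hsub
    have h2 := Finset.card_union_le
      ((Finset.filter (fun s : Fin n → Bool =>
          Ztau z₀ n (BEC10.ext s) ≤ BEC10.eps n) Finset.univ)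
        ∪ (Finset.filter (fun s : Fin n → Bool =>
          1 - BEC10.eps n ≤ Ztau z₀ n (BEC10.ext s)) Finset.univ))
      (Finset.filter (fun s : Fin n → Bool =>
          ¬ ∃ j ≤ n, BEC10.Yv z₀ j (BEC10.ext s) ≤ BEC10.eps n) Finset.univ)
    have h3 := Finset.card_union_le
      (Finset.filter (fun s : Fin n → Bool =>
          Ztau z₀ n (BEC10.ext s) ≤ BEC10.eps n) Finset.univ)
      (Finset.filter (fun s : Fin n → Bool =>
          1 - BEC10.eps n ≤ Ztau z₀ n (BEC10.ext s)) Finset.univ)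
    have h4 : (Finset.univ : Finset (Fin n → Bool)).card = 2^n := by
      rw [Finset.card_univ]
      simp [Fintype.card_fun]
    omega
  -- claim B: martingale bound
  have claimB : (1 - BEC10.eps n) * (K2:ℝ) ≤ 2^n * z₀ := by
    have hWsum := BEC10.Wsum (z₀ := z₀) n n le_rfl
    have hrw : ∀ s : Fin n → Bool, BEC10.Wv z₀ n n (BEC10.ext s) = Ztau z₀ n (BEC10.ext s) :=
      fun s => BEC10.Wv_eq_Ztau z₀ n (BEC10.ext s)
    have hsum : ∑ s : Fin n → Bool, Ztau z₀ n (BEC10.ext s) = 2^n * z₀ := by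
      rw [← hWsum]; exact Finset.sum_congr rfl (fun s _ => (hrw s).symm)
    have hnn : ∀ s : Fin n → Bool, 0 ≤ Ztau z₀ n (BEC10.ext s) := by
      intro s
      exact (BEC10.Zproc_mem ⟨hz0, hz1⟩ _ _).1
    calc (1 - BEC10.eps n) * (K2:ℝ)
        = ∑ _s ∈ (Finset.filter (fun s : Fin n → Bool =>
            1 - BEC10.eps n ≤ Ztau z₀ n (BEC10.ext s)) Finset.univ), (1 - BEC10.eps n) := by
          rw [Finset.sum_const, nsmul_eq_mul, hK2]; ring
      _ ≤ ∑ s ∈ (Finset.filter (fun s : Fin n → Bool =>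
            1 - BEC10.eps n ≤ Ztau z₀ n (BEC10.ext s)) Finset.univ), Ztau z₀ n (BEC10.ext s) :=
          Finset.sum_le_sum (fun s hs => (Finset.mem_filter.mp hs).2)
      _ ≤ ∑ s : Fin n → Bool, Ztau z₀ n (BEC10.ext s) :=
          Finset.sum_le_sum_of_subset_of_nonneg (Finset.subset_univ _)
            (fun s _ _ => hnn s)
      _ = 2^n * z₀ := hsum
  -- claim C: potential bound
  have claimC : (K3:ℝ) ≤ (87/50:ℝ)^n * (10001 * (1 + 3*(n:ℝ))) := by
    have hTsum := BEC10.Tsum ⟨hz0, hz1⟩ n n le_rfl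
    have hone : ∀ s ∈ (Finset.filter (fun s : Fin n → Bool =>
        ¬ ∃ j ≤ n, BEC10.Yv z₀ j (BEC10.ext s) ≤ BEC10.eps n) Finset.univ),
        (1:ℝ) ≤ BEC10.Tterm z₀ n n (BEC10.ext s) := by
      intro s hs
      have hh := (Finset.mem_filter.mp hs).2
      unfold BEC10.Tterm
      rw [if_neg hh]
      push_neg at hh
      have h2 := hh n le_rfl
      unfold BEC10.Yv at h2
      have h0 : 0 < Zproc z₀ n (BEC10.ext s) :=
        lt_trans (BEC10.eps_pos n) (lt_of_lt_of_le h2 (min_le_left _ _))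
      have h1 : Zproc z₀ n (BEC10.ext s) < 1 := by
        have := lt_trans (BEC10.eps_pos n) (lt_of_lt_of_le h2 (min_le_right _ _))
        linarith
      exact BEC10.Gf_ge_one h0 h1
    calc (K3:ℝ) = ∑ _s ∈ (Finset.filter (fun s : Fin n → Bool =>
          ¬ ∃ j ≤ n, BEC10.Yv z₀ j (BEC10.ext s) ≤ BEC10.eps n) Finset.univ), (1:ℝ) := by
          rw [Finset.sum_const, nsmul_eq_mul, hK3]; ring
      _ ≤ ∑ s ∈ (Finset.filter (fun s : Fin n → Bool =>
          ¬ ∃ j ≤ n, BEC10.Yv z₀ j (BEC10.ext s) ≤ BEC10.eps n) Finset.univ),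
            BEC10.Tterm z₀ n n (BEC10.ext s) := Finset.sum_le_sum hone
      _ ≤ ∑ s : Fin n → Bool, BEC10.Tterm z₀ n n (BEC10.ext s) :=
          Finset.sum_le_sum_of_subset_of_nonneg (Finset.subset_univ _)
            (fun s _ _ => BEC10.Tterm_nonneg ⟨hz0, hz1⟩ n n (BEC10.ext s))
      _ ≤ (87/50:ℝ)^n * (10001 * (1 + 3*(n:ℝ))) := hTsum
  -- assemble
  set ε := BEC10.eps n with hεdef
  set Cc := (10001 * (1 + 3*(n:ℝ))) with hCc
  set p := (1/2:ℝ)^n with hp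
  have hp0 : 0 < p := by positivity
  have hid : (2:ℝ)^n * p = 1 := by rw [hp, ← mul_pow]; norm_num
  have hid2 : (87/50:ℝ)^n * p = (87/100:ℝ)^n := by rw [hp, ← mul_pow]; norm_num
  have hdiv : z₀ ≤ (z₀ + 2*ε) * (1-ε) := by nlinarith
  have hK2le : (K2:ℝ) ≤ 2^n * (z₀ + 2*ε) := by
    nlinarith [claimB, pow_pos (by norm_num : (0:ℝ) < 2) n]
  have hNreal : (2:ℝ)^n ≤ (N:ℝ) + (K2:ℝ) + (K3:ℝ) := by exact_mod_cast claimA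
  have hNX : (2:ℝ)^n * (1 - z₀ - 2*ε) - (87/50:ℝ)^n * Cc ≤ (N:ℝ) := by
    have h2pos : (0:ℝ) < 2^n := by positivity
    nlinarith [hK2le, claimC, hNreal]
  have e3 : ((2:ℝ)^n * (1 - z₀ - 2*ε) - (87/50:ℝ)^n * Cc) * p
      = (1 - z₀ - 2*ε) - (87/100:ℝ)^n * Cc := by
    linear_combination (1 - z₀ - 2*ε) * hid - Cc * hid2
  have hXp : (1 - z₀ - 2*ε) - (87/100:ℝ)^n * Cc ≤ (N:ℝ) * p := by
    rw [← e3]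
    exact mul_le_mul_of_nonneg_right hNX (le_of_lt hp0)
  have hgoal : (1 - z₀) - (2:ℝ) ^ (-(n:ℝ)/5) ≤ (N:ℝ) * p := by
    have : 2*ε + (87/100:ℝ)^n * Cc ≤ (2:ℝ) ^ (-(n:ℝ)/5) := hnum
    linarith
  show (P {ω | Ztau z₀ n ω ≤ BEC10.eps n}).toReal ≥ _
  rw [htr]
  exact hgoal
end
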